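/- arXiv:1512.07532 — 8 statements merged into one kernel-verified Lean document; each statement's English description precedes it below -/
import Mathlib

section
/- For each positive integer d there exist constants c, C > 0 such that for all integers k ≥ 0: c·a_d(k) ≤ (log(k+2))^{d−1}/(k+1) ≤ C·a_d(k). -/
open Finset Real


/-- `adk d k = Σ_{n ∈ ℕ^d, n₁+⋯+n_d = k} 1/((n₁+1)⋯(n_d+1))`. -/
noncomputable def adk (d k : ℕ) : ℝ :=
  ∑ n ∈ Finset.Nat.antidiagonalTuple d k, ∏ i, (1 : ℝ) / ((n i : ℝ) + 1)

lemma sum_adt_succ {M : Type*} [AddCommMonoid M] (d k : ℕ) (f : (Fin (d+1) → ℕ) → M) :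
    ∑ n ∈ Finset.Nat.antidiagonalTuple (d+1) k, f n =
      ∑ p ∈ Finset.HasAntidiagonal.antidiagonal k, ∑ n ∈ Finset.Nat.antidiagonalTuple d p.2,
        f (Fin.cons p.1 n) := by
  rw [Finset.sum_sigma']
  refine Finset.sum_nbij' (fun n => ⟨(n 0, ∑ i, n (Fin.succ i)), Fin.tail n⟩)
    (fun p => Fin.cons p.1.1 p.2) ?_ ?_ ?_ ?_ ?_
  · intro n hn
    simp only [Finset.Nat.mem_antidiagonalTuple] at hn
    simp only [Finset.mem_sigma, Finset.HasAntidiagonal.mem_antidiagonal, Finset.Nat.mem_antidiagonalTuple]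
    refine ⟨?_, rfl⟩
    rw [← hn, Fin.sum_univ_succ]
  · rintro ⟨⟨a, b⟩, n⟩ hn
    simp only [Finset.mem_sigma, Finset.HasAntidiagonal.mem_antidiagonal,
      Finset.Nat.mem_antidiagonalTuple] at hn ⊢
    rw [Fin.sum_univ_succ]
    simp [Fin.cons_zero, Fin.cons_succ, hn.2, hn.1]
  · intro n hn
    exact Fin.cons_self_tail n
  · rintro ⟨⟨a, b⟩, n⟩ hn
    simp only [Finset.mem_sigma, Finset.HasAntidiagonal.mem_antidiagonal,
      Finset.Nat.mem_antidiagonalTuple] at hn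
    simp only [Fin.cons_zero, Fin.tail_cons]
    congr 1
    simp [Fin.cons_succ, hn.2]
  · intro n hn
    rw [Fin.cons_self_tail n]

lemma adk_succ (d k : ℕ) :
    adk (d+1) k = ∑ j ∈ Finset.range (k+1), (1 : ℝ) / ((j : ℝ) + 1) * adk d (k - j) := by
  rw [adk, sum_adt_succ, Finset.Nat.sum_antidiagonal_eq_sum_range_succ_mk]
  refine Finset.sum_congr rfl fun j hj => ?_
  rw [adk, Finset.mul_sum]
  refine Finset.sum_congr rfl fun n hn => ?_
  rw [Fin.prod_univ_succ]
  simp [Fin.cons_zero, Fin.cons_succ]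

noncomputable def L (k : ℕ) : ℝ := 1 + Real.log ((k : ℝ) + 1)

lemma L_pos (k : ℕ) : 0 < L k := by
  have : (0:ℝ) ≤ Real.log ((k:ℝ)+1) := Real.log_nonneg (by linarith [Nat.cast_nonneg (α := ℝ) k])
  unfold L; linarith

lemma L_mono {j k : ℕ} (h : j ≤ k) : L j ≤ L k := by
  unfold L
  have := Real.log_le_log (x := (j:ℝ)+1) (by positivity)
    (by exact_mod_cast by omega : ((j:ℝ)+1) ≤ (k:ℝ)+1)
  linarith

lemma hsum_eq (m : ℕ) : ∑ j ∈ Finset.range m, (1:ℝ)/((j:ℝ)+1) = (harmonic m : ℝ) := by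
  rw [harmonic]
  push_cast
  refine Finset.sum_congr rfl fun j _ => ?_
  rw [one_div]

lemma hsum_le (k : ℕ) : ∑ j ∈ Finset.range (k+1), (1:ℝ)/((j:ℝ)+1) ≤ L k := by
  rw [hsum_eq]
  have := harmonic_le_one_add_log (k+1)
  unfold L
  push_cast at this ⊢
  linarith

lemma le_hsum (k : ℕ) : (1 - Real.log 2)/2 * L k ≤ ∑ j ∈ Finset.range (k/2+1), (1:ℝ)/((j:ℝ)+1) := by
  rw [hsum_eq]
  have h1 : Real.log (((k/2 : ℕ):ℝ) + 2) ≤ (harmonic (k/2+1) : ℝ) := by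
    have := log_add_one_le_harmonic (k/2+1)
    push_cast at this
    have he : ((k/2:ℕ):ℝ)+1+1 = ((k/2:ℕ):ℝ)+2 := by ring
    rw [he] at this
    exact this
  have h2 : (1:ℝ) ≤ (harmonic (k/2+1) : ℝ) := by
    have : harmonic 1 ≤ harmonic (k/2+1) := by
      have : ∀ m n : ℕ, m ≤ n → harmonic m ≤ harmonic n := by
        intro m n h
        induction n with
        | zero => simp [Nat.le_zero.mp h]
        | succ n ih =>
          rcases Nat.lt_or_ge m (n+1) with h'|h'
          · have := ih (by omega)
            rw [harmonic_succ]
            have : (0:ℚ) ≤ (↑(n+1))⁻¹ := by positivity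
            linarith [ih (by omega : m ≤ n)]
          · have : m = n+1 := by omega
            simp [this]
      exact this 1 (k/2+1) (by omega)
    have h1 : harmonic 1 = 1 := by norm_num [harmonic_succ]
    rw [h1] at this
    exact_mod_cast this
  -- log(k+1) - log 2 ≤ log(k/2+2)
  have h3 : Real.log ((k:ℝ)+1) - Real.log 2 ≤ Real.log (((k/2:ℕ):ℝ)+2) := by
    rw [← Real.log_div (by positivity) (by norm_num)]
    have hk : (k:ℝ) ≤ 2*((k/2:ℕ):ℝ)+1 := by exact_mod_cast (by omega : k ≤ 2*(k/2)+1)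
    exact Real.log_le_log (by positivity) (by linarith)
  have hlog2 : Real.log 2 < 1 := by
    have := Real.log_two_lt_d9
    linarith
  have hlognn : 0 ≤ Real.log ((k:ℝ)+1) :=
    Real.log_nonneg (by linarith [Nat.cast_nonneg (α := ℝ) k])
  have hlog2nn : (0:ℝ) ≤ Real.log 2 := Real.log_nonneg one_le_two
  unfold L
  nlinarith [h1, h2, h3, hlognn, hlog2, mul_nonneg hlog2nn hlognn]

lemma L_half (k : ℕ) : L k ≤ 2 * L (k/2) := by
  unfold L
  have h : Real.log ((k:ℝ)+1) ≤ Real.log 2 + Real.log (((k/2:ℕ):ℝ)+1) := by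
    rw [← Real.log_mul (by norm_num) (by positivity)]
    have hk : (k:ℝ) ≤ 2*((k/2:ℕ):ℝ) + 1 := by exact_mod_cast (by omega : k ≤ 2*(k/2)+1)
    exact Real.log_le_log (by positivity) (by linarith)
  have hlog2 : Real.log 2 < 1 := by linarith [Real.log_two_lt_d9]
  have : 0 ≤ Real.log (((k/2:ℕ):ℝ)+1) :=
    Real.log_nonneg (by linarith [Nat.cast_nonneg (α := ℝ) (k/2)])
  linarith

lemma sumInv (k : ℕ) :
    ∑ j ∈ Finset.range (k+1), (1:ℝ)/(((j:ℝ)+1)*(((k-j : ℕ):ℝ)+1)) =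
      2/((k:ℝ)+2) * ∑ j ∈ Finset.range (k+1), (1:ℝ)/((j:ℝ)+1) := by
  have h : ∀ j ∈ Finset.range (k+1),
      (1:ℝ)/(((j:ℝ)+1)*(((k-j : ℕ):ℝ)+1)) =
        1/((k:ℝ)+2) * (1/((j:ℝ)+1) + 1/(((k-j:ℕ):ℝ)+1)) := by
    intro j hj
    rw [Finset.mem_range] at hj
    have hc : ((k-j : ℕ):ℝ) = (k:ℝ) - (j:ℝ) := by
      rw [Nat.cast_sub (by omega)]
    rw [hc]
    have h1 : (0:ℝ) < (j:ℝ)+1 := by positivity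
    have h2 : (0:ℝ) < (k:ℝ)-(j:ℝ)+1 := by
      have : (j:ℝ) ≤ k := by exact_mod_cast by omega
      linarith
    field_simp
    ring
  rw [Finset.sum_congr rfl h, ← Finset.mul_sum, Finset.sum_add_distrib]
  have hrefl : ∑ j ∈ Finset.range (k+1), (1:ℝ)/(((k-j:ℕ):ℝ)+1) =
      ∑ j ∈ Finset.range (k+1), (1:ℝ)/((j:ℝ)+1) := by
    simpa using Finset.sum_range_reflect (fun j => (1:ℝ)/((j:ℝ)+1)) (k+1)
  rw [hrefl]
  ring

lemma adk_nonneg (d k : ℕ) : 0 ≤ adk d k := by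
  unfold adk
  apply Finset.sum_nonneg
  intro n _
  apply Finset.prod_nonneg
  intro i _
  positivity

lemma adk_one (k : ℕ) : adk 1 k = 1/((k:ℝ)+1) := by
  unfold adk
  rw [Finset.Nat.antidiagonalTuple_one, Finset.sum_singleton, Fin.prod_univ_one]
  simp

lemma main_bound (d : ℕ) : ∃ c C : ℝ, 0 < c ∧ 0 < C ∧ ∀ k : ℕ,
    c * (L k ^ d / ((k:ℝ)+1)) ≤ adk (d+1) k ∧ adk (d+1) k ≤ C * (L k ^ d / ((k:ℝ)+1)) := by
  induction d with
  | zero =>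
    refine ⟨1, 1, one_pos, one_pos, fun k => ?_⟩
    rw [adk_one]
    norm_num
  | succ d ih =>
    obtain ⟨c, C, hc, hC, h⟩ := ih
    have hlog2 : Real.log 2 < 1 := by linarith [Real.log_two_lt_d9]
    have hlog2pos : (0:ℝ) < Real.log 2 := Real.log_pos one_lt_two
    refine ⟨c * ((1 - Real.log 2)/2) * (1/2)^d, 2*C,
      mul_pos (mul_pos hc (by linarith)) (pow_pos (by norm_num) d), by positivity, fun k => ?_⟩
    have hLk := L_pos k
    constructor
    · -- lower bound
      have hlow : ∀ j ∈ Finset.range (k/2+1),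
          c * (L k/2)^d / ((k:ℝ)+1) * (1/((j:ℝ)+1)) ≤ 1/((j:ℝ)+1) * adk (d+1) (k-j) := by
        intro j hj
        rw [Finset.mem_range] at hj
        have h1 := (h (k-j)).1
        have hm : L k / 2 ≤ L (k-j) := by
          have h2 := L_half k
          have h3 := L_mono (show k/2 ≤ k - j by omega)
          linarith
        have hkj : ((k-j:ℕ):ℝ) + 1 ≤ (k:ℝ)+1 := by
          have h4 : ((k-j:ℕ):ℝ) ≤ (k:ℝ) := by exact_mod_cast (by omega : k - j ≤ k)
          linarith
        have hL2 : (0:ℝ) ≤ L k / 2 := by linarith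
        calc c * (L k/2)^d / ((k:ℝ)+1) * (1/((j:ℝ)+1))
            ≤ c * L (k-j)^d / (((k-j:ℕ):ℝ)+1) * (1/((j:ℝ)+1)) := by
              gcongr <;> first | exact hL2 | exact hm | exact hkj | exact mul_nonneg hc.le (pow_nonneg (L_pos _).le d) | positivity
          _ = 1/((j:ℝ)+1) * (c * (L (k-j)^d / (((k-j:ℕ):ℝ)+1))) := by ring
          _ ≤ 1/((j:ℝ)+1) * adk (d+1) (k-j) :=
              mul_le_mul_of_nonneg_left h1 (by positivity)
      calc c * ((1 - Real.log 2)/2) * (1/2)^d * (L k ^ (d+1) / ((k:ℝ)+1))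
          = (c * (L k/2)^d / ((k:ℝ)+1)) * ((1 - Real.log 2)/2 * L k) := by ring
        _ ≤ (c * (L k/2)^d / ((k:ℝ)+1)) * (∑ j ∈ Finset.range (k/2+1), (1:ℝ)/((j:ℝ)+1)) := by
            refine mul_le_mul_of_nonneg_left (le_hsum k) ?_
            have : (0:ℝ) ≤ L k / 2 := by linarith
            positivity
        _ = ∑ j ∈ Finset.range (k/2+1), c * (L k/2)^d / ((k:ℝ)+1) * (1/((j:ℝ)+1)) := by
            rw [← Finset.mul_sum]
        _ ≤ ∑ j ∈ Finset.range (k/2+1), 1/((j:ℝ)+1) * adk (d+1) (k-j) :=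
            Finset.sum_le_sum hlow
        _ ≤ ∑ j ∈ Finset.range (k+1), 1/((j:ℝ)+1) * adk (d+1) (k-j) := by
            refine Finset.sum_le_sum_of_subset_of_nonneg
              (Finset.range_subset_range.2 (by omega)) fun j hj _ => ?_
            exact mul_nonneg (by positivity) (adk_nonneg _ _)
        _ = adk (d+1+1) k := (adk_succ (d+1) k).symm
    · -- upper bound
      have hup : ∀ j ∈ Finset.range (k+1),
          (1:ℝ)/((j:ℝ)+1) * adk (d+1) (k-j) ≤
            C * L k ^ d * (1/(((j:ℝ)+1)*(((k-j:ℕ):ℝ)+1))) := by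
        intro j hj
        rw [Finset.mem_range] at hj
        have h1 := (h (k-j)).2
        have hle : L (k-j) ≤ L k := L_mono (by omega)
        have hL0 := L_pos (k-j)
        calc (1:ℝ)/((j:ℝ)+1) * adk (d+1) (k-j)
            ≤ 1/((j:ℝ)+1) * (C * (L (k-j) ^ d / (((k-j:ℕ):ℝ)+1))) :=
              mul_le_mul_of_nonneg_left h1 (by positivity)
          _ ≤ 1/((j:ℝ)+1) * (C * (L k ^ d / (((k-j:ℕ):ℝ)+1))) := by
              have h5 := hL0.le
              gcongr
          _ = C * L k ^ d * (1/(((j:ℝ)+1)*(((k-j:ℕ):ℝ)+1))) := by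
              field_simp
      calc adk (d+1+1) k = ∑ j ∈ Finset.range (k+1), (1:ℝ)/((j:ℝ)+1) * adk (d+1) (k-j) :=
            adk_succ (d+1) k
        _ ≤ ∑ j ∈ Finset.range (k+1), C * L k ^ d * (1/(((j:ℝ)+1)*(((k-j:ℕ):ℝ)+1))) :=
            Finset.sum_le_sum hup
        _ = C * L k ^ d * ∑ j ∈ Finset.range (k+1), (1:ℝ)/(((j:ℝ)+1)*(((k-j:ℕ):ℝ)+1)) := by
            rw [← Finset.mul_sum]
        _ = C * L k ^ d * (2/((k:ℝ)+2) * ∑ j ∈ Finset.range (k+1), (1:ℝ)/((j:ℝ)+1)) := by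
            rw [sumInv]
        _ ≤ C * L k ^ d * (2/((k:ℝ)+2) * L k) := by
            gcongr <;> first | exact hLk.le | exact hsum_le k | positivity
        _ ≤ C * L k ^ d * (2/((k:ℝ)+1) * L k) := by
            gcongr <;> first | exact hLk.le | linarith | positivity
        _ = 2*C * (L k ^ (d+1) / ((k:ℝ)+1)) := by
            field_simp
            ring

/-- For each positive integer `d` there are constants `c, C > 0` such that for all `k ≥ 0`,
`c·a_d(k) ≤ (log(k+2))^{d−1}/(k+1) ≤ C·a_d(k)`. -/
theorem stmt_1 (d : ℕ) (hd : 0 < d) :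
    ∃ c C : ℝ, 0 < c ∧ 0 < C ∧ ∀ k : ℕ,
      c * adk d k ≤ (Real.log ((k : ℝ) + 2)) ^ (d - 1) / ((k : ℝ) + 1) ∧
      (Real.log ((k : ℝ) + 2)) ^ (d - 1) / ((k : ℝ) + 1) ≤ C * adk d k := by
  obtain ⟨c0, C0, hc0, hC0, h⟩ := main_bound (d-1)
  have hd1 : d - 1 + 1 = d := by omega
  rw [hd1] at h
  have hlog2pos : (0:ℝ) < Real.log 2 := Real.log_pos one_lt_two
  have hlog2 : Real.log 2 < 1 := by linarith [Real.log_two_lt_d9]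
  set B : ℝ := 1 + 1/Real.log 2 with hB
  have hBpos : 0 < B := by
    rw [hB]
    have h0 : (0:ℝ) < 1/Real.log 2 := by positivity
    linarith
  have hgpos : ∀ k : ℕ, 0 ≤ Real.log ((k:ℝ)+2) := fun k =>
    Real.log_nonneg (by linarith [Nat.cast_nonneg (α := ℝ) k])
  have hlow : ∀ k : ℕ, Real.log ((k:ℝ)+2) ≤ L k := by
    intro k
    have h1 : Real.log ((k:ℝ)+2) ≤ Real.log (2*((k:ℝ)+1)) :=
      Real.log_le_log (by positivity) (by linarith [Nat.cast_nonneg (α := ℝ) k])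
    rw [Real.log_mul (by norm_num) (by positivity)] at h1
    have h2 : 0 ≤ Real.log ((k:ℝ)+1) := Real.log_nonneg (by linarith [Nat.cast_nonneg (α := ℝ) k])
    unfold L
    linarith
  have hup : ∀ k : ℕ, L k ≤ B * Real.log ((k:ℝ)+2) := by
    intro k
    have h1 : Real.log 2 ≤ Real.log ((k:ℝ)+2) :=
      Real.log_le_log two_pos (by linarith [Nat.cast_nonneg (α := ℝ) k])
    have h2 : Real.log ((k:ℝ)+1) ≤ Real.log ((k:ℝ)+2) :=
      Real.log_le_log (by positivity) (by linarith)
    have h3 : (1:ℝ) ≤ Real.log ((k:ℝ)+2)/Real.log 2 := by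
      rw [le_div_iff₀ hlog2pos]
      linarith
    have : B * Real.log ((k:ℝ)+2) = Real.log ((k:ℝ)+2) + Real.log ((k:ℝ)+2)/Real.log 2 := by
      rw [hB]; ring
    rw [this]
    unfold L
    linarith
  refine ⟨(C0 * B^(d-1))⁻¹, c0⁻¹, by positivity, by positivity, fun k => ?_⟩
  have hglek : (Real.log ((k:ℝ)+2))^(d-1) ≤ L k ^ (d-1) :=
    pow_le_pow_left₀ (hgpos k) (hlow k) _
  have hflek : L k ^ (d-1) ≤ B^(d-1) * (Real.log ((k:ℝ)+2))^(d-1) := by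
    rw [← mul_pow]
    exact pow_le_pow_left₀ (L_pos k).le (hup k) _
  have hk1 : (0:ℝ) < (k:ℝ)+1 := by positivity
  constructor
  · have hstep : adk d k ≤ (C0 * B^(d-1)) * ((Real.log ((k:ℝ)+2))^(d-1) / ((k:ℝ)+1)) := by
      calc adk d k ≤ C0 * (L k ^ (d-1) / ((k:ℝ)+1)) := (h k).2
        _ ≤ C0 * (B^(d-1) * (Real.log ((k:ℝ)+2))^(d-1) / ((k:ℝ)+1)) := by gcongr
        _ = (C0 * B^(d-1)) * ((Real.log ((k:ℝ)+2))^(d-1) / ((k:ℝ)+1)) := by ring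
    have hpos : (0:ℝ) < C0 * B^(d-1) := by positivity
    have := mul_le_mul_of_nonneg_left hstep (inv_nonneg.2 hpos.le)
    rwa [inv_mul_cancel_left₀ hpos.ne'] at this
  · have hstep : c0 * ((Real.log ((k:ℝ)+2))^(d-1) / ((k:ℝ)+1)) ≤ adk d k := by
      calc c0 * ((Real.log ((k:ℝ)+2))^(d-1) / ((k:ℝ)+1))
          ≤ c0 * (L k ^ (d-1) / ((k:ℝ)+1)) := by gcongr
        _ ≤ adk d k := (h k).1
    have := mul_le_mul_of_nonneg_left hstep (inv_nonneg.2 hc0.le)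
    rwa [inv_mul_cancel_left₀ hc0.ne'] at this
end

section
/- For each positive integer d there exist constants c, C > 0 such that for all real t ∈ (0,1): c·((1/t)·log(1/(1−t)))^d ≤ Σ_{k=0}^∞ ((log(k+2))^{d−1}/(k+1))·t^k ≤ C·((1/t)·log(1/(1−t)))^d. -/
open Finset Real



/-- base sequence -/
noncomputable def bb (k : ℕ) : ℝ := 1 / ((k : ℝ) + 1)

/-- iterated convolution -/
noncomputable def cc : ℕ → ℕ → ℝ
  | 0, k => if k = 0 then 1 else 0
  | d + 1, k => ∑ ij ∈ Finset.HasAntidiagonal.antidiagonal k, cc d ij.1 * bb ij.2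

/-- harmonic numbers -/
noncomputable def hh (k : ℕ) : ℝ := ∑ i ∈ Finset.range (k + 1), (1 : ℝ) / ((i : ℝ) + 1)

lemma bb_pos (k : ℕ) : 0 < bb k := by unfold bb; positivity

lemma hh_pos (k : ℕ) : 0 < hh k := by
  unfold hh
  apply Finset.sum_pos (fun i _ => by positivity)
  exact ⟨0, Finset.mem_range.2 (Nat.succ_pos _)⟩

lemma hh_mono : Monotone hh := by
  intro a b hab
  unfold hh
  exact Finset.sum_le_sum_of_subset_of_nonneg
    (Finset.range_subset_range.2 (by omega)) (fun i _ _ => by positivity)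

lemma hh_succ (k : ℕ) : hh (k + 1) = hh k + 1 / ((k : ℝ) + 2) := by
  unfold hh
  rw [Finset.sum_range_succ]
  push_cast; ring

lemma log_le_hh (k : ℕ) : Real.log ((k : ℝ) + 2) ≤ hh k := by
  induction k with
  | zero =>
    simp only [hh, Finset.sum_range_one]
    norm_num
    calc Real.log 2 ≤ 2 - 1 := Real.log_le_sub_one_of_pos (by norm_num)
    _ = 1 := by norm_num
  | succ n ih =>
    rw [hh_succ]
    have h1 : Real.log ((n : ℝ) + 1 + 2) - Real.log ((n : ℝ) + 2) ≤ 1 / ((n : ℝ) + 2) := by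
      rw [← Real.log_div (by positivity) (by positivity)]
      calc Real.log (((n : ℝ) + 1 + 2) / ((n : ℝ) + 2)) ≤ ((n : ℝ) + 1 + 2) / ((n : ℝ) + 2) - 1 :=
            Real.log_le_sub_one_of_pos (by positivity)
        _ = 1 / ((n : ℝ) + 2) := by field_simp; ring
    push_cast
    linarith

lemma hh_le (k : ℕ) : hh k ≤ 1 + Real.log ((k : ℝ) + 1) := by
  induction k with
  | zero => simp [hh]
  | succ n ih =>
    rw [hh_succ]
    have h1 : 1 / ((n : ℝ) + 2) ≤ Real.log ((n : ℝ) + 1 + 1) - Real.log ((n : ℝ) + 1) := by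
      rw [← Real.log_div (by positivity) (by positivity)]
      have h2 : 1 - (((n : ℝ) + 1 + 1) / ((n : ℝ) + 1))⁻¹ ≤
          Real.log (((n : ℝ) + 1 + 1) / ((n : ℝ) + 1)) := by
        have := Real.log_le_sub_one_of_pos (x := (((n : ℝ) + 1 + 1) / ((n : ℝ) + 1))⁻¹) (by positivity)
        rw [Real.log_inv] at this
        linarith
      have h3 : (1 : ℝ) - (((n : ℝ) + 1 + 1) / ((n : ℝ) + 1))⁻¹ = 1 / ((n : ℝ) + 2) := by
        rw [inv_div]; field_simp; ring
      linarith [h3 ▸ h2]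
    push_cast
    linarith

lemma hh_le_const_mul_log (k : ℕ) : hh k ≤ (1 / Real.log 2 + 1) * Real.log ((k : ℝ) + 2) := by
  have hl2 : (0:ℝ) < Real.log 2 := Real.log_pos (by norm_num)
  have h1 : Real.log 2 ≤ Real.log ((k : ℝ) + 2) :=
    Real.log_le_log (by norm_num) (by push_cast; linarith [Nat.cast_nonneg (α := ℝ) k])
  have h2 : Real.log ((k : ℝ) + 1) ≤ Real.log ((k : ℝ) + 2) :=
    Real.log_le_log (by positivity) (by linarith)
  have h4 : (1:ℝ) ≤ (1 / Real.log 2) * Real.log ((k : ℝ) + 2) := by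
    rw [div_mul_eq_mul_div, one_mul, le_div_iff₀ hl2]
    linarith
  calc hh k ≤ 1 + Real.log ((k : ℝ) + 1) := hh_le k
    _ ≤ (1 / Real.log 2) * Real.log ((k : ℝ) + 2) + Real.log ((k : ℝ) + 2) := by linarith
    _ = (1 / Real.log 2 + 1) * Real.log ((k : ℝ) + 2) := by ring


lemma hh_zero : hh 0 = 1 := by simp [hh]

lemma cc_succ (d k : ℕ) :
    cc (d + 1) k = ∑ i ∈ Finset.range (k + 1), cc d i * bb (k - i) := by
  show (∑ ij ∈ Finset.HasAntidiagonal.antidiagonal k, cc d ij.1 * bb ij.2) = _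
  rw [Finset.Nat.sum_antidiagonal_eq_sum_range_succ_mk]

lemma cc_nonneg (d k : ℕ) : 0 ≤ cc d k := by
  induction d generalizing k with
  | zero => show (0:ℝ) ≤ if k = 0 then 1 else 0; split <;> norm_num
  | succ n ih =>
    rw [cc_succ]
    exact Finset.sum_nonneg fun i _ => mul_nonneg (ih i) (bb_pos _).le

lemma cc_one (k : ℕ) : cc 1 k = bb k := by
  rw [cc_succ, Finset.sum_eq_single 0]
  · show (if (0:ℕ) = 0 then (1:ℝ) else 0) * bb (k - 0) = bb k
    simp
  · intro i _ hi
    show (if i = 0 then (1:ℝ) else 0) * bb (k - i) = 0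
    simp [hi]
  · intro h; exact absurd (Finset.mem_range.2 (Nat.succ_pos k)) h

lemma pow_sub_pow_le (m : ℕ) {x y : ℝ} (hy : 0 ≤ y) (hxy : y ≤ x) :
    x ^ (m + 1) - y ^ (m + 1) ≤ (m + 1) * x ^ m * (x - y) := by
  induction m with
  | zero => simp
  | succ n ih =>
    have hx : 0 ≤ x := le_trans hy hxy
    have h1 : y ^ (n + 1) ≤ x ^ (n + 1) := pow_le_pow_left₀ hy hxy _
    have h2 : x ^ (n + 1 + 1) - y ^ (n + 1 + 1)
        = x * (x ^ (n + 1) - y ^ (n + 1)) + (x - y) * y ^ (n + 1) := by ring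
    have h3 : x * (x ^ (n + 1) - y ^ (n + 1)) ≤ x * ((n + 1) * x ^ n * (x - y)) :=
      mul_le_mul_of_nonneg_left ih hx
    have h4 : (x - y) * y ^ (n + 1) ≤ (x - y) * x ^ (n + 1) :=
      mul_le_mul_of_nonneg_left h1 (by linarith)
    have h5 : x * ((n + 1) * x ^ n * (x - y)) = ((n:ℝ) + 1) * x ^ (n + 1) * (x - y) := by ring
    push_cast
    nlinarith [pow_nonneg hx n, pow_nonneg hx (n+1)]

lemma sum_hh_div_le (m k : ℕ) :
    ∑ i ∈ Finset.range (k + 1), hh i ^ m / ((i : ℝ) + 1) ≤ hh k ^ (m + 1) := by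
  have h1 : ∑ i ∈ Finset.range (k + 1), hh i ^ m / ((i : ℝ) + 1)
      ≤ ∑ i ∈ Finset.range (k + 1), hh k ^ m * (1 / ((i : ℝ) + 1)) := by
    apply Finset.sum_le_sum
    intro i hi
    rw [div_eq_mul_one_div]
    apply mul_le_mul_of_nonneg_right _ (by positivity)
    exact pow_le_pow_left₀ (hh_pos i).le (hh_mono (Nat.lt_succ_iff.mp (Finset.mem_range.mp hi))) m
  rw [← Finset.mul_sum] at h1
  calc _ ≤ hh k ^ m * ∑ i ∈ Finset.range (k + 1), (1:ℝ) / ((i : ℝ) + 1) := h1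
    _ = hh k ^ (m + 1) := by rw [← hh]; ring

lemma sum_hh_div_ge (m k : ℕ) :
    hh k ^ (m + 1) / ((m : ℝ) + 1) ≤ ∑ i ∈ Finset.range (k + 1), hh i ^ m / ((i : ℝ) + 1) := by
  induction k with
  | zero =>
    rw [Finset.sum_range_one, hh_zero]
    simp only [Nat.cast_zero, one_pow]
    rw [div_le_div_iff₀ (by positivity) (by norm_num)]
    linarith [Nat.cast_nonneg (α := ℝ) m]
  | succ n ih =>
    rw [Finset.sum_range_succ]
    have key : hh (n+1) ^ (m+1) - hh n ^ (m+1) ≤ ((m:ℝ)+1) * hh (n+1) ^ m * (hh (n+1) - hh n) :=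
      pow_sub_pow_le m (hh_pos n).le (hh_mono (by omega))
    have hdiff : hh (n+1) - hh n = 1 / ((n:ℝ) + 2) := by rw [hh_succ]; ring
    have hm : (0:ℝ) < (m:ℝ) + 1 := by positivity
    have h2 : hh (n+1) ^ (m+1) / ((m:ℝ)+1) - hh n ^ (m+1) / ((m:ℝ)+1)
        ≤ hh (n+1) ^ m / ((n:ℝ) + 2) := by
      rw [div_sub_div_same, div_le_iff₀ hm]
      calc hh (n+1) ^ (m+1) - hh n ^ (m+1) ≤ ((m:ℝ)+1) * hh (n+1) ^ m * (hh (n+1) - hh n) := key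
        _ = hh (n+1) ^ m / ((n:ℝ) + 2) * ((m:ℝ)+1) := by rw [hdiff]; ring
    push_cast
    rw [show ((n:ℝ) + 1) + 1 = (n:ℝ) + 2 from by ring]
    linarith [ih, h2]

lemma conv_upper_ineq {a b c : ℝ} (ha : 0 ≤ a) (hb : 0 ≤ b) (hc : a + b = c) :
    1 / (a + 1) * (1 / (b + 1)) ≤ 1 / (c + 1) * (1 / (a + 1) + 1 / (b + 1)) := by
  have h1 : (0:ℝ) < a + 1 := by linarith
  have h2 : (0:ℝ) < b + 1 := by linarith
  have h3 : (0:ℝ) < c + 1 := by linarith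
  rw [div_add_div _ _ (ne_of_gt h1) (ne_of_gt h2), div_mul_div_comm, div_mul_div_comm,
    one_mul, one_mul]
  rw [div_le_div_iff₀ (by positivity) (by positivity)]
  nlinarith [mul_pos h1 h2]

lemma conv_lower_ineq {a b c : ℝ} (ha : 0 ≤ a) (hb : 0 ≤ b) (hc : a + b = c) :
    1 / (c + 2) * (1 / (a + 1)) ≤ 1 / (a + 1) * (1 / (b + 1)) := by
  have h1 : (0:ℝ) < a + 1 := by linarith
  have h2 : (0:ℝ) < b + 1 := by linarith
  have h3 : (0:ℝ) < c + 2 := by linarith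
  rw [mul_comm (1 / (a + 1))]
  apply mul_le_mul_of_nonneg_right _ (by positivity)
  apply div_le_div_of_nonneg_left (by norm_num) h2 (by linarith)

lemma cast_sub_add {k i : ℕ} (h : i ≤ k) : (i : ℝ) + ((k - i : ℕ) : ℝ) = (k : ℝ) := by
  have : i + (k - i) = k := by omega
  exact_mod_cast congrArg (Nat.cast : ℕ → ℝ) this

lemma sum_reflect_hh (k : ℕ) :
    ∑ i ∈ Finset.range (k + 1), (1:ℝ) / (((k - i : ℕ) : ℝ) + 1) = hh k := by
  have := Finset.sum_range_reflect (fun j => (1:ℝ) / ((j : ℝ) + 1)) (k + 1)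
  simpa [hh] using this

lemma cc_upper (d : ℕ) : ∀ k, cc (d + 1) k ≤ 2 ^ d * hh k ^ d / ((k : ℝ) + 1) := by
  induction d with
  | zero => intro k; rw [cc_one]; unfold bb; simp
  | succ d ih =>
    intro k
    rw [cc_succ]
    have step1 : ∀ i ∈ Finset.range (k + 1), cc (d + 1) i * bb (k - i) ≤
        2 ^ d * (1 / ((k:ℝ) + 1)) *
          (hh i ^ d / ((i:ℝ) + 1) + hh k ^ d * (1 / (((k - i : ℕ):ℝ) + 1))) := by
      intro i hi
      have hik : i ≤ k := Nat.lt_succ_iff.mp (Finset.mem_range.mp hi)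
      have h1 : cc (d + 1) i * bb (k - i) ≤ (2 ^ d * hh i ^ d / ((i:ℝ) + 1)) * bb (k - i) :=
        mul_le_mul_of_nonneg_right (ih i) (bb_pos _).le
      have h2 : (2 ^ d * hh i ^ d / ((i:ℝ) + 1)) * bb (k - i)
          = 2 ^ d * hh i ^ d * (1 / ((i:ℝ) + 1) * (1 / (((k - i : ℕ):ℝ) + 1))) := by
        unfold bb; ring
      have h3 : 1 / ((i:ℝ) + 1) * (1 / (((k - i : ℕ):ℝ) + 1))
          ≤ 1 / ((k:ℝ) + 1) * (1 / ((i:ℝ) + 1) + 1 / (((k - i : ℕ):ℝ) + 1)) :=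
        conv_upper_ineq (Nat.cast_nonneg i) (Nat.cast_nonneg _) (cast_sub_add hik)
      have h4 : 2 ^ d * hh i ^ d * (1 / ((i:ℝ) + 1) * (1 / (((k - i : ℕ):ℝ) + 1)))
          ≤ 2 ^ d * hh i ^ d * (1 / ((k:ℝ) + 1) * (1 / ((i:ℝ) + 1) + 1 / (((k - i : ℕ):ℝ) + 1))) := by
        apply mul_le_mul_of_nonneg_left h3
          (mul_nonneg (by positivity) (pow_nonneg (hh_pos i).le d))
      have h5 : hh i ^ d ≤ hh k ^ d := pow_le_pow_left₀ (hh_pos i).le (hh_mono hik) d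
      have h6 : 2 ^ d * hh i ^ d * (1 / ((k:ℝ) + 1) * (1 / ((i:ℝ) + 1) + 1 / (((k - i : ℕ):ℝ) + 1)))
          ≤ 2 ^ d * (1 / ((k:ℝ) + 1)) *
            (hh i ^ d / ((i:ℝ) + 1) + hh k ^ d * (1 / (((k - i : ℕ):ℝ) + 1))) := by
        have e1 : 2 ^ d * hh i ^ d * (1 / ((k:ℝ) + 1) * (1 / ((i:ℝ) + 1) + 1 / (((k - i : ℕ):ℝ) + 1)))
            = 2 ^ d * (1 / ((k:ℝ) + 1)) *
              (hh i ^ d / ((i:ℝ) + 1) + hh i ^ d * (1 / (((k - i : ℕ):ℝ) + 1))) := by ring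
        rw [e1]
        apply mul_le_mul_of_nonneg_left _ (by positivity)
        have : hh i ^ d * (1 / (((k - i : ℕ):ℝ) + 1)) ≤ hh k ^ d * (1 / (((k - i : ℕ):ℝ) + 1)) :=
          mul_le_mul_of_nonneg_right h5 (by positivity)
        linarith
      calc cc (d + 1) i * bb (k - i) ≤ _ := h1
        _ = _ := h2
        _ ≤ _ := h4
        _ ≤ _ := h6
    calc ∑ i ∈ Finset.range (k + 1), cc (d + 1) i * bb (k - i)
        ≤ ∑ i ∈ Finset.range (k + 1), 2 ^ d * (1 / ((k:ℝ) + 1)) *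
            (hh i ^ d / ((i:ℝ) + 1) + hh k ^ d * (1 / (((k - i : ℕ):ℝ) + 1))) :=
          Finset.sum_le_sum step1
      _ = 2 ^ d * (1 / ((k:ℝ) + 1)) *
            ((∑ i ∈ Finset.range (k + 1), hh i ^ d / ((i:ℝ) + 1)) +
              hh k ^ d * ∑ i ∈ Finset.range (k + 1), 1 / (((k - i : ℕ):ℝ) + 1)) := by
          simp only [mul_add, Finset.mul_sum, Finset.sum_add_distrib]
      _ ≤ 2 ^ d * (1 / ((k:ℝ) + 1)) * (hh k ^ (d + 1) + hh k ^ d * hh k) := by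
          apply mul_le_mul_of_nonneg_left _ (by positivity)
          rw [sum_reflect_hh]
          linarith [sum_hh_div_le d k]
      _ = 2 ^ (d + 1) * hh k ^ (d + 1) / ((k:ℝ) + 1) := by
          rw [pow_succ (hh k)]; ring

lemma cc_lower (d : ℕ) : ∃ a : ℝ, 0 < a ∧ ∀ k, a * (hh k ^ d / ((k : ℝ) + 1)) ≤ cc (d + 1) k := by
  induction d with
  | zero =>
    refine ⟨1, one_pos, fun k => ?_⟩
    rw [cc_one]; unfold bb; simp
  | succ d ih =>
    obtain ⟨a, ha, hak⟩ := ih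
    refine ⟨a / (2 * ((d:ℝ) + 1)), by positivity, fun k => ?_⟩
    rw [cc_succ]
    have step1 : ∀ i ∈ Finset.range (k + 1),
        a * (1 / ((k:ℝ) + 2)) * (hh i ^ d / ((i:ℝ) + 1)) ≤ cc (d + 1) i * bb (k - i) := by
      intro i hi
      have hik : i ≤ k := Nat.lt_succ_iff.mp (Finset.mem_range.mp hi)
      have h3 : 1 / ((k:ℝ) + 2) * (1 / ((i:ℝ) + 1))
          ≤ 1 / ((i:ℝ) + 1) * (1 / (((k - i : ℕ):ℝ) + 1)) :=
        conv_lower_ineq (Nat.cast_nonneg i) (Nat.cast_nonneg _) (cast_sub_add hik)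
      have h4 : a * hh i ^ d * (1 / ((k:ℝ) + 2) * (1 / ((i:ℝ) + 1)))
          ≤ a * hh i ^ d * (1 / ((i:ℝ) + 1) * (1 / (((k - i : ℕ):ℝ) + 1))) :=
        mul_le_mul_of_nonneg_left h3 (mul_nonneg ha.le (pow_nonneg (hh_pos i).le d))
      have h5 : a * hh i ^ d * (1 / ((i:ℝ) + 1) * (1 / (((k - i : ℕ):ℝ) + 1)))
          = (a * (hh i ^ d / ((i:ℝ) + 1))) * bb (k - i) := by unfold bb; ring
      have h6 : (a * (hh i ^ d / ((i:ℝ) + 1))) * bb (k - i) ≤ cc (d + 1) i * bb (k - i) :=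
        mul_le_mul_of_nonneg_right (hak i) (bb_pos _).le
      calc a * (1 / ((k:ℝ) + 2)) * (hh i ^ d / ((i:ℝ) + 1))
          = a * hh i ^ d * (1 / ((k:ℝ) + 2) * (1 / ((i:ℝ) + 1))) := by ring
        _ ≤ _ := h4
        _ = _ := h5
        _ ≤ _ := h6
    have hsum : ∑ i ∈ Finset.range (k + 1), a * (1 / ((k:ℝ) + 2)) * (hh i ^ d / ((i:ℝ) + 1))
        ≤ ∑ i ∈ Finset.range (k + 1), cc (d + 1) i * bb (k - i) := Finset.sum_le_sum step1
    rw [← Finset.mul_sum] at hsum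
    have h7 : a / (2 * ((d:ℝ) + 1)) * (hh k ^ (d + 1) / ((k:ℝ) + 1))
        ≤ a * (1 / ((k:ℝ) + 2)) * ∑ i ∈ Finset.range (k + 1), hh i ^ d / ((i:ℝ) + 1) := by
      have h8 := sum_hh_div_ge d k
      have h9 : a / (2 * ((d:ℝ) + 1)) * (hh k ^ (d + 1) / ((k:ℝ) + 1))
          ≤ a * (1 / ((k:ℝ) + 2)) * (hh k ^ (d + 1) / ((d:ℝ) + 1)) := by
        have e1 : a / (2 * ((d:ℝ) + 1)) * (hh k ^ (d + 1) / ((k:ℝ) + 1))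
            = a * hh k ^ (d + 1) * (1 / ((2 * ((d:ℝ) + 1)) * ((k:ℝ) + 1))) := by
          have hd1 : ((d:ℝ) + 1) ≠ 0 := by positivity
          have hk1 : ((k:ℝ) + 1) ≠ 0 := by positivity
          field_simp
        have e2 : a * (1 / ((k:ℝ) + 2)) * (hh k ^ (d + 1) / ((d:ℝ) + 1))
            = a * hh k ^ (d + 1) * (1 / (((k:ℝ) + 2) * ((d:ℝ) + 1))) := by
          have hd1 : ((d:ℝ) + 1) ≠ 0 := by positivity
          have hk2 : ((k:ℝ) + 2) ≠ 0 := by positivity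
          field_simp
        rw [e1, e2]
        apply mul_le_mul_of_nonneg_left _ (mul_nonneg ha.le (pow_nonneg (hh_pos k).le _))
        apply div_le_div_of_nonneg_left (by norm_num) (by positivity)
        have hk0 : (0:ℝ) ≤ (k:ℝ) := Nat.cast_nonneg k
        have hd0 : (0:ℝ) ≤ (d:ℝ) := Nat.cast_nonneg d
        nlinarith
      calc _ ≤ _ := h9
        _ ≤ _ := mul_le_mul_of_nonneg_left h8 (by positivity)
    linarith

lemma hh_le_card (k : ℕ) : hh k ≤ (k : ℝ) + 1 := by
  unfold hh
  calc ∑ i ∈ Finset.range (k + 1), (1:ℝ) / ((i:ℝ) + 1)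
      ≤ ∑ i ∈ Finset.range (k + 1), (1:ℝ) := by
        apply Finset.sum_le_sum
        intro i _
        rw [div_le_one (by positivity)]
        linarith [Nat.cast_nonneg (α := ℝ) i]
    _ = (k : ℝ) + 1 := by simp
  
lemma cc_le_poly (d : ℕ) (k : ℕ) : cc d k ≤ 2 ^ d * ((k : ℝ) + 1) ^ d := by
  cases d with
  | zero => show (if k = 0 then (1:ℝ) else 0) ≤ _; split <;> norm_num
  | succ d =>
    calc cc (d + 1) k ≤ 2 ^ d * hh k ^ d / ((k : ℝ) + 1) := cc_upper d k
      _ ≤ 2 ^ d * ((k:ℝ) + 1) ^ d := by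
          rw [div_le_iff₀ (by positivity)]
          have h1 : hh k ^ d ≤ ((k:ℝ) + 1) ^ d :=
            pow_le_pow_left₀ (hh_pos k).le (hh_le_card k) d
          have h2 : (1:ℝ) ≤ (k:ℝ) + 1 := by linarith [Nat.cast_nonneg (α := ℝ) k]
          calc (2:ℝ) ^ d * hh k ^ d ≤ 2 ^ d * ((k:ℝ) + 1) ^ d := by
                exact mul_le_mul_of_nonneg_left h1 (by positivity)
            _ = 2 ^ d * ((k:ℝ) + 1) ^ d * 1 := by ring
            _ ≤ 2 ^ d * ((k:ℝ) + 1) ^ d * ((k:ℝ) + 1) := by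
                apply mul_le_mul_of_nonneg_left h2 (by positivity)
      _ ≤ 2 ^ (d + 1) * ((k:ℝ) + 1) ^ (d + 1) := by
          rw [pow_succ 2, pow_succ ((k:ℝ) + 1)]
          have h2 : (1:ℝ) ≤ (k:ℝ) + 1 := by linarith [Nat.cast_nonneg (α := ℝ) k]
          nlinarith [pow_nonneg (by positivity : (0:ℝ) ≤ 2 * ((k:ℝ)+1)) d,
            pow_pos (by positivity : (0:ℝ) < (2:ℝ)) d,
            pow_le_pow_left₀ (by positivity : (0:ℝ) ≤ (1:ℝ)) h2 d,
            mul_pos (pow_pos (by norm_num : (0:ℝ) < 2) d) (pow_pos (by positivity : (0:ℝ) < (k:ℝ)+1) d)]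

lemma summable_poly_geom (d : ℕ) {t : ℝ} (h0 : 0 ≤ t) (h1 : t < 1) :
    Summable (fun k : ℕ => ((k : ℝ) + 1) ^ d * t ^ k) := by
  have ht : ‖t‖ < 1 := by rw [Real.norm_eq_abs, abs_lt]; constructor <;> linarith
  have hs1 : Summable (fun k : ℕ => (k : ℝ) ^ d * t ^ k) :=
    summable_pow_mul_geometric_of_norm_lt_one d ht
  have hs2 : Summable (fun k : ℕ => t ^ k) := summable_geometric_of_lt_one h0 h1
  have hs : Summable (fun k : ℕ => 2 ^ d * ((k : ℝ) ^ d * t ^ k) + 2 ^ d * t ^ k) :=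
    (hs1.mul_left _).add (hs2.mul_left _)
  apply Summable.of_nonneg_of_le (fun k => by positivity) _ hs
  intro k
  have hb : ((k : ℝ) + 1) ^ d ≤ 2 ^ d * ((k : ℝ) ^ d + 1) := by
    rcases Nat.eq_zero_or_pos k with hk | hk
    · subst hk
      simp only [Nat.cast_zero, zero_add, one_pow]
      have : (1:ℝ) ≤ 2 ^ d := one_le_pow₀ (by norm_num : (1:ℝ) ≤ 2)
      nlinarith [pow_nonneg (le_refl (0:ℝ)) d]
    · have hk1 : (1:ℝ) ≤ (k:ℝ) := by exact_mod_cast hk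
      calc ((k : ℝ) + 1) ^ d ≤ (2 * (k:ℝ)) ^ d :=
            pow_le_pow_left₀ (by linarith) (by linarith) d
        _ = 2 ^ d * (k:ℝ) ^ d := by rw [mul_pow]
        _ ≤ 2 ^ d * ((k : ℝ) ^ d + 1) := by
            apply mul_le_mul_of_nonneg_left _ (by positivity)
            linarith
  calc ((k : ℝ) + 1) ^ d * t ^ k ≤ 2 ^ d * ((k : ℝ) ^ d + 1) * t ^ k :=
        mul_le_mul_of_nonneg_right hb (by positivity)
    _ = 2 ^ d * ((k : ℝ) ^ d * t ^ k) + 2 ^ d * t ^ k := by ring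

lemma summable_cc (d : ℕ) {t : ℝ} (h0 : 0 ≤ t) (h1 : t < 1) :
    Summable (fun k : ℕ => cc d k * t ^ k) := by
  apply Summable.of_nonneg_of_le (fun k => mul_nonneg (cc_nonneg d k) (by positivity))
    (fun k => ?_) (((summable_poly_geom d h0 h1).mul_left (2 ^ d)))
  calc cc d k * t ^ k ≤ (2 ^ d * ((k : ℝ) + 1) ^ d) * t ^ k :=
        mul_le_mul_of_nonneg_right (cc_le_poly d k) (by positivity)
    _ = 2 ^ d * (((k : ℝ) + 1) ^ d * t ^ k) := by ring

lemma hasSum_bb {t : ℝ} (h0 : 0 < t) (h1 : t < 1) :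
    HasSum (fun k : ℕ => bb k * t ^ k) (1 / t * Real.log (1 / (1 - t))) := by
  have habs : |t| < 1 := abs_lt.2 ⟨by linarith, h1⟩
  have H := (Real.hasSum_pow_div_log_of_abs_lt_one habs).mul_left (1 / t)
  have e : (1 / t * Real.log (1 / (1 - t))) = 1 / t * -Real.log (1 - t) := by
    rw [one_div (1 - t), Real.log_inv]
  rw [e]
  convert H using 1
  · exact rfl
  funext n
  unfold bb
  field_simp
  ring

lemma tsum_cc (d : ℕ) {t : ℝ} (h0 : 0 < t) (h1 : t < 1) :
    ∑' k : ℕ, cc d k * t ^ k = (1 / t * Real.log (1 / (1 - t))) ^ d := by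
  induction d with
  | zero =>
    rw [pow_zero]
    rw [tsum_eq_single 0 (fun b hb => by simp [cc, hb])]
    simp [cc]
  | succ d ih =>
    have hf : Summable fun k : ℕ => ‖cc d k * t ^ k‖ := by
      apply Summable.congr (summable_cc d h0.le h1)
      intro k
      rw [Real.norm_eq_abs, abs_of_nonneg (mul_nonneg (cc_nonneg d k) (by positivity))]
    have hg : Summable fun k : ℕ => ‖bb k * t ^ k‖ := by
      apply Summable.congr ((hasSum_bb h0 h1).summable)
      intro k
      rw [Real.norm_eq_abs, abs_of_nonneg (mul_nonneg (bb_pos k).le (by positivity))]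
    have key := tsum_mul_tsum_eq_tsum_sum_antidiagonal_of_summable_norm hf hg
    rw [ih, (hasSum_bb h0 h1).tsum_eq] at key
    rw [pow_succ, key]
    apply tsum_congr
    intro n
    show (∑ ij ∈ Finset.HasAntidiagonal.antidiagonal n, cc d ij.1 * bb ij.2) * t ^ n = _
    rw [Finset.sum_mul]
    apply Finset.sum_congr rfl
    intro ij hij
    have hsum : ij.1 + ij.2 = n := Finset.HasAntidiagonal.mem_antidiagonal.mp hij
    rw [← hsum, pow_add]
    ring

lemma log_add_two_nonneg (k : ℕ) : 0 ≤ Real.log ((k : ℝ) + 2) :=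
  Real.log_nonneg (by linarith [Nat.cast_nonneg (α := ℝ) k])

lemma summable_logpow (m : ℕ) {t : ℝ} (h0 : 0 ≤ t) (h1 : t < 1) :
    Summable (fun k : ℕ => Real.log ((k : ℝ) + 2) ^ m / ((k : ℝ) + 1) * t ^ k) := by
  apply Summable.of_nonneg_of_le
    (fun k => mul_nonneg (div_nonneg (pow_nonneg (log_add_two_nonneg k) m) (by positivity))
      (by positivity))
    (fun k => ?_) (summable_poly_geom m h0 h1)
  have hlog : Real.log ((k : ℝ) + 2) ≤ (k : ℝ) + 1 := by
    calc Real.log ((k : ℝ) + 2) ≤ (k : ℝ) + 2 - 1 := Real.log_le_sub_one_of_pos (by positivity)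
      _ = (k : ℝ) + 1 := by ring
  have h2 : Real.log ((k : ℝ) + 2) ^ m / ((k : ℝ) + 1) ≤ ((k : ℝ) + 1) ^ m := by
    rw [div_le_iff₀ (by positivity)]
    calc Real.log ((k : ℝ) + 2) ^ m ≤ ((k : ℝ) + 1) ^ m :=
          pow_le_pow_left₀ (log_add_two_nonneg k) hlog m
      _ = ((k : ℝ) + 1) ^ m * 1 := by ring
      _ ≤ ((k : ℝ) + 1) ^ m * ((k : ℝ) + 1) := by
          apply mul_le_mul_of_nonneg_left _ (by positivity)
          linarith [Nat.cast_nonneg (α := ℝ) k]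
  exact mul_le_mul_of_nonneg_right h2 (by positivity)

/-- For each positive integer `d` there are constants `c, C > 0` such that for all `t ∈ (0,1)`,
`c·((1/t)·log(1/(1−t)))^d ≤ Σ_{k=0}^∞ ((log(k+2))^{d−1}/(k+1))·t^k ≤ C·((1/t)·log(1/(1−t)))^d`. -/
theorem stmt_2 (d : ℕ) (hd : 0 < d) :
    ∃ c C : ℝ, 0 < c ∧ 0 < C ∧ ∀ t : ℝ, 0 < t → t < 1 →
      c * (1 / t * Real.log (1 / (1 - t))) ^ d ≤
          (∑' k : ℕ, (Real.log ((k : ℝ) + 2)) ^ (d - 1) / ((k : ℝ) + 1) * t ^ k) ∧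
      (∑' k : ℕ, (Real.log ((k : ℝ) + 2)) ^ (d - 1) / ((k : ℝ) + 1) * t ^ k) ≤
          C * (1 / t * Real.log (1 / (1 - t))) ^ d := by
  obtain ⟨m, rfl⟩ : ∃ m, d = m + 1 := ⟨d - 1, by omega⟩
  obtain ⟨a, ha, hak⟩ := cc_lower m
  have hl2 : (0:ℝ) < Real.log 2 := Real.log_pos (by norm_num)
  set B : ℝ := 1 / Real.log 2 + 1 with hB
  have hB0 : (0:ℝ) < B := by positivity
  refine ⟨1 / (2 ^ m * B ^ m), 1 / a, by positivity, by positivity, fun t h0 h1 => ?_⟩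
  simp only [Nat.add_sub_cancel]
  have hterm_low : ∀ k : ℕ, 1 / (2 ^ m * B ^ m) * (cc (m + 1) k * t ^ k) ≤
      Real.log ((k : ℝ) + 2) ^ m / ((k : ℝ) + 1) * t ^ k := by
    intro k
    have h2 : cc (m + 1) k ≤ 2 ^ m * B ^ m * (Real.log ((k : ℝ) + 2) ^ m / ((k : ℝ) + 1)) := by
      calc cc (m + 1) k ≤ 2 ^ m * hh k ^ m / ((k : ℝ) + 1) := cc_upper m k
        _ ≤ 2 ^ m * (B * Real.log ((k : ℝ) + 2)) ^ m / ((k : ℝ) + 1) := by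
            apply div_le_div_of_nonneg_right _ (by positivity)
            apply mul_le_mul_of_nonneg_left _ (by positivity)
            exact pow_le_pow_left₀ (hh_pos k).le (hh_le_const_mul_log k) m
        _ = 2 ^ m * B ^ m * (Real.log ((k : ℝ) + 2) ^ m / ((k : ℝ) + 1)) := by
            rw [mul_pow]; ring
    have h3 : 1 / (2 ^ m * B ^ m) * cc (m + 1) k ≤
        Real.log ((k : ℝ) + 2) ^ m / ((k : ℝ) + 1) := by
      rw [div_mul_eq_mul_div, one_mul, div_le_iff₀ (by positivity)]
      calc cc (m + 1) k ≤ _ := h2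
        _ = Real.log ((k : ℝ) + 2) ^ m / ((k : ℝ) + 1) * (2 ^ m * B ^ m) := by ring
    calc 1 / (2 ^ m * B ^ m) * (cc (m + 1) k * t ^ k)
        = (1 / (2 ^ m * B ^ m) * cc (m + 1) k) * t ^ k := by ring
      _ ≤ _ := mul_le_mul_of_nonneg_right h3 (by positivity)
  have hterm_up : ∀ k : ℕ, Real.log ((k : ℝ) + 2) ^ m / ((k : ℝ) + 1) * t ^ k ≤
      1 / a * (cc (m + 1) k * t ^ k) := by
    intro k
    have h2 : Real.log ((k : ℝ) + 2) ^ m / ((k : ℝ) + 1) ≤ 1 / a * cc (m + 1) k := by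
      rw [div_mul_eq_mul_div, one_mul, le_div_iff₀ ha]
      calc Real.log ((k : ℝ) + 2) ^ m / ((k : ℝ) + 1) * a
          = a * (Real.log ((k : ℝ) + 2) ^ m / ((k : ℝ) + 1)) := by ring
        _ ≤ a * (hh k ^ m / ((k : ℝ) + 1)) := by
            apply mul_le_mul_of_nonneg_left _ ha.le
            apply div_le_div_of_nonneg_right _ (by positivity)
            exact pow_le_pow_left₀ (log_add_two_nonneg k) (log_le_hh k) m
        _ ≤ cc (m + 1) k := hak k
    calc Real.log ((k : ℝ) + 2) ^ m / ((k : ℝ) + 1) * t ^ k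
        ≤ (1 / a * cc (m + 1) k) * t ^ k := mul_le_mul_of_nonneg_right h2 (by positivity)
      _ = 1 / a * (cc (m + 1) k * t ^ k) := by ring
  have hs_cc := summable_cc (m + 1) h0.le h1
  have hs_a := summable_logpow m h0.le h1
  constructor
  · have e1 : 1 / (2 ^ m * B ^ m) * (1 / t * Real.log (1 / (1 - t))) ^ (m + 1)
        = ∑' k : ℕ, 1 / (2 ^ m * B ^ m) * (cc (m + 1) k * t ^ k) := by
      rw [tsum_mul_left, tsum_cc (m + 1) h0 h1]
    rw [e1]
    exact Summable.tsum_le_tsum hterm_low (hs_cc.mul_left _) hs_a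
  · have e2 : 1 / a * (1 / t * Real.log (1 / (1 - t))) ^ (m + 1)
        = ∑' k : ℕ, 1 / a * (cc (m + 1) k * t ^ k) := by
      rw [tsum_mul_left, tsum_cc (m + 1) h0 h1]
    rw [e2]
    exact Summable.tsum_le_tsum hterm_up hs_a (hs_cc.mul_left _)
end

section
/- Let d be a positive integer. There exist constants c, C > 0 such that for all integers k ≥ d: c·(log(k+2))^{d−1}/(k+1) ≤ ∫₀¹ t^k·((1/t)·log(1/(1−t)))^{d−1} dt ≤ C·(log(k+2))^{d−1}/(k+1). -/
open MeasureTheory Set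

lemma aux_log_le_rpow {q x : ℝ} (hq : 0 < q) (hx : 1 ≤ x) :
    Real.log x ≤ q⁻¹ * x ^ q := by
  have hx0 : 0 < x := lt_of_lt_of_le one_pos hx
  have h1 : Real.log (x ^ q) = q * Real.log x := Real.log_rpow hx0 q
  have h2 : Real.log (x ^ q) ≤ x ^ q - 1 :=
    Real.log_le_sub_one_of_pos (Real.rpow_pos_of_pos hx0 q)
  have h3 : q * Real.log x ≤ x ^ q := by linarith [h1 ▸ h2]
  calc Real.log x = q⁻¹ * (q * Real.log x) := by field_simp
    _ ≤ q⁻¹ * x ^ q := by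
        apply mul_le_mul_of_nonneg_left h3 (inv_nonneg.2 hq.le)

-- (log u⁻¹)^m ≤ (2(m+1))^m * u^(-1/2) for 0 < u ≤ 1
lemma aux_logpow_le {m : ℕ} {u : ℝ} (hu0 : 0 < u) (hu1 : u ≤ 1) :
    (Real.log u⁻¹) ^ m ≤ (2 * (m + 1) : ℝ) ^ m * u ^ (-(1/2) : ℝ) := by
  set q : ℝ := (2 * ((m : ℝ) + 1))⁻¹ with hq
  have hm1 : (0:ℝ) < 2 * ((m : ℝ) + 1) := by positivity
  have hq0 : 0 < q := by positivity
  have hx1 : 1 ≤ u⁻¹ := (one_le_inv_iff₀ ).2 ⟨hu0, hu1⟩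
  have h1 : Real.log u⁻¹ ≤ (2 * ((m : ℝ) + 1)) * (u⁻¹) ^ q := by
    have := aux_log_le_rpow hq0 hx1
    rwa [hq, inv_inv] at this
  have h2 : (Real.log u⁻¹) ^ m ≤ ((2 * ((m : ℝ) + 1)) * (u⁻¹) ^ q) ^ m :=
    pow_le_pow_left₀ (Real.log_nonneg hx1) h1 m
  have h3 : ((2 * ((m : ℝ) + 1)) * (u⁻¹) ^ q) ^ m
      = (2 * ((m : ℝ) + 1)) ^ m * u ^ (-(q * m)) := by
    rw [mul_pow, ← Real.rpow_natCast ((u⁻¹) ^ q) m, ← Real.rpow_mul (le_of_lt (inv_pos.2 hu0)),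
      Real.inv_rpow hu0.le, ← Real.rpow_neg hu0.le]
  have h4 : u ^ (-(q * m)) ≤ u ^ (-(1/2) : ℝ) := by
    apply Real.rpow_le_rpow_of_exponent_ge hu0 hu1
    rw [neg_le_neg_iff, hq]
    rw [inv_mul_le_iff₀ hm1]
    nlinarith [Nat.cast_nonneg (α := ℝ) m]
  calc (Real.log u⁻¹) ^ m ≤ _ := h2
    _ = _ := h3
    _ ≤ (2 * ((m:ℝ) + 1)) ^ m * u ^ (-(1/2) : ℝ) := by
        apply mul_le_mul_of_nonneg_left h4 (by positivity)
    _ = (2 * ((m : ℕ) + 1) : ℝ) ^ m * u ^ (-(1/2) : ℝ) := by norm_num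

lemma aux_int_rpow : IntegrableOn (fun t : ℝ => (1 - t) ^ (-(1/2) : ℝ)) (Ioo (0:ℝ) 1) := by
  have h : IntervalIntegrable (fun x : ℝ => x ^ (-(1/2):ℝ)) volume 0 1 :=
    intervalIntegral.intervalIntegrable_rpow' (by norm_num)
  have h2 := (h.comp_sub_left 1).symm
  norm_num at h2
  rw [intervalIntegrable_iff, uIoc_of_le (by norm_num : (0:ℝ) ≤ 1)] at h2
  exact h2.mono_set Ioo_subset_Ioc_self

lemma aux_ptwise {m k : ℕ} (hmk : m ≤ k) {t : ℝ} (ht : t ∈ Ioo (0:ℝ) 1) :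
    t ^ k * (1/t * Real.log (1/(1-t))) ^ m = t ^ (k - m) * (Real.log (1/(1-t))) ^ m := by
  obtain ⟨j, rfl⟩ : ∃ j, k = m + j := ⟨k - m, (Nat.add_sub_cancel' hmk).symm⟩
  have ht0 : t ≠ 0 := ne_of_gt ht.1
  rw [Nat.add_sub_cancel_left]
  field_simp [pow_add]
  have : t ^ m * t⁻¹ ^ m = 1 := by rw [← mul_pow, mul_inv_cancel₀ ht0, one_pow]
  simp only [one_div]
  linear_combination (t ^ j * Real.log (1 - t)⁻¹ ^ m) * this

lemma aux_L_nonneg {t : ℝ} (ht : t ∈ Ioo (0:ℝ) 1) : 0 ≤ Real.log (1/(1-t)) := by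
  apply Real.log_nonneg
  rw [le_one_div (by norm_num) (by linarith [ht.2] : (0:ℝ) < 1 - t)]
  linarith [ht.1]

lemma aux_f_nonneg {m k : ℕ} {t : ℝ} (ht : t ∈ Ioo (0:ℝ) 1) :
    0 ≤ t ^ k * (1/t * Real.log (1/(1-t))) ^ m := by
  have := aux_L_nonneg ht
  have := ht.1
  positivity

lemma aux_f_le {m k : ℕ} (hmk : m ≤ k) {t : ℝ} (ht : t ∈ Ioo (0:ℝ) 1) :
    t ^ k * (1/t * Real.log (1/(1-t))) ^ m ≤ (Real.log (1/(1-t))) ^ m := by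
  rw [aux_ptwise hmk ht]
  have h1 : t ^ (k - m) ≤ 1 := pow_le_one₀ ht.1.le ht.2.le
  have h2 : (0:ℝ) ≤ (Real.log (1/(1-t))) ^ m := pow_nonneg (aux_L_nonneg ht) m
  nlinarith

lemma aux_L_le {m : ℕ} {t : ℝ} (ht : t ∈ Ioo (0:ℝ) 1) :
    (Real.log (1/(1-t))) ^ m ≤ (2 * (m + 1) : ℝ) ^ m * (1 - t) ^ (-(1/2) : ℝ) := by
  have h := aux_logpow_le (m := m) (u := 1 - t) (by linarith [ht.2]) (by linarith [ht.1])
  rwa [one_div]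

lemma aux_integrable {m k : ℕ} (hmk : m ≤ k) :
    IntegrableOn (fun t : ℝ => t ^ k * (1/t * Real.log (1/(1-t))) ^ m) (Ioo (0:ℝ) 1) := by
  apply Integrable.mono' (aux_int_rpow.const_mul ((2 * (m + 1) : ℝ) ^ m))
  · apply Measurable.aestronglyMeasurable
    exact (measurable_id.pow_const k).mul (((measurable_const.div measurable_id).mul ((measurable_const.div ((measurable_const.sub measurable_id))).log)).pow_const m)
  · filter_upwards [ae_restrict_mem measurableSet_Ioo] with t ht
    rw [Real.norm_eq_abs, abs_of_nonneg (aux_f_nonneg ht)]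
    exact le_trans (aux_f_le hmk ht) (aux_L_le ht)

lemma aux_lower {m k : ℕ} (hmk : m + 1 ≤ k) :
    Real.exp (-2) / 4 * ((Real.log ((k:ℝ)+2)) ^ m / ((k:ℝ)+1)) ≤
      ∫ t in Ioo (0:ℝ) 1, t ^ k * (1/t * Real.log (1/(1-t))) ^ m := by
  set B : ℝ := (k:ℝ) + 2 with hBdef
  have hk1 : (1:ℝ) ≤ (k:ℝ) := by exact_mod_cast Nat.one_le_iff_ne_zero.2 (by omega)
  have hB3 : (3:ℝ) ≤ B := by simp only [hBdef]; linarith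
  have hB0 : (0:ℝ) < B := by linarith
  set a : ℝ := 1 - 1/B with hadef
  set b : ℝ := 1 - 1/(2*B) with hbdef
  have hBinv : 1/B ≤ 1/3 := by apply div_le_div_of_nonneg_left <;> linarith
  have ha0 : 0 < a := by rw [hadef]; linarith
  have ha1 : a < 1 := by rw [hadef]; have : 0 < 1/B := by positivity
                         linarith
  have hab : a < b := by
    rw [hadef, hbdef]
    have : 1/(2*B) < 1/B := by apply div_lt_div_of_pos_left <;> linarith
    linarith
  have hb1 : b < 1 := by
    rw [hbdef]; have : 0 < 1/(2*B) := by positivity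
    linarith
  have hsub : Ioo a b ⊆ Ioo (0:ℝ) 1 := Ioo_subset_Ioo ha0.le hb1.le
  have hlogB : 1 ≤ Real.log B := by
    rw [← Real.log_exp 1]
    exact Real.log_le_log (Real.exp_pos 1) (le_trans (by linarith [Real.exp_one_lt_d9]) hB3)
  -- pointwise lower bound on Ioo a b
  have hpt : ∀ t ∈ Ioo a b, Real.exp (-2) * (Real.log B) ^ m ≤
      t ^ k * (1/t * Real.log (1/(1-t))) ^ m := by
    intro t ht
    have ht' := hsub ht
    rw [aux_ptwise (by omega) ht']
    have h1t : 0 < 1 - t := by linarith [ht'.2]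
    have hstep1 : Real.exp (-2) ≤ a ^ (k + 2) := by
      have hk10 : (0:ℝ) < (k:ℝ) + 1 := by linarith
      have he : (1 + 1/((k:ℝ)+1)) ≤ Real.exp (1/((k:ℝ)+1)) := by
        have := Real.add_one_le_exp (1/((k:ℝ)+1)); linarith
      have hpow : (1 + 1/((k:ℝ)+1)) ^ (k+2) ≤ Real.exp (((k:ℝ)+2) * (1/((k:ℝ)+1))) := by
        have hc : ((k:ℝ)+2) * (1/((k:ℝ)+1)) = ((k+2 : ℕ) : ℝ) * (1/((k:ℝ)+1)) := by
          push_cast; ring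
        rw [hc, Real.exp_nat_mul]
        exact pow_le_pow_left₀ (by positivity) he (k+2)
      have hexp2 : Real.exp (((k:ℝ)+2) * (1/((k:ℝ)+1))) ≤ Real.exp 2 := by
        apply Real.exp_le_exp.2
        rw [mul_one_div, div_le_iff₀ hk10]
        linarith
      have hmul : a * (1 + 1/((k:ℝ)+1)) = 1 := by
        rw [hadef, hBdef]; field_simp; ring
      have hainv : a ^ (k+2) = ((1 + 1/((k:ℝ)+1)) ^ (k+2))⁻¹ := by
        rw [← inv_pow]
        congr 1
        field_simp at hmul ⊢
        linarith
      rw [hainv, Real.exp_neg]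
      exact inv_anti₀ (by positivity) (le_trans hpow hexp2)
    have hta : a ≤ t := ht.1.le
    have hstep2 : Real.exp (-2) ≤ t ^ (k - m) :=
      le_trans (le_trans hstep1 (pow_le_pow_of_le_one ha0.le ha1.le (by omega)))
        (pow_le_pow_left₀ ha0.le hta (k - m))
    have hL : Real.log B ≤ Real.log (1/(1-t)) := by
      apply Real.log_le_log hB0
      rw [le_one_div hB0 h1t]
      rw [hadef] at hta
      linarith
    have hLpow : (Real.log B) ^ m ≤ (Real.log (1/(1-t))) ^ m :=
      pow_le_pow_left₀ (by linarith) hL m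
    exact mul_le_mul hstep2 hLpow (pow_nonneg (by linarith) m)
      (pow_nonneg ht'.1.le (k - m))
  -- integral chain
  have hInt : IntegrableOn (fun t : ℝ => t ^ k * (1/t * Real.log (1/(1-t))) ^ m)
      (Ioo (0:ℝ) 1) := aux_integrable (by omega)
  have h1 : ∫ t in Ioo a b, (Real.exp (-2) * (Real.log B) ^ m) ≤
      ∫ t in Ioo a b, t ^ k * (1/t * Real.log (1/(1-t))) ^ m := by
    apply setIntegral_mono_on
      (integrableOn_const measure_Ioo_lt_top.ne)
      (hInt.mono_set hsub) measurableSet_Ioo hpt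
  have h2 : ∫ t in Ioo a b, t ^ k * (1/t * Real.log (1/(1-t))) ^ m ≤
      ∫ t in Ioo (0:ℝ) 1, t ^ k * (1/t * Real.log (1/(1-t))) ^ m := by
    apply setIntegral_mono_set hInt
    · filter_upwards [ae_restrict_mem measurableSet_Ioo] with t ht using aux_f_nonneg ht
    · exact HasSubset.Subset.eventuallyLE hsub
  have h3 : ∫ t in Ioo a b, (Real.exp (-2) * (Real.log B) ^ m) =
      (b - a) * (Real.exp (-2) * (Real.log B) ^ m) := by
    rw [setIntegral_const, Real.volume_real_Ioo_of_le hab.le, smul_eq_mul]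
  have hB0' : B ≠ 0 := ne_of_gt hB0
  have hba : b - a = 1/(2*B) := by rw [hadef, hbdef]; field_simp; ring
  have hfinal : Real.exp (-2) / 4 * ((Real.log B) ^ m / ((k:ℝ)+1)) ≤
      (b - a) * (Real.exp (-2) * (Real.log B) ^ m) := by
    rw [hba]
    have hL0 : (0:ℝ) ≤ (Real.log B) ^ m := pow_nonneg (by linarith) m
    have hX : 0 ≤ Real.exp (-2) * (Real.log B) ^ m := mul_nonneg (Real.exp_pos _).le hL0
    have h2B : (0:ℝ) < 2 * B := by linarith
    have hcmp : 2 * B ≤ 4 * ((k:ℝ) + 1) := by rw [hBdef]; linarith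
    rw [show Real.exp (-2)/4 * ((Real.log B)^m/((k:ℝ)+1))
          = (Real.exp (-2) * (Real.log B)^m)/(4*((k:ℝ)+1)) by
          have : ((k:ℝ)+1) ≠ 0 := by positivity
          field_simp,
        show 1/(2*B) * (Real.exp (-2) * (Real.log B)^m)
          = (Real.exp (-2) * (Real.log B)^m)/(2*B) by ring]
    exact div_le_div_of_nonneg_left hX h2B hcmp
  calc Real.exp (-2) / 4 * ((Real.log B) ^ m / ((k:ℝ)+1)) ≤ _ := hfinal
    _ = _ := h3.symm
    _ ≤ _ := le_trans h1 h2

lemma aux_int_pow (n : ℕ) (c : ℝ) : ∫ t in Ioo (0:ℝ) 1, c * t ^ n = c * (1 / (n+1)) := by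
  rw [← integral_Ioc_eq_integral_Ioo, ← intervalIntegral.integral_of_le zero_le_one,
    intervalIntegral.integral_const_mul, integral_pow]
  norm_num

lemma aux_int_sqrt {a : ℝ} (ha : a < 1) :
    ∫ t in Ico a (1:ℝ), (1-t) ^ (-(1/2):ℝ) = 2 * (1-a) ^ ((1/2):ℝ) := by
  rw [integral_Ico_eq_integral_Ioo, ← integral_Ioc_eq_integral_Ioo,
    ← intervalIntegral.integral_of_le ha.le]
  have h := intervalIntegral.integral_comp_sub_left (a := a) (b := 1) (fun x : ℝ => x ^ (-(1/2):ℝ)) 1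
  rw [h]
  norm_num
  rw [integral_rpow (Or.inl (by norm_num))]
  rw [Real.zero_rpow (by norm_num)]
  norm_num
  ring

lemma aux_upper {m k : ℕ} (hmk : m + 1 ≤ k) :
    (∫ t in Ioo (0:ℝ) 1, t ^ k * (1/t * Real.log (1/(1-t))) ^ m) ≤
      (((m:ℝ)+1) + 2^m + 2*(4*((m:ℝ)+1))^m) * ((Real.log ((k:ℝ)+2)) ^ m / ((k:ℝ)+1)) := by
  set B : ℝ := (k:ℝ) + 2 with hBdef
  have hk1 : (1:ℝ) ≤ (k:ℝ) := by exact_mod_cast Nat.one_le_iff_ne_zero.2 (by omega)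
  have hB3 : (3:ℝ) ≤ B := by simp only [hBdef]; linarith
  have hB0 : (0:ℝ) < B := by linarith
  set a : ℝ := 1 - 1/B with hadef
  have hBinv : 1/B ≤ 1/3 := by apply div_le_div_of_nonneg_left <;> linarith
  have hBinvpos : 0 < 1/B := by positivity
  have ha0 : 0 < a := by rw [hadef]; linarith
  have ha1 : a < 1 := by rw [hadef]; linarith
  have hlogB : 1 ≤ Real.log B := by
    rw [← Real.log_exp 1]
    exact Real.log_le_log (Real.exp_pos 1) (le_trans (by linarith [Real.exp_one_lt_d9]) hB3)
  have hlogB0 : 0 ≤ Real.log B := by linarith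
  have hInt : IntegrableOn (fun t : ℝ => t ^ k * (1/t * Real.log (1/(1-t))) ^ m)
      (Ioo (0:ℝ) 1) := aux_integrable (by omega)
  have hsub1 : Ioo (0:ℝ) a ⊆ Ioo (0:ℝ) 1 := Ioo_subset_Ioo le_rfl ha1.le
  have hsub2 : Ico a (1:ℝ) ⊆ Ioo (0:ℝ) 1 := fun t ht => ⟨lt_of_lt_of_le ha0 ht.1, ht.2⟩
  -- splitting
  have hunion : Ioo (0:ℝ) a ∪ Ico a 1 = Ioo (0:ℝ) 1 := Ioo_union_Ico_eq_Ioo ha0 ha1.le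
  have hdisj : Disjoint (Ioo (0:ℝ) a) (Ico a 1) :=
    Set.disjoint_left.2 fun x hx hx' => absurd hx.2 (not_lt.2 hx'.1)
  have hsplit : (∫ t in Ioo (0:ℝ) 1, t ^ k * (1/t * Real.log (1/(1-t))) ^ m) =
      (∫ t in Ioo (0:ℝ) a, t ^ k * (1/t * Real.log (1/(1-t))) ^ m) +
      (∫ t in Ico a 1, t ^ k * (1/t * Real.log (1/(1-t))) ^ m) := by
    rw [← hunion]
    exact setIntegral_union hdisj measurableSet_Ico (hInt.mono_set hsub1) (hInt.mono_set hsub2)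
  -- Part 1
  have hpart1 : (∫ t in Ioo (0:ℝ) a, t ^ k * (1/t * Real.log (1/(1-t))) ^ m) ≤
      ((m:ℝ)+1) * ((Real.log B) ^ m / ((k:ℝ)+1)) := by
    have hg : IntegrableOn (fun t : ℝ => (Real.log B) ^ m * t ^ (k - m)) (Ioo (0:ℝ) 1) :=
      ((continuous_const.mul (continuous_pow _)).integrableOn_Ioc).mono_set Ioo_subset_Ioc_self
    have step1 : (∫ t in Ioo (0:ℝ) a, t ^ k * (1/t * Real.log (1/(1-t))) ^ m) ≤
        ∫ t in Ioo (0:ℝ) a, (Real.log B) ^ m * t ^ (k - m) := by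
      apply setIntegral_mono_on (hInt.mono_set hsub1) (hg.mono_set hsub1) measurableSet_Ioo
      intro t ht
      have ht' := hsub1 ht
      rw [aux_ptwise (by omega) ht']
      have h1t : 0 < 1 - t := by linarith [ht'.2]
      have hL : Real.log (1/(1-t)) ≤ Real.log B := by
        apply Real.log_le_log (by positivity)
        rw [div_le_iff₀ h1t]
        have : 1/B ≤ 1 - t := by rw [hadef] at ht; linarith [ht.2]
        calc (1:ℝ) = B * (1/B) := by field_simp
          _ ≤ B * (1-t) := by apply mul_le_mul_of_nonneg_left this hB0.le
      have := mul_le_mul_of_nonneg_left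
        (pow_le_pow_left₀ (aux_L_nonneg ht') hL m) (pow_nonneg ht'.1.le (k-m))
      calc t ^ (k-m) * Real.log (1/(1-t)) ^ m ≤ t ^ (k-m) * (Real.log B) ^ m := this
        _ = (Real.log B) ^ m * t ^ (k-m) := by ring
    have step2 : (∫ t in Ioo (0:ℝ) a, (Real.log B) ^ m * t ^ (k - m)) ≤
        ∫ t in Ioo (0:ℝ) 1, (Real.log B) ^ m * t ^ (k - m) := by
      apply setIntegral_mono_set hg
      · filter_upwards [ae_restrict_mem measurableSet_Ioo] with t ht
        have := ht.1.le
        positivity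
      · exact HasSubset.Subset.eventuallyLE hsub1
    have step3 : (∫ t in Ioo (0:ℝ) 1, (Real.log B) ^ m * t ^ (k - m)) =
        (Real.log B) ^ m * (1 / ((k:ℝ) - m + 1)) := by
      rw [aux_int_pow]
      congr 2
      have : m ≤ k := by omega
      push_cast [Nat.cast_sub this]
      ring
    have step4 : (Real.log B) ^ m * (1 / ((k:ℝ) - m + 1)) ≤
        ((m:ℝ)+1) * ((Real.log B) ^ m / ((k:ℝ)+1)) := by
      obtain ⟨j, rfl⟩ : ∃ j, k = m + j := ⟨k - m, (Nat.add_sub_cancel' (by omega)).symm⟩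
      have hj1 : 1 ≤ j := by omega
      have hj1' : (1:ℝ) ≤ (j:ℝ) := by exact_mod_cast hj1
      have h1 : ((m+j:ℕ):ℝ) - (m:ℝ) + 1 = (j:ℝ) + 1 := by push_cast; ring
      rw [h1]
      have hL0 : (0:ℝ) ≤ (Real.log B) ^ m := pow_nonneg hlogB0 m
      have hL0' : (0:ℝ) < ((m+j:ℕ):ℝ) + 1 := by positivity
      have key : (1:ℝ)/((j:ℝ)+1) ≤ ((m:ℝ)+1)/(((m+j:ℕ):ℝ)+1) := by
        rw [div_le_div_iff₀ (by positivity) hL0']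
        push_cast
        nlinarith [Nat.cast_nonneg (α := ℝ) m, Nat.cast_nonneg (α := ℝ) j]
      calc (Real.log B)^m * (1/((j:ℝ)+1)) ≤ (Real.log B)^m * (((m:ℝ)+1)/(((m+j:ℕ):ℝ)+1)) :=
            mul_le_mul_of_nonneg_left key hL0
        _ = ((m:ℝ)+1) * ((Real.log B)^m/(((m+j:ℕ):ℝ)+1)) := by ring
    exact le_trans (le_trans step1 step2) (le_of_eq step3 |>.trans step4)
  -- Part 2
  have hpart2 : (∫ t in Ico a 1, t ^ k * (1/t * Real.log (1/(1-t))) ^ m) ≤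
      (2*Real.log B)^m / B + (4*((m:ℝ)+1))^m * 2 / B := by
    set φ : ℝ → ℝ := fun t => (2*Real.log B)^m + (4*((m:ℝ)+1))^m * B^(-(1/2):ℝ) * (1-t)^(-(1/2):ℝ)
      with hφdef
    have hφint : IntegrableOn φ (Ico a 1) := by
      apply Integrable.add
      · exact integrableOn_const measure_Ico_lt_top.ne
      · exact ((aux_int_rpow.mono_set hsub2).const_mul _)
    have hpt2 : ∀ t ∈ Ico a 1, t ^ k * (1/t * Real.log (1/(1-t))) ^ m ≤ φ t := by
      intro t ht
      have ht' := hsub2 ht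
      have h1t : 0 < 1 - t := by linarith [ht'.2]
      have hf := aux_f_le (m := m) (k := k) (by omega) ht'
      have hL0 := aux_L_nonneg ht'
      have hterm2 : 0 ≤ (4*((m:ℝ)+1))^m * B^(-(1/2):ℝ) * (1-t)^(-(1/2):ℝ) := by positivity
      by_cases hc : Real.log (1/(1-t)) ≤ 2*Real.log B
      · have : (Real.log (1/(1-t)))^m ≤ (2*Real.log B)^m := pow_le_pow_left₀ hL0 hc m
        rw [hφdef]
        simp only []
        linarith [hf]
      · push_neg at hc
        set u : ℝ := B * (1-t) with hudef
        have hu0 : 0 < u := by positivity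
        have hMeq : Real.log (1/(1-t)) = Real.log B + Real.log u⁻¹ := by
          rw [← Real.log_mul (ne_of_gt hB0) (by positivity : u⁻¹ ≠ 0)]
          congr 1
          rw [hudef]
          field_simp
        have hM1 : Real.log B < Real.log u⁻¹ := by
          rw [hMeq] at hc; linarith
        have hMpos : 0 < Real.log u⁻¹ := lt_of_lt_of_le (by linarith) hM1.le
        have hu1 : u ≤ 1 := by
          by_contra hu
          push_neg at hu
          have : Real.log u⁻¹ ≤ 0 :=
            Real.log_nonpos (by positivity) (inv_le_one_of_one_le₀ hu.le)
          linarith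
        have hbnd := aux_logpow_le (m := m) hu0 hu1
        have hLle : Real.log (1/(1-t)) ≤ 2 * Real.log u⁻¹ := by
          rw [hMeq]; linarith
        have h2 : (Real.log (1/(1-t)))^m ≤ 2^m * (Real.log u⁻¹)^m := by
          calc (Real.log (1/(1-t)))^m ≤ (2 * Real.log u⁻¹)^m := pow_le_pow_left₀ hL0 hLle m
            _ = 2^m * (Real.log u⁻¹)^m := mul_pow 2 _ m
        have h3 : (2:ℝ)^m * (Real.log u⁻¹)^m ≤ 2^m * ((2*((m:ℝ)+1))^m * u ^ (-(1/2):ℝ)) := by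
          apply mul_le_mul_of_nonneg_left _ (by positivity)
          exact_mod_cast hbnd
        have h4 : (2:ℝ)^m * ((2*((m:ℝ)+1))^m * u ^ (-(1/2):ℝ))
            = (4*((m:ℝ)+1))^m * B^(-(1/2):ℝ) * (1-t)^(-(1/2):ℝ) := by
          rw [hudef, Real.mul_rpow hB0.le h1t.le,
            show (4*((m:ℝ)+1))^m = 2^m*(2*((m:ℝ)+1))^m from by rw [← mul_pow]; congr 1; ring]
          ring
        rw [hφdef]
        simp only []
        have : t ^ k * (1/t * Real.log (1/(1-t))) ^ m ≤
            (4*((m:ℝ)+1))^m * B^(-(1/2):ℝ) * (1-t)^(-(1/2):ℝ) := by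
          calc t ^ k * (1/t * Real.log (1/(1-t))) ^ m ≤ (Real.log (1/(1-t)))^m := hf
            _ ≤ 2^m * (Real.log u⁻¹)^m := h2
            _ ≤ _ := h3
            _ = _ := h4
        have h5 : (0:ℝ) ≤ (2*Real.log B)^m := by positivity
        linarith
    have hmono : (∫ t in Ico a 1, t ^ k * (1/t * Real.log (1/(1-t))) ^ m) ≤
        ∫ t in Ico a 1, φ t :=
      setIntegral_mono_on (hInt.mono_set hsub2) hφint measurableSet_Ico hpt2
    have hcalc : (∫ t in Ico a 1, φ t) = (2*Real.log B)^m / B + (4*((m:ℝ)+1))^m * 2 / B := by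
      rw [hφdef]
      beta_reduce
      rw [integral_add (f := fun _ => (2*Real.log B)^m) (μ := volume.restrict (Ico a 1)) (integrableOn_const measure_Ico_lt_top.ne)
        ((aux_int_rpow.mono_set hsub2).const_mul _)]
      rw [setIntegral_const, integral_const_mul, aux_int_sqrt ha1, Real.volume_real_Ico_of_le ha1.le,
        smul_eq_mul]
      have h1a : 1 - a = 1/B := by rw [hadef]; ring
      rw [h1a]
      have hsq : B^(-(1/2):ℝ) * (2 * (1/B) ^ ((1/2):ℝ)) = 2 / B := by
        have h1 : (1/B) ^ ((1/2):ℝ) = B ^ (-(1/2):ℝ) := by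
          rw [one_div, Real.inv_rpow hB0.le, ← Real.rpow_neg hB0.le]
        rw [h1, show B^(-(1/2):ℝ) * (2 * B^(-(1/2):ℝ)) = 2 * (B^(-(1/2):ℝ) * B^(-(1/2):ℝ)) from by ring,
          ← Real.rpow_add hB0, show (-(1/2):ℝ) + -(1/2) = -1 from by norm_num, Real.rpow_neg_one]
        ring
      rw [mul_assoc, hsq]
      ring
    rw [hcalc] at hmono
    exact hmono
  -- combine
  have hgm1 : 1 ≤ (Real.log B)^m := one_le_pow₀ hlogB
  have hkB : 1/B ≤ 1/((k:ℝ)+1) :=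
    one_div_le_one_div_of_le (by positivity) (by rw [hBdef]; linarith)
  have hL0 : (0:ℝ) ≤ (Real.log B)^m := pow_nonneg hlogB0 m
  have e1 : (2*Real.log B)^m / B ≤ 2^m * ((Real.log B)^m / ((k:ℝ)+1)) := by
    rw [mul_pow]
    rw [div_eq_mul_one_div, mul_assoc, div_eq_mul_one_div ((Real.log B)^m)]
    apply mul_le_mul_of_nonneg_left _ (by positivity)
    exact mul_le_mul_of_nonneg_left hkB hL0
  have e2 : (4*((m:ℝ)+1))^m * 2 / B ≤ 2*(4*((m:ℝ)+1))^m * ((Real.log B)^m / ((k:ℝ)+1)) := by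
    have h1 : (1:ℝ)/B ≤ (Real.log B)^m / ((k:ℝ)+1) := by
      calc (1:ℝ)/B ≤ 1/((k:ℝ)+1) := hkB
        _ ≤ (Real.log B)^m / ((k:ℝ)+1) := by
            gcongr
    calc (4*((m:ℝ)+1))^m * 2 / B = 2*(4*((m:ℝ)+1))^m * (1/B) := by ring
      _ ≤ 2*(4*((m:ℝ)+1))^m * ((Real.log B)^m / ((k:ℝ)+1)) := by
          apply mul_le_mul_of_nonneg_left h1 (by positivity)
  calc (∫ t in Ioo (0:ℝ) 1, t ^ k * (1/t * Real.log (1/(1-t))) ^ m)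
      = _ + _ := hsplit
    _ ≤ ((m:ℝ)+1) * ((Real.log B) ^ m / ((k:ℝ)+1))
        + ((2*Real.log B)^m / B + (4*((m:ℝ)+1))^m * 2 / B) := add_le_add hpart1 hpart2
    _ ≤ ((m:ℝ)+1) * ((Real.log B) ^ m / ((k:ℝ)+1))
        + (2^m * ((Real.log B)^m / ((k:ℝ)+1))
           + 2*(4*((m:ℝ)+1))^m * ((Real.log B)^m / ((k:ℝ)+1))) := by
          linarith [e1, e2]
    _ = (((m:ℝ)+1) + 2^m + 2*(4*((m:ℝ)+1))^m) * ((Real.log B) ^ m / ((k:ℝ)+1)) := by ring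

/-- Let `d` be a positive integer. There are constants `c, C > 0` such that for all `k ≥ d`,
`∫₀¹ t^k·((1/t)·log(1/(1−t)))^{d−1} dt ≈ (log(k+2))^{d−1}/(k+1)`. -/
theorem stmt_4 (d : ℕ) (hd : 0 < d) :
    ∃ c C : ℝ, 0 < c ∧ 0 < C ∧ ∀ k : ℕ, d ≤ k →
      c * ((Real.log ((k : ℝ) + 2)) ^ (d - 1) / ((k : ℝ) + 1)) ≤
          (∫ t in Set.Ioo (0 : ℝ) 1, t ^ k * (1 / t * Real.log (1 / (1 - t))) ^ (d - 1)) ∧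
      (∫ t in Set.Ioo (0 : ℝ) 1, t ^ k * (1 / t * Real.log (1 / (1 - t))) ^ (d - 1)) ≤
          C * ((Real.log ((k : ℝ) + 2)) ^ (d - 1) / ((k : ℝ) + 1)) := by
  obtain ⟨m, rfl⟩ : ∃ m, d = m + 1 := ⟨d - 1, by omega⟩
  refine ⟨Real.exp (-2)/4, ((m:ℝ)+1) + 2^m + 2*(4*((m:ℝ)+1))^m, by positivity, by positivity, ?_⟩
  intro k hk
  have hs : m + 1 - 1 = m := by omega
  rw [hs]
  exact ⟨aux_lower hk, aux_upper hk⟩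
end

section
/- Let d ≥ 2 be an integer. There exist constants c, C > 0 such that for all integers k ≥ 2: c·(log(k+2))^{d−1}/(k+1) ≤ Σ_{n=0}^{k−1} (log(n+2))^{d−2}/((n+1)(n+k+1)) ≤ C·(log(k+2))^{d−1}/(k+1). -/
private lemma my_pow_sub_pow_le (m : ℕ) {a b : ℝ} (ha : 0 ≤ a) (hab : a ≤ b) :
    b ^ (m + 1) - a ^ (m + 1) ≤ (m + 1 : ℝ) * b ^ m * (b - a) := by
  induction m with
  | zero => simp
  | succ n ih =>
    have hb : 0 ≤ b := ha.trans hab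
    have h1 : b * (b ^ (n + 1) - a ^ (n + 1)) ≤ b * ((n + 1 : ℝ) * b ^ n * (b - a)) :=
      mul_le_mul_of_nonneg_left ih hb
    have h2 : a ^ (n + 1) * (b - a) ≤ b ^ (n + 1) * (b - a) :=
      mul_le_mul_of_nonneg_right (pow_le_pow_left₀ ha hab _) (sub_nonneg.2 hab)
    have e1 : b ^ (n + 1 + 1) - a ^ (n + 1 + 1) =
        b * (b ^ (n + 1) - a ^ (n + 1)) + a ^ (n + 1) * (b - a) := by ring
    have e2 : ((n : ℝ) + 1 + 1) * b ^ (n + 1) * (b - a) =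
        b * (((n : ℝ) + 1) * b ^ n * (b - a)) + b ^ (n + 1) * (b - a) := by ring
    push_cast
    rw [e1, e2]
    linarith

private lemma my_pow_sub_pow_ge (m : ℕ) {a b : ℝ} (ha : 0 ≤ a) (hab : a ≤ b) :
    (m + 1 : ℝ) * a ^ m * (b - a) ≤ b ^ (m + 1) - a ^ (m + 1) := by
  induction m with
  | zero => simp
  | succ n ih =>
    have hb : 0 ≤ b := ha.trans hab
    have h1 : a * ((n + 1 : ℝ) * a ^ n * (b - a)) ≤ a * (b ^ (n + 1) - a ^ (n + 1)) :=
      mul_le_mul_of_nonneg_left ih ha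
    have h2 : a ^ (n + 1) * (b - a) ≤ b ^ (n + 1) * (b - a) :=
      mul_le_mul_of_nonneg_right (pow_le_pow_left₀ ha hab _) (sub_nonneg.2 hab)
    have e1 : b ^ (n + 1 + 1) - a ^ (n + 1 + 1) =
        a * (b ^ (n + 1) - a ^ (n + 1)) + b ^ (n + 1) * (b - a) := by ring
    have e2 : ((n : ℝ) + 1 + 1) * a ^ (n + 1) * (b - a) =
        a * (((n : ℝ) + 1) * a ^ n * (b - a)) + a ^ (n + 1) * (b - a) := by ring
    push_cast
    rw [e1, e2]
    linarith

private lemma my_log_diff_le {x : ℝ} (hx : 0 < x) :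
    Real.log (x + 1) - Real.log x ≤ 1 / x := by
  rw [← Real.log_div (by positivity) (ne_of_gt hx)]
  have h := Real.log_le_sub_one_of_pos (show (0:ℝ) < (x + 1) / x by positivity)
  have e : (x + 1) / x - 1 = 1 / x := by field_simp; ring
  linarith [h, e.symm.le]

private lemma my_log_diff_ge {x : ℝ} (hx : 0 < x) :
    1 / (x + 1) ≤ Real.log (x + 1) - Real.log x := by
  rw [← Real.log_div (by positivity) (ne_of_gt hx)]
  have h := Real.log_le_sub_one_of_pos (show (0:ℝ) < x / (x + 1) by positivity)
  have e : Real.log (x / (x + 1)) = - Real.log ((x + 1) / x) := by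
    rw [← Real.log_inv, inv_div]
  have e2 : x / (x + 1) - 1 = -(1 / (x + 1)) := by field_simp; ring
  rw [e, e2] at h
  linarith

private lemma T_lower (m k : ℕ) :
    (Real.log ((k : ℝ) + 1)) ^ (m + 1) ≤
      (m + 1 : ℝ) * ∑ n ∈ Finset.range k, (Real.log ((n : ℝ) + 2)) ^ m / ((n : ℝ) + 1) := by
  have tele := Finset.sum_range_sub (f := fun n : ℕ => (Real.log ((n : ℝ) + 1)) ^ (m + 1)) k
  simp only [Nat.cast_zero, Nat.cast_add, Nat.cast_one, zero_add, Real.log_one,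
    zero_pow (Nat.succ_ne_zero m), sub_zero] at tele
  have key : ∀ n ∈ Finset.range k,
      (Real.log ((n : ℝ) + 1 + 1)) ^ (m + 1) - (Real.log ((n : ℝ) + 1)) ^ (m + 1) ≤
        (m + 1 : ℝ) * ((Real.log ((n : ℝ) + 2)) ^ m / ((n : ℝ) + 1)) := by
    intro n _
    have hn : (0:ℝ) < (n : ℝ) + 1 := by positivity
    have h0 : (0:ℝ) ≤ Real.log ((n : ℝ) + 1) := Real.log_nonneg (by linarith)
    have hmono : Real.log ((n : ℝ) + 1) ≤ Real.log ((n : ℝ) + 1 + 1) :=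
      Real.log_le_log (by positivity) (by linarith)
    have hd := my_log_diff_le hn
    have h1 := my_pow_sub_pow_le m h0 hmono
    have h2 : (0:ℝ) ≤ Real.log ((n : ℝ) + 1 + 1) := h0.trans hmono
    have e : (n : ℝ) + 1 + 1 = (n : ℝ) + 2 := by ring
    rw [e] at h1 hd h2 ⊢
    have h3 : (m + 1 : ℝ) * (Real.log ((n : ℝ) + 2)) ^ m *
        (Real.log ((n : ℝ) + 2) - Real.log ((n : ℝ) + 1)) ≤
        (m + 1 : ℝ) * (Real.log ((n : ℝ) + 2)) ^ m * (1 / ((n : ℝ) + 1)) := by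
      apply mul_le_mul_of_nonneg_left hd (by positivity)
    calc (Real.log ((n : ℝ) + 2)) ^ (m + 1) - (Real.log ((n : ℝ) + 1)) ^ (m + 1)
        ≤ (m + 1 : ℝ) * (Real.log ((n : ℝ) + 2)) ^ m *
            (Real.log ((n : ℝ) + 2) - Real.log ((n : ℝ) + 1)) := h1
      _ ≤ (m + 1 : ℝ) * (Real.log ((n : ℝ) + 2)) ^ m * (1 / ((n : ℝ) + 1)) := h3
      _ = (m + 1 : ℝ) * ((Real.log ((n : ℝ) + 2)) ^ m / ((n : ℝ) + 1)) := by ring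
  calc (Real.log ((k : ℝ) + 1)) ^ (m + 1)
      = ∑ n ∈ Finset.range k,
          ((Real.log ((n : ℝ) + 1 + 1)) ^ (m + 1) - (Real.log ((n : ℝ) + 1)) ^ (m + 1)) := by
        rw [tele]
    _ ≤ ∑ n ∈ Finset.range k, (m + 1 : ℝ) * ((Real.log ((n : ℝ) + 2)) ^ m / ((n : ℝ) + 1)) :=
        Finset.sum_le_sum key
    _ = (m + 1 : ℝ) * ∑ n ∈ Finset.range k, (Real.log ((n : ℝ) + 2)) ^ m / ((n : ℝ) + 1) := by
        rw [Finset.mul_sum]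

private lemma T_upper (m k : ℕ) :
    (m + 1 : ℝ) * ∑ n ∈ Finset.range k, (Real.log ((n : ℝ) + 2)) ^ m / ((n : ℝ) + 1) ≤
      3 * (Real.log ((k : ℝ) + 2)) ^ (m + 1) := by
  have tele := Finset.sum_range_sub (f := fun n : ℕ => (Real.log ((n : ℝ) + 2)) ^ (m + 1)) k
  have key : ∀ n ∈ Finset.range k,
      (m + 1 : ℝ) * ((Real.log ((n : ℝ) + 2)) ^ m / ((n : ℝ) + 1)) ≤
        3 * ((Real.log ((n : ℝ) + 1 + 2)) ^ (m + 1) - (Real.log ((n : ℝ) + 2)) ^ (m + 1)) := by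
    intro n _
    have hn : (0:ℝ) < (n : ℝ) + 2 := by positivity
    have h0 : (0:ℝ) ≤ Real.log ((n : ℝ) + 2) := Real.log_nonneg (by linarith)
    have hmono : Real.log ((n : ℝ) + 2) ≤ Real.log ((n : ℝ) + 2 + 1) :=
      Real.log_le_log (by positivity) (by linarith)
    have hd := my_log_diff_ge hn
    have h1 := my_pow_sub_pow_ge m h0 hmono
    have e : (n : ℝ) + 1 + 2 = (n : ℝ) + 2 + 1 := by ring
    rw [e]
    have hP : (0:ℝ) ≤ (m + 1 : ℝ) * (Real.log ((n : ℝ) + 2)) ^ m := by positivity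
    have hp1 : (0:ℝ) < (n : ℝ) + 1 := by positivity
    have hp2 : (0:ℝ) < (n : ℝ) + 2 + 1 := by positivity
    have hfrac : 1 / ((n : ℝ) + 1) ≤ 3 * (1 / ((n : ℝ) + 2 + 1)) := by
      rw [mul_one_div, div_le_div_iff₀ hp1 hp2]
      have : (0:ℝ) ≤ (n : ℝ) := Nat.cast_nonneg n
      linarith
    have A := mul_le_mul_of_nonneg_left hfrac hP
    have B := mul_le_mul_of_nonneg_left hd hP
    calc (m + 1 : ℝ) * ((Real.log ((n : ℝ) + 2)) ^ m / ((n : ℝ) + 1))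
        = (m + 1 : ℝ) * (Real.log ((n : ℝ) + 2)) ^ m * (1 / ((n : ℝ) + 1)) := by ring
      _ ≤ (m + 1 : ℝ) * (Real.log ((n : ℝ) + 2)) ^ m * (3 * (1 / ((n : ℝ) + 2 + 1))) := A
      _ = 3 * ((m + 1 : ℝ) * (Real.log ((n : ℝ) + 2)) ^ m * (1 / ((n : ℝ) + 2 + 1))) := by ring
      _ ≤ 3 * ((m + 1 : ℝ) * (Real.log ((n : ℝ) + 2)) ^ m *
            (Real.log ((n : ℝ) + 2 + 1) - Real.log ((n : ℝ) + 2))) := by linarith [B]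
      _ ≤ 3 * ((Real.log ((n : ℝ) + 2 + 1)) ^ (m + 1) - (Real.log ((n : ℝ) + 2)) ^ (m + 1)) := by
          linarith [h1]
  have hlog2 : (0:ℝ) ≤ (Real.log ((0:ℝ) + 2)) ^ (m + 1) := by positivity
  calc (m + 1 : ℝ) * ∑ n ∈ Finset.range k, (Real.log ((n : ℝ) + 2)) ^ m / ((n : ℝ) + 1)
      = ∑ n ∈ Finset.range k, (m + 1 : ℝ) * ((Real.log ((n : ℝ) + 2)) ^ m / ((n : ℝ) + 1)) := by
        rw [Finset.mul_sum]
    _ ≤ ∑ n ∈ Finset.range k,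
          3 * ((Real.log ((n : ℝ) + 1 + 2)) ^ (m + 1) - (Real.log ((n : ℝ) + 2)) ^ (m + 1)) :=
        Finset.sum_le_sum key
    _ = 3 * ∑ n ∈ Finset.range k,
          ((Real.log ((n : ℝ) + 1 + 2)) ^ (m + 1) - (Real.log ((n : ℝ) + 2)) ^ (m + 1)) := by
        rw [Finset.mul_sum]
    _ ≤ 3 * (Real.log ((k : ℝ) + 2)) ^ (m + 1) := by
        have tele2 : ∑ n ∈ Finset.range k,
            ((Real.log ((n : ℝ) + 1 + 2)) ^ (m + 1) - (Real.log ((n : ℝ) + 2)) ^ (m + 1)) =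
            (Real.log ((k : ℝ) + 2)) ^ (m + 1) - (Real.log (2 : ℝ)) ^ (m + 1) := by
          push_cast at tele
          norm_num at tele ⊢
          convert tele using 2 with n
        rw [tele2]
        have hl2 : (0:ℝ) ≤ (Real.log (2 : ℝ)) ^ (m + 1) :=
          pow_nonneg (Real.log_nonneg one_le_two) _
        linarith

/-- Let `d ≥ 2`. There are constants `c, C > 0` such that for all `k ≥ 2`,
`Σ_{n=0}^{k−1} (log(n+2))^{d−2}/((n+1)(n+k+1)) ≈ (log(k+2))^{d−1}/(k+1)`. -/
theorem stmt_5 (d : ℕ) (hd : 2 ≤ d) :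
    ∃ c C : ℝ, 0 < c ∧ 0 < C ∧ ∀ k : ℕ, 2 ≤ k →
      c * ((Real.log ((k : ℝ) + 2)) ^ (d - 1) / ((k : ℝ) + 1)) ≤
          (∑ n ∈ Finset.range k,
            (Real.log ((n : ℝ) + 2)) ^ (d - 2) / (((n : ℝ) + 1) * ((n : ℝ) + (k : ℝ) + 1))) ∧
      (∑ n ∈ Finset.range k,
            (Real.log ((n : ℝ) + 2)) ^ (d - 2) / (((n : ℝ) + 1) * ((n : ℝ) + (k : ℝ) + 1))) ≤
          C * ((Real.log ((k : ℝ) + 2)) ^ (d - 1) / ((k : ℝ) + 1)) := by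
  obtain ⟨m, rfl⟩ : ∃ m, d = m + 2 := ⟨d - 2, by omega⟩
  have hd1 : m + 2 - 1 = m + 1 := by omega
  have hd2 : m + 2 - 2 = m := by omega
  rw [hd1, hd2]
  refine ⟨1 / ((m + 1 : ℝ) * 2 ^ (m + 2)), 3 / (m + 1 : ℝ), by positivity, by positivity, ?_⟩
  intro k hk
  have hk1 : (0:ℝ) < (k : ℝ) + 1 := by positivity
  have hk2 : (2:ℝ) ≤ (k : ℝ) := by exact_mod_cast hk
  set L := Real.log ((k : ℝ) + 2) with hL
  have hLpos : 0 < L := Real.log_pos (by linarith)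
  set T := ∑ n ∈ Finset.range k, (Real.log ((n : ℝ) + 2)) ^ m / ((n : ℝ) + 1) with hT
  set S := ∑ n ∈ Finset.range k,
      (Real.log ((n : ℝ) + 2)) ^ m / (((n : ℝ) + 1) * ((n : ℝ) + (k : ℝ) + 1)) with hS
  -- termwise comparisons
  have hSup : S ≤ T / ((k : ℝ) + 1) := by
    rw [hS, hT, Finset.sum_div]
    apply Finset.sum_le_sum
    intro n _
    have hn1 : (0:ℝ) < (n : ℝ) + 1 := by positivity
    have hnum : (0:ℝ) ≤ (Real.log ((n : ℝ) + 2)) ^ m := by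
      have : (0:ℝ) ≤ Real.log ((n : ℝ) + 2) := Real.log_nonneg (by linarith [Nat.cast_nonneg (α := ℝ) n])
      positivity
    rw [div_div]
    apply div_le_div_of_nonneg_left hnum (by positivity)
    have : (0:ℝ) ≤ (n : ℝ) := Nat.cast_nonneg n
    nlinarith
  have hSlo : T / (2 * ((k : ℝ) + 1)) ≤ S := by
    rw [hS, hT, Finset.sum_div]
    apply Finset.sum_le_sum
    intro n hn
    have hnk : (n : ℝ) ≤ (k : ℝ) - 1 := by
      have := Finset.mem_range.mp hn
      have : (n : ℝ) + 1 ≤ (k : ℝ) := by exact_mod_cast this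
      linarith
    have hn1 : (0:ℝ) < (n : ℝ) + 1 := by positivity
    have hnum : (0:ℝ) ≤ (Real.log ((n : ℝ) + 2)) ^ m := by
      have : (0:ℝ) ≤ Real.log ((n : ℝ) + 2) := Real.log_nonneg (by linarith [Nat.cast_nonneg (α := ℝ) n])
      positivity
    rw [div_div]
    apply div_le_div_of_nonneg_left hnum
    · have : (0:ℝ) ≤ (n : ℝ) := Nat.cast_nonneg n
      nlinarith
    · nlinarith
  -- bounds on T
  have hTlo := T_lower m k
  have hTup := T_upper m k
  have hm1 : (0:ℝ) < (m + 1 : ℝ) := by positivity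
  -- log(k+1) ≥ L/2
  have hhalf : L / 2 ≤ Real.log ((k : ℝ) + 1) := by
    have h2 : Real.log ((k : ℝ) + 2) ≤ Real.log (((k : ℝ) + 1) ^ 2) := by
      apply Real.log_le_log (by linarith)
      nlinarith
    rw [Real.log_pow] at h2
    push_cast at h2
    linarith
  have hpow : (L / 2) ^ (m + 1) ≤ (Real.log ((k : ℝ) + 1)) ^ (m + 1) :=
    pow_le_pow_left₀ (by positivity) hhalf _
  constructor
  · -- lower bound
    have h1 : (L / 2) ^ (m + 1) ≤ (m + 1 : ℝ) * T := hpow.trans hTlo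
    have h2 : (L / 2) ^ (m + 1) / ((m + 1 : ℝ) * (2 * ((k : ℝ) + 1))) ≤ T / (2 * ((k : ℝ) + 1)) := by
      rw [div_le_div_iff₀ (by positivity) (by positivity)]
      nlinarith [mul_le_mul_of_nonneg_right h1
        (le_of_lt (show (0:ℝ) < 2 * ((k : ℝ) + 1) by positivity))]
    refine le_trans (le_of_eq ?_) (h2.trans hSlo)
    rw [div_pow, div_div]
    rw [show ((2:ℝ)) ^ (m + 2) = 2 ^ (m + 1) * 2 by ring]
    field_simp
  · -- upper bound
    have h1 : T ≤ 3 * L ^ (m + 1) / (m + 1 : ℝ) := by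
      rw [le_div_iff₀ hm1]
      linarith [hTup]
    have h2 : T / ((k : ℝ) + 1) ≤ 3 * L ^ (m + 1) / (m + 1 : ℝ) / ((k : ℝ) + 1) := by
      gcongr
    refine hSup.trans (h2.trans (le_of_eq ?_))
    field_simp
end

section
/- Let d ≥ 2 be an integer. Then the tail sums S₂(k) = Σ_{n=k}^∞ (log(n+2))^{d−2}/((n+1)(n+k+1)) satisfy S₂(k) = o((log(k+2))^{d−1}/(k+1)) as k → ∞; that is, ((k+1)/(log(k+2))^{d−1})·S₂(k) → 0 as k → ∞. -/
open Filter Real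


lemma lp_le (e : ℕ) {x : ℝ} (hx : 1 ≤ x) :
    (Real.log x) ^ e ≤ (4*(e:ℝ)+4) ^ e * x ^ ((1:ℝ)/4) := by
  have hx0 : (0:ℝ) ≤ x := by linarith
  have hε : (0:ℝ) < 1/(4*(e:ℝ)+4) := by positivity
  have h1 : Real.log x ≤ (4*(e:ℝ)+4) * x ^ (1/(4*(e:ℝ)+4)) := by
    calc Real.log x ≤ x ^ (1/(4*(e:ℝ)+4)) / (1/(4*(e:ℝ)+4)) := Real.log_le_rpow_div hx0 hε
      _ = (4*(e:ℝ)+4) * x ^ (1/(4*(e:ℝ)+4)) := by field_simp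
  have hlog : 0 ≤ Real.log x := Real.log_nonneg hx
  have h2 : (Real.log x) ^ e ≤ ((4*(e:ℝ)+4) * x ^ (1/(4*(e:ℝ)+4))) ^ e :=
    pow_le_pow_left₀ hlog h1 e
  rw [mul_pow] at h2
  refine h2.trans (mul_le_mul_of_nonneg_left ?_ (by positivity))
  rw [← Real.rpow_natCast (x ^ (1/(4*(e:ℝ)+4))) e, ← Real.rpow_mul hx0]
  exact Real.rpow_le_rpow_of_exponent_le hx (by
    rw [div_mul_eq_mul_div, div_le_div_iff₀ (by positivity) (by norm_num)]
    push_cast; nlinarith [Nat.cast_nonneg (α := ℝ) e])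

lemma key (e k : ℕ) {x : ℝ} (hx : 1 ≤ x) :
    (Real.log x) ^ e ≤ (2*Real.log ((k:ℝ)+2)) ^ e
      + (4*(e:ℝ)+4) ^ e * x ^ ((3:ℝ)/4) / ((k:ℝ)+1) := by
  have hx0 : (0:ℝ) < x := by linarith
  have hk2 : (1:ℝ) ≤ (k:ℝ)+2 := by have : (0:ℝ) ≤ k := Nat.cast_nonneg k; linarith
  have hlogk : 0 ≤ Real.log ((k:ℝ)+2) := Real.log_nonneg hk2
  rcases le_or_gt x (((k:ℝ)+2)^2) with hc | hc
  · have h1 : Real.log x ≤ 2*Real.log ((k:ℝ)+2) := by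
      calc Real.log x ≤ Real.log (((k:ℝ)+2)^2) := Real.log_le_log hx0 hc
        _ = 2*Real.log ((k:ℝ)+2) := by rw [Real.log_pow]; push_cast; ring
    have := pow_le_pow_left₀ (Real.log_nonneg hx) h1 e
    refine this.trans (le_add_of_nonneg_right (by positivity))
  · refine le_add_of_nonneg_of_le (by positivity) ?_
    refine (lp_le e hx).trans ?_
    have hs : ((k:ℝ)+1) ≤ x ^ ((1:ℝ)/2) := by
      have h2 : ((k:ℝ)+2) = (((k:ℝ)+2)^2) ^ ((1:ℝ)/2) := by
        rw [← Real.rpow_natCast ((k:ℝ)+2) 2, ← Real.rpow_mul (by positivity)]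
        norm_num
      have h3 : (((k:ℝ)+2)^2) ^ ((1:ℝ)/2) ≤ x ^ ((1:ℝ)/2) :=
        Real.rpow_le_rpow (by positivity) hc.le (by norm_num)
      nlinarith [h2 ▸ h3]
    have hsplit : x ^ ((3:ℝ)/4) = x ^ ((1:ℝ)/4) * x ^ ((1:ℝ)/2) := by
      rw [← Real.rpow_add hx0]; norm_num
    rw [le_div_iff₀ (by positivity), hsplit]
    have : (4*(e:ℝ)+4) ^ e * x ^ ((1:ℝ)/4) * ((k:ℝ)+1)
        ≤ (4*(e:ℝ)+4) ^ e * x ^ ((1:ℝ)/4) * x ^ ((1:ℝ)/2) :=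
      mul_le_mul_of_nonneg_left hs (by positivity)
    linarith [this]


lemma term_le (e k m : ℕ) (hk : 1 ≤ k) :
    (Real.log ((m:ℝ)+(k:ℝ)+2)) ^ e / (((m:ℝ)+(k:ℝ)+1)*((m:ℝ)+2*(k:ℝ)+1))
    ≤ (2*Real.log ((k:ℝ)+2)) ^ e * (1/(((m:ℝ)+(k:ℝ)+1)*((m:ℝ)+(k:ℝ)+2)))
      + (2*(4*(e:ℝ)+4) ^ e/((k:ℝ)+1)) * (1/((m:ℝ)+1) ^ ((5:ℝ)/4)) := by
  have hm0 : (0:ℝ) ≤ m := Nat.cast_nonneg m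
  have hk1 : (1:ℝ) ≤ (k:ℝ) := Nat.one_le_cast.mpr hk
  set a : ℝ := (m:ℝ)+(k:ℝ)+1 with ha
  have ha1 : (1:ℝ) ≤ a := by simp only [ha]; linarith
  have ha0 : (0:ℝ) < a := by linarith
  have hx1 : (1:ℝ) ≤ a+1 := by linarith
  have hA0 : (0:ℝ) ≤ (2*Real.log ((k:ℝ)+2)) ^ e := by
    have : (0:ℝ) ≤ Real.log ((k:ℝ)+2) := Real.log_nonneg (by linarith)
    positivity
  set C : ℝ := (4*(e:ℝ)+4) ^ e with hC
  have hC0 : (0:ℝ) < C := by positivity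
  have hkey := key e k hx1
  have hD0 : (0:ℝ) < a*(a+(k:ℝ)) := by positivity
  have hx : (m:ℝ)+(k:ℝ)+2 = a+1 := by simp [ha]; ring
  have hd : (m:ℝ)+2*(k:ℝ)+1 = a+(k:ℝ) := by simp [ha]; ring
  rw [hx, hd]
  have step1 : (Real.log (a+1)) ^ e / (a*(a+(k:ℝ)))
      ≤ ((2*Real.log ((k:ℝ)+2)) ^ e + C * (a+1) ^ ((3:ℝ)/4) / ((k:ℝ)+1)) / (a*(a+(k:ℝ))) :=
    (div_le_div_iff_of_pos_right hD0).mpr hkey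
  refine step1.trans ?_
  rw [add_div]
  refine add_le_add ?_ ?_
  · -- first piece
    rw [div_eq_mul_one_div]
    refine mul_le_mul_of_nonneg_left ?_ hA0
    rw [hx] at *
    have h1 : a*(a+1) ≤ a*(a+(k:ℝ)) := by nlinarith
    have h2 : (0:ℝ) < a*(a+1) := by positivity
    exact one_div_le_one_div_of_le h2 h1
  · -- second piece
    set p : ℝ := a ^ ((3:ℝ)/4) with hp
    set q : ℝ := ((m:ℝ)+1) ^ ((5:ℝ)/4) with hq
    have hp0 : (0:ℝ) < p := Real.rpow_pos_of_pos ha0 _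
    have hq0 : (0:ℝ) < q := Real.rpow_pos_of_pos (by linarith) _
    have h34 : (a+1) ^ ((3:ℝ)/4) ≤ 2*p := by
      have h1 : (a+1) ^ ((3:ℝ)/4) ≤ (2*a) ^ ((3:ℝ)/4) :=
        Real.rpow_le_rpow (by linarith) (by linarith) (by norm_num)
      have h2 : (2*a) ^ ((3:ℝ)/4) = 2 ^ ((3:ℝ)/4) * p := Real.mul_rpow (by norm_num) ha0.le
      have h3 : (2:ℝ) ^ ((3:ℝ)/4) ≤ 2 := by
        calc (2:ℝ) ^ ((3:ℝ)/4) ≤ 2 ^ (1:ℝ) :=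
              Real.rpow_le_rpow_of_exponent_le (by norm_num) (by norm_num)
          _ = 2 := Real.rpow_one 2
      nlinarith [hp0.le]
    have hnum : C * (a+1) ^ ((3:ℝ)/4) / ((k:ℝ)+1) ≤ C * (2*p) / ((k:ℝ)+1) := by
      gcongr
    have haa : p * a ^ ((1:ℝ)/4) = a := by
      rw [hp, ← Real.rpow_add ha0]; norm_num
    have hqq : ((m:ℝ)+1) ^ ((1:ℝ)/4) * ((m:ℝ)+1) ^ ((1:ℝ)) = q := by
      rw [hq, ← Real.rpow_add (by linarith)]; norm_num
    have hr : ((m:ℝ)+1) ^ ((1:ℝ)/4) ≤ a ^ ((1:ℝ)/4) :=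
      Real.rpow_le_rpow (by linarith) (by simp only [ha]; linarith) (by norm_num)
    have hden : p*q ≤ a*(a+(k:ℝ)) := by
      have hm1 : ((m:ℝ)+1) ^ ((1:ℝ)) ≤ a+(k:ℝ) := by
        rw [Real.rpow_one]; simp only [ha]; linarith
      have hs0 : (0:ℝ) ≤ ((m:ℝ)+1) ^ ((1:ℝ)/4) := Real.rpow_nonneg (by linarith) _
      have h5 : ((m:ℝ)+1) ^ ((1:ℝ)/4) * ((m:ℝ)+1) ^ ((1:ℝ)) ≤ a ^ ((1:ℝ)/4) * (a+(k:ℝ)) :=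
        mul_le_mul hr hm1 (by rw [Real.rpow_one]; linarith) (Real.rpow_nonneg ha0.le _)
      rw [hqq] at h5
      calc p*q ≤ p * (a ^ ((1:ℝ)/4) * (a+(k:ℝ))) := by
            exact mul_le_mul_of_nonneg_left h5 hp0.le
        _ = a*(a+(k:ℝ)) := by rw [← mul_assoc, haa]
    have hfin : C * (a+1) ^ ((3:ℝ)/4) / ((k:ℝ)+1) / (a*(a+(k:ℝ)))
        ≤ (C * (2*p) / ((k:ℝ)+1)) / (p*q) :=
      div_le_div₀ (by positivity) hnum (by positivity) hden
    refine hfin.trans (le_of_eq ?_)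
    field_simp

lemma tsum_g1_le (k : ℕ) :
    ∑' m : ℕ, 1/(((m:ℝ)+(k:ℝ)+1)*((m:ℝ)+(k:ℝ)+2)) ≤ 1/((k:ℝ)+1) := by
  apply Real.tsum_le_of_sum_range_le (fun m => by positivity)
  intro n
  have heq : ∀ i : ℕ, 1/(((i:ℝ)+(k:ℝ)+1)*((i:ℝ)+(k:ℝ)+2))
      = (fun j : ℕ => 1/((j:ℝ)+(k:ℝ)+1)) i - (fun j : ℕ => 1/((j:ℝ)+(k:ℝ)+1)) (i+1) := by
    intro i; simp only; push_cast
    have h1 : (0:ℝ) < (i:ℝ)+(k:ℝ)+1 := by positivity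
    have h2 : (0:ℝ) < (i:ℝ)+1+(k:ℝ)+1 := by positivity
    rw [div_sub_div _ _ h1.ne' h2.ne']
    rw [show (1*((i:ℝ)+1+(k:ℝ)+1) - ((i:ℝ)+(k:ℝ)+1)*1) = 1 by ring,
      show (((i:ℝ)+(k:ℝ)+1)*((i:ℝ)+1+(k:ℝ)+1)) = (((i:ℝ)+(k:ℝ)+1)*((i:ℝ)+(k:ℝ)+2)) by ring]
  rw [Finset.sum_congr rfl (fun i _ => heq i), Finset.sum_range_sub']
  have h3 : (0:ℝ) ≤ 1/((n:ℝ)+(k:ℝ)+1) := by positivity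
  simp only [Nat.cast_zero] at *
  norm_num
  linarith

lemma sumZ : Summable (fun m : ℕ => 1/((m:ℝ)+1) ^ ((5:ℝ)/4)) := by
  have h := (Real.summable_one_div_nat_add_rpow 1 (5/4)).mpr (by norm_num)
  refine h.congr fun n => ?_
  rw [abs_of_pos (by positivity)]


/-- Let `d ≥ 2`. The tail sums `S₂(k) = Σ_{n=k}^∞ (log(n+2))^{d−2}/((n+1)(n+k+1))`
satisfy `S₂(k) = o((log(k+2))^{d−1}/(k+1))` as `k → ∞`; that is,
`((k+1)/(log(k+2))^{d−1})·S₂(k) → 0`.  (Here the tail sum is written with `n = m + k`.) -/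
theorem stmt_6 (d : ℕ) (hd : 2 ≤ d) :
    Tendsto (fun k : ℕ =>
        ((k : ℝ) + 1) / (Real.log ((k : ℝ) + 2)) ^ (d - 1) *
          ∑' m : ℕ, (Real.log ((m : ℝ) + (k : ℝ) + 2)) ^ (d - 2) /
            (((m : ℝ) + (k : ℝ) + 1) * ((m : ℝ) + 2 * (k : ℝ) + 1)))
      atTop (nhds 0) := by
  set e := d - 2 with he
  have hd1 : d - 1 = e + 1 := by omega
  simp only [hd1]
  have hZs : Summable (fun m : ℕ => 1/((m:ℝ)+1) ^ ((5:ℝ)/4)) := sumZ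
  set Z := ∑' m : ℕ, 1/((m:ℝ)+1) ^ ((5:ℝ)/4) with hZdef
  have hZ0 : 0 ≤ Z := tsum_nonneg (fun m => by positivity)
  have hlog2 : (0:ℝ) < Real.log 2 := Real.log_pos (by norm_num)
  set E : ℝ := 2*(4*(e:ℝ)+4)^e with hE
  have hE0 : (0:ℝ) < E := by positivity
  set C : ℝ := 2^e + E*Z/(Real.log 2)^e with hCdef
  apply squeeze_zero' (g := fun k : ℕ => C / Real.log ((k:ℝ)+2))
  · filter_upwards with k
    have hk0 : (0:ℝ) ≤ (k:ℝ) := Nat.cast_nonneg k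
    have hL : (0:ℝ) ≤ Real.log ((k:ℝ)+2) := Real.log_nonneg (by linarith)
    apply mul_nonneg (div_nonneg (by linarith) (pow_nonneg hL _))
    apply tsum_nonneg; intro m
    have hm0 : (0:ℝ) ≤ (m:ℝ) := Nat.cast_nonneg m
    have hlm : (0:ℝ) ≤ Real.log ((m:ℝ)+(k:ℝ)+2) := Real.log_nonneg (by linarith)
    positivity
  · filter_upwards [eventually_ge_atTop 1] with k hk
    have hk1 : (1:ℝ) ≤ (k:ℝ) := Nat.one_le_cast.mpr hk
    set L := Real.log ((k:ℝ)+2) with hLdef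
    have hLlog2 : Real.log 2 ≤ L := Real.log_le_log (by norm_num) (by linarith)
    have hL0 : (0:ℝ) < L := lt_of_lt_of_le hlog2 hLlog2
    set A : ℝ := (2*L)^e with hA
    have hA0 : (0:ℝ) ≤ A := by positivity
    -- summability of g1
    have hg1s : Summable (fun m : ℕ => 1/(((m:ℝ)+(k:ℝ)+1)*((m:ℝ)+(k:ℝ)+2))) := by
      refine hZs.of_nonneg_of_le (fun m => by positivity) (fun m => ?_)
      have hm0 : (0:ℝ) ≤ (m:ℝ) := Nat.cast_nonneg m
      have h1 : ((m:ℝ)+1) ^ ((5:ℝ)/4) ≤ ((m:ℝ)+1) ^ ((2:ℕ):ℝ) :=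
        Real.rpow_le_rpow_of_exponent_le (by linarith) (by norm_num)
      rw [Real.rpow_natCast] at h1
      have h2 : ((m:ℝ)+1)^(2:ℕ) ≤ (((m:ℝ)+(k:ℝ)+1)*((m:ℝ)+(k:ℝ)+2)) := by nlinarith
      exact one_div_le_one_div_of_le (Real.rpow_pos_of_pos (by linarith) _) (h1.trans h2)
    have hbnds : Summable (fun m : ℕ => A * (1/(((m:ℝ)+(k:ℝ)+1)*((m:ℝ)+(k:ℝ)+2)))
        + (E/((k:ℝ)+1)) * (1/((m:ℝ)+1) ^ ((5:ℝ)/4))) :=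
      (hg1s.mul_left A).add (hZs.mul_left (E/((k:ℝ)+1)))
    have htm : ∀ m : ℕ, (Real.log ((m:ℝ)+(k:ℝ)+2)) ^ e /
          (((m:ℝ)+(k:ℝ)+1)*((m:ℝ)+2*(k:ℝ)+1))
        ≤ A * (1/(((m:ℝ)+(k:ℝ)+1)*((m:ℝ)+(k:ℝ)+2)))
          + (E/((k:ℝ)+1)) * (1/((m:ℝ)+1) ^ ((5:ℝ)/4)) := by
      intro m
      have := term_le e k m hk
      calc (Real.log ((m:ℝ)+(k:ℝ)+2)) ^ e / (((m:ℝ)+(k:ℝ)+1)*((m:ℝ)+2*(k:ℝ)+1))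
          ≤ (2*Real.log ((k:ℝ)+2)) ^ e * (1/(((m:ℝ)+(k:ℝ)+1)*((m:ℝ)+(k:ℝ)+2)))
            + (2*(4*(e:ℝ)+4) ^ e/((k:ℝ)+1)) * (1/((m:ℝ)+1) ^ ((5:ℝ)/4)) := this
        _ = A * (1/(((m:ℝ)+(k:ℝ)+1)*((m:ℝ)+(k:ℝ)+2)))
            + (E/((k:ℝ)+1)) * (1/((m:ℝ)+1) ^ ((5:ℝ)/4)) := by rw [hA, hE, hLdef]
    have hts : Summable (fun m : ℕ => (Real.log ((m:ℝ)+(k:ℝ)+2)) ^ e /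
        (((m:ℝ)+(k:ℝ)+1)*((m:ℝ)+2*(k:ℝ)+1))) := by
      refine hbnds.of_nonneg_of_le (fun m => ?_) htm
      have hm0 : (0:ℝ) ≤ (m:ℝ) := Nat.cast_nonneg m
      have hlm : (0:ℝ) ≤ Real.log ((m:ℝ)+(k:ℝ)+2) := Real.log_nonneg (by linarith)
      positivity
    have h1 : ∑' m : ℕ, (Real.log ((m:ℝ)+(k:ℝ)+2)) ^ e /
          (((m:ℝ)+(k:ℝ)+1)*((m:ℝ)+2*(k:ℝ)+1))
        ≤ A * (1/((k:ℝ)+1)) + (E/((k:ℝ)+1)) * Z := by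
      calc ∑' m : ℕ, (Real.log ((m:ℝ)+(k:ℝ)+2)) ^ e /
            (((m:ℝ)+(k:ℝ)+1)*((m:ℝ)+2*(k:ℝ)+1))
          ≤ ∑' m : ℕ, (A * (1/(((m:ℝ)+(k:ℝ)+1)*((m:ℝ)+(k:ℝ)+2)))
              + (E/((k:ℝ)+1)) * (1/((m:ℝ)+1) ^ ((5:ℝ)/4))) :=
            Summable.tsum_le_tsum htm hts hbnds
        _ = A * (∑' m : ℕ, 1/(((m:ℝ)+(k:ℝ)+1)*((m:ℝ)+(k:ℝ)+2)))
            + (E/((k:ℝ)+1)) * Z := by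
            rw [Summable.tsum_add (hg1s.mul_left A) (hZs.mul_left (E/((k:ℝ)+1))),
              tsum_mul_left, tsum_mul_left]
        _ ≤ A * (1/((k:ℝ)+1)) + (E/((k:ℝ)+1)) * Z := by
            have := tsum_g1_le k
            have h2 : A * (∑' m : ℕ, 1/(((m:ℝ)+(k:ℝ)+1)*((m:ℝ)+(k:ℝ)+2))) ≤ A * (1/((k:ℝ)+1)) :=
              mul_le_mul_of_nonneg_left this hA0
            linarith
    have hS : ∑' m : ℕ, (Real.log ((m:ℝ)+(k:ℝ)+2)) ^ e /
          (((m:ℝ)+(k:ℝ)+1)*((m:ℝ)+2*(k:ℝ)+1)) ≤ (A + E*Z)/((k:ℝ)+1) := by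
      refine h1.trans (le_of_eq ?_)
      field_simp
    calc ((k:ℝ)+1) / L ^ (e+1) * ∑' m : ℕ, (Real.log ((m:ℝ)+(k:ℝ)+2)) ^ e /
          (((m:ℝ)+(k:ℝ)+1)*((m:ℝ)+2*(k:ℝ)+1))
        ≤ ((k:ℝ)+1) / L ^ (e+1) * ((A + E*Z)/((k:ℝ)+1)) :=
          mul_le_mul_of_nonneg_left hS (by positivity)
      _ = (A + E*Z)/L^(e+1) := by
          field_simp
      _ ≤ C/L := by
          rw [div_le_div_iff₀ (by positivity) hL0, hCdef, hA]
          have hpow : (Real.log 2)^e ≤ L^e := pow_le_pow_left₀ hlog2.le hLlog2 e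
          have hEZ : E*Z/(Real.log 2)^e * (Real.log 2)^e = E*Z := by
            field_simp
          have hw0 : (0:ℝ) ≤ E*Z/(Real.log 2)^e := by positivity
          have hmp : E*Z/(Real.log 2)^e * (Real.log 2)^e ≤ E*Z/(Real.log 2)^e * L^e :=
            mul_le_mul_of_nonneg_left hpow hw0
          rw [hEZ] at hmp
          have h2L : (2*L)^e = 2^e * L^e := mul_pow 2 L e
          rw [h2L, pow_succ]
          nlinarith [hL0.le, pow_nonneg hL0.le e]
  · apply Tendsto.div_atTop tendsto_const_nhds
    exact Real.tendsto_log_atTop.comp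
      (tendsto_atTop_add_const_right _ 2 tendsto_natCast_atTop_atTop)
end

section
/- Let d be a positive integer and define w_d(t) = ((1/t)·log(1/(1−t)))^d for 0 < t < 1. Then there exist constants c, C > 0 and ε₀ ∈ (0,1) such that for all 0 < ε < ε₀: c·ε² ≤ (∫_{1−ε}^1 w_d(t) dt)·(∫_{1−ε}^1 (1/w_d(t)) dt) ≤ C·ε². -/
open MeasureTheory Real Set

lemma log_pow_le_aux (d : ℕ) (hd : 0 < d) {x : ℝ} (hx : 1 ≤ x) :
    Real.log x ^ d ≤ (2 * d : ℝ) ^ d * x ^ (2⁻¹ : ℝ) := by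
  have hx0 : (0:ℝ) < x := lt_of_lt_of_le one_pos hx
  have hdne : (d:ℝ) ≠ 0 := Nat.cast_ne_zero.2 hd.ne'
  have hd' : (0:ℝ) < 2 * d := by positivity
  have h1 : Real.log x ≤ (2*d:ℝ) * x ^ (((2*d:ℝ))⁻¹) := by
    have h2 : Real.log (x ^ (((2*d:ℝ))⁻¹)) ≤ x ^ (((2*d:ℝ))⁻¹) - 1 :=
      Real.log_le_sub_one_of_pos (Real.rpow_pos_of_pos hx0 _)
    rw [Real.log_rpow hx0] at h2
    have h3 := mul_le_mul_of_nonneg_left h2 hd'.le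
    have h4 : (2*d:ℝ) * (((2*d:ℝ))⁻¹ * Real.log x) = Real.log x := by
      field_simp
    nlinarith [Real.rpow_nonneg hx0.le (((2*d:ℝ))⁻¹)]
  have hlog : 0 ≤ Real.log x := Real.log_nonneg hx
  calc Real.log x ^ d ≤ ((2*d:ℝ) * x ^ (((2*d:ℝ))⁻¹)) ^ d := pow_le_pow_left₀ hlog h1 d
    _ = (2*d:ℝ)^d * (x ^ (((2*d:ℝ))⁻¹))^d := mul_pow _ _ _
    _ = (2*d:ℝ)^d * x ^ (2⁻¹:ℝ) := by
        congr 1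
        rw [← Real.rpow_natCast (x ^ (((2*d:ℝ))⁻¹)) d, ← Real.rpow_mul hx0.le]
        congr 1
        field_simp

lemma add_pow_le_aux {a b : ℝ} (ha : 0 ≤ a) (hb : 0 ≤ b) (d : ℕ) :
    (a + b) ^ d ≤ 2 ^ d * (a ^ d + b ^ d) := by
  have h1 : a + b ≤ 2 * max a b := by
    rcases le_total a b with h | h
    · simp [max_eq_right h]; linarith
    · simp [max_eq_left h]; linarith
  calc (a+b)^d ≤ (2 * max a b)^d := pow_le_pow_left₀ (by positivity) h1 d
    _ = 2^d * (max a b)^d := mul_pow _ _ _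
    _ ≤ 2^d * (a^d + b^d) := by
        gcongr
        rcases le_total a b with h | h
        · simp [max_eq_right h]; positivity
        · simp [max_eq_left h]; positivity

/-- `w_d(t) = ((1/t)·log(1/(1−t)))^d` for `0 < t < 1`. -/
noncomputable def wd (d : ℕ) (t : ℝ) : ℝ := (1 / t * Real.log (1 / (1 - t))) ^ d

set_option maxHeartbeats 1000000 in
/-- Let `d` be a positive integer. Then
`(∫_{1−ε}^1 w_d(t) dt)·(∫_{1−ε}^1 (1/w_d(t)) dt) ≈ ε²` as `ε → 0`. -/
theorem stmt_7 (d : ℕ) (hd : 0 < d) :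
    ∃ c C ε₀ : ℝ, 0 < c ∧ 0 < C ∧ 0 < ε₀ ∧ ε₀ < 1 ∧ ∀ ε : ℝ, 0 < ε → ε < ε₀ →
      c * ε ^ 2 ≤ (∫ t in Set.Ioo (1 - ε) 1, wd d t) * (∫ t in Set.Ioo (1 - ε) 1, 1 / wd d t) ∧
      (∫ t in Set.Ioo (1 - ε) 1, wd d t) * (∫ t in Set.Ioo (1 - ε) 1, 1 / wd d t) ≤
        C * ε ^ 2 := by
  have hlog2 : (0:ℝ) < Real.log 2 := Real.log_pos (by norm_num)
  set C : ℝ := 4 ^ d * (1 + 2 * (2 * d : ℝ) ^ d / Real.log 2 ^ d) with hC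
  have hCpos : 0 < C := by positivity
  refine ⟨1, C, 1/2, one_pos, hCpos, by norm_num, by norm_num, ?_⟩
  intro ε hε hε2
  set s : Set ℝ := Set.Ioo (1 - ε) 1 with hs
  have hs_meas : MeasurableSet s := measurableSet_Ioo
  have hε1 : ε < 1 := by linarith
  have hvol : volume s = ENNReal.ofReal ε := by
    rw [hs, Real.volume_Ioo]; ring_nf
  have hvolr : (volume s).toReal = ε := by
    rw [hvol, ENNReal.toReal_ofReal hε.le]
  have hvolfin : volume s < ⊤ := by rw [hvol]; exact ENNReal.ofReal_lt_top
  set L : ℝ := Real.log (1/ε) with hL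
  have hL2 : Real.log 2 ≤ L := by
    rw [hL]
    apply Real.log_le_log (by norm_num)
    rw [le_div_iff₀ hε]; linarith
  have hLpos : 0 < L := lt_of_lt_of_le hlog2 hL2
  -- pointwise facts
  have hmem : ∀ t ∈ s, 1/2 < t ∧ t < 1 ∧ 0 < 1 - t ∧ 1 - t < ε := by
    intro t ht
    obtain ⟨h1, h2⟩ := ht
    exact ⟨by linarith, h2, by linarith, by linarith⟩
  have hlogt : ∀ t ∈ s, L ≤ Real.log (1/(1-t)) := by
    intro t ht
    obtain ⟨_, _, h3, h4⟩ := hmem t ht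
    apply Real.log_le_log (by positivity)
    rw [div_le_div_iff₀ hε h3]
    linarith
  have hwpos : ∀ t ∈ s, 0 < wd d t := by
    intro t ht
    obtain ⟨h1, h2, h3, h4⟩ := hmem t ht
    have : 0 < Real.log (1/(1-t)) := lt_of_lt_of_le hLpos (hlogt t ht)
    have ht0 : 0 < t := by linarith
    unfold wd
    positivity
  have hw_low : ∀ t ∈ s, L ^ d ≤ wd d t := by
    intro t ht
    obtain ⟨h1, h2, h3, h4⟩ := hmem t ht
    have ht0 : 0 < t := by linarith
    unfold wd
    apply pow_le_pow_left₀ hLpos.le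
    calc L ≤ Real.log (1/(1-t)) := hlogt t ht
      _ = 1 * Real.log (1/(1-t)) := (one_mul _).symm
      _ ≤ 1/t * Real.log (1/(1-t)) := by
          apply mul_le_mul_of_nonneg_right _ (le_of_lt (lt_of_lt_of_le hLpos (hlogt t ht)))
          rw [le_div_iff₀ ht0]; linarith
  -- measurability
  have hmeasw : Measurable (wd d) := by
    unfold wd
    exact ((measurable_const.div measurable_id).mul
      (Real.measurable_log.comp (measurable_const.div (measurable_const.sub measurable_id)))).pow_const d
  have hmeasw' : Measurable (fun t => 1 / wd d t) := by
    exact measurable_const.div hmeasw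
  -- integrability of the singular comparison function
  have hint_r : IntegrableOn (fun t : ℝ => (1 - t) ^ (-(2⁻¹:ℝ))) s volume := by
    have h0 : IntervalIntegrable (fun x : ℝ => x ^ (-(2⁻¹:ℝ))) volume 0 ε :=
      intervalIntegral.intervalIntegrable_rpow' (by norm_num)
    have h1 := h0.comp_sub_left 1
    simp only [sub_zero] at h1
    have h2 : IntervalIntegrable (fun x : ℝ => (1 - x) ^ (-(2⁻¹:ℝ))) volume (1 - ε) 1 := h1.symm
    have h3 := h2.def'
    apply h3.mono_set
    rw [Set.uIoc_of_le (by linarith : (1:ℝ) - ε ≤ 1)]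
    exact Set.Ioo_subset_Ioc_self
  -- value of its integral
  have hint_r_val : ∫ t in s, (1 - t) ^ (-(2⁻¹:ℝ)) = 2 * ε ^ (2⁻¹:ℝ) := by
    rw [hs, ← MeasureTheory.integral_Ioc_eq_integral_Ioo,
      ← intervalIntegral.integral_of_le (by linarith : (1:ℝ) - ε ≤ 1)]
    have := intervalIntegral.integral_comp_sub_left (a := 1 - ε) (b := 1)
      (fun x : ℝ => x ^ (-(2⁻¹:ℝ))) 1
    simp only [sub_self, sub_sub_cancel] at this
    rw [this, integral_rpow (Or.inl (by norm_num))]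
    rw [Real.zero_rpow (by norm_num)]
    norm_num
    ring
  -- the dominating function g
  set g : ℝ → ℝ :=
    fun t => 4^d * (L^d + (2*d:ℝ)^d * (ε ^ (2⁻¹:ℝ) * (1-t) ^ (-(2⁻¹:ℝ)))) with hg
  have hint_g : IntegrableOn g s volume := by
    apply Integrable.const_mul
    exact (integrableOn_const hvolfin.ne).add
      ((hint_r.const_mul (ε ^ (2⁻¹:ℝ))).const_mul ((2*d:ℝ)^d))
  have hw_up : ∀ t ∈ s, wd d t ≤ g t := by
    intro t ht
    obtain ⟨h1, h2, h3, h4⟩ := hmem t ht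
    have ht0 : 0 < t := by linarith
    have hlpos : 0 < Real.log (1/(1-t)) := lt_of_lt_of_le hLpos (hlogt t ht)
    have hstep1 : wd d t ≤ 2^d * Real.log (1/(1-t)) ^ d := by
      unfold wd
      rw [mul_pow]
      apply mul_le_mul_of_nonneg_right _ (by positivity)
      apply pow_le_pow_left₀ (by positivity)
      rw [div_le_iff₀ ht0]; linarith
    have hsplit : Real.log (1/(1-t)) = L + Real.log (ε/(1-t)) := by
      rw [hL, ← Real.log_mul (by positivity) (by positivity)]
      congr 1
      field_simp
    have hb : 0 ≤ Real.log (ε/(1-t)) := Real.log_nonneg (by rw [le_div_iff₀ h3]; linarith)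
    have hstep3 : Real.log (ε/(1-t)) ^ d ≤ (2*d:ℝ)^d * (ε ^ (2⁻¹:ℝ) * (1-t) ^ (-(2⁻¹:ℝ))) := by
      have h5 : (1:ℝ) ≤ ε/(1-t) := by rw [le_div_iff₀ h3]; linarith
      calc Real.log (ε/(1-t)) ^ d ≤ (2*d:ℝ)^d * (ε/(1-t)) ^ (2⁻¹:ℝ) := log_pow_le_aux d hd h5
        _ = (2*d:ℝ)^d * (ε ^ (2⁻¹:ℝ) * (1-t) ^ (-(2⁻¹:ℝ))) := by
            rw [Real.div_rpow hε.le h3.le, Real.rpow_neg h3.le, div_eq_mul_inv]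
    calc wd d t ≤ 2^d * Real.log (1/(1-t)) ^ d := hstep1
      _ ≤ 2^d * (2^d * (L^d + Real.log (ε/(1-t)) ^ d)) := by
          apply mul_le_mul_of_nonneg_left _ (by positivity)
          rw [hsplit]; exact add_pow_le_aux hLpos.le hb d
      _ ≤ 2^d * (2^d * (L^d + (2*d:ℝ)^d * (ε ^ (2⁻¹:ℝ) * (1-t) ^ (-(2⁻¹:ℝ))))) := by
          gcongr
      _ = g t := by
          rw [hg, ← mul_assoc, ← mul_pow]
          norm_num
  -- integrability of wd and 1/wd
  have hintw : IntegrableOn (wd d) s volume := by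
    apply Integrable.mono' hint_g hmeasw.aestronglyMeasurable.restrict
    rw [ae_restrict_iff' hs_meas]
    filter_upwards with t ht
    rw [Real.norm_eq_abs, abs_of_pos (hwpos t ht)]
    exact hw_up t ht
  have hbound' : ∀ t ∈ s, ‖1 / wd d t‖ ≤ (L^d)⁻¹ := by
    intro t ht
    have hw := hwpos t ht
    rw [Real.norm_eq_abs, abs_of_pos (by positivity), ← one_div (L^d)]
    exact one_div_le_one_div_of_le (by positivity) (hw_low t ht)
  have hintB : IntegrableOn (fun t => 1/wd d t) s volume := by
    apply Measure.integrableOn_of_bounded hvolfin.ne hmeasw'.aestronglyMeasurable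
    rw [ae_restrict_iff' hs_meas]
    filter_upwards with t ht
    exact hbound' t ht
  set A : ℝ := ∫ t in s, wd d t with hA
  set B : ℝ := ∫ t in s, 1 / wd d t with hB
  have hA_nonneg : 0 ≤ A := setIntegral_nonneg hs_meas (fun t ht => (hwpos t ht).le)
  have hB_nonneg : 0 ≤ B := setIntegral_nonneg hs_meas (fun t ht => by
    have := hwpos t ht; positivity)
  have hA_low : ε * L^d ≤ A := by
    have h := setIntegral_mono_on (μ := volume) (s := s) (f := fun _ => L^d) (g := wd d)
      (integrableOn_const hvolfin.ne) hintw hs_meas (fun t ht => hw_low t ht)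
    rwa [setIntegral_const, measureReal_def, hvolr, smul_eq_mul] at h
  have hApos : 0 < A := lt_of_lt_of_le (by positivity) hA_low
  have hBpos : 0 < B := by
    rw [hB, setIntegral_pos_iff_support_of_nonneg_ae ?_ hintB]
    · have hsub : s ⊆ Function.support (fun t => 1 / wd d t) := by
        intro t ht
        have := hwpos t ht
        simp only [Function.mem_support]
        positivity
      rw [Set.inter_eq_right.2 hsub, hvol]
      exact ENNReal.ofReal_pos.2 hε
    · filter_upwards [ae_restrict_mem hs_meas] with t ht
      have := hwpos t ht
      positivity
  -- upper bound for B
  have hB_up : B ≤ (L^d)⁻¹ * ε := by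
    have h := norm_setIntegral_le_of_norm_le_const hvolfin hbound'
    rw [measureReal_def, hvolr] at h
    calc B ≤ |B| := le_abs_self _
      _ ≤ (L^d)⁻¹ * ε := by rwa [Real.norm_eq_abs] at h
  -- upper bound for A
  have hhalf : ε ^ (2⁻¹:ℝ) * (2 * ε ^ (2⁻¹:ℝ)) = 2 * ε := by
    rw [show ε ^ (2⁻¹:ℝ) * (2 * ε ^ (2⁻¹:ℝ)) = 2 * (ε ^ (2⁻¹:ℝ) * ε ^ (2⁻¹:ℝ)) from by ring,
      ← Real.rpow_add hε]
    norm_num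
  have hint_g_val : ∫ t in s, g t = 4^d * (ε * L^d + (2*d:ℝ)^d * (2 * ε)) := by
    rw [hg]
    rw [integral_const_mul _ _]
    rw [integral_add (integrableOn_const (C := L^d) hvolfin.ne)
      ((hint_r.const_mul (ε ^ (2⁻¹:ℝ))).const_mul ((2*d:ℝ)^d))]
    rw [setIntegral_const, measureReal_def, hvolr, smul_eq_mul, integral_const_mul _ _,
      integral_const_mul _ _, hint_r_val, hhalf]
  have hA_up : A ≤ C * (ε * L^d) := by
    have h1 : A ≤ ∫ t in s, g t := setIntegral_mono_on hintw hint_g hs_meas hw_up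
    rw [hint_g_val] at h1
    have hpow : Real.log 2 ^ d ≤ L^d := pow_le_pow_left₀ hlog2.le hL2 d
    have hdiv : 1 ≤ L^d / Real.log 2 ^ d := (one_le_div (by positivity)).2 hpow
    have h6 : (2*d:ℝ)^d * (2*ε) ≤ 2*(2*d:ℝ)^d / Real.log 2 ^ d * (ε * L^d) := by
      calc (2*d:ℝ)^d * (2*ε) = (2*(2*d:ℝ)^d*ε) * 1 := by ring
        _ ≤ (2*(2*d:ℝ)^d*ε) * (L^d / Real.log 2 ^ d) := by
            apply mul_le_mul_of_nonneg_left hdiv (by positivity)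
        _ = 2*(2*d:ℝ)^d / Real.log 2 ^ d * (ε * L^d) := by
            field_simp
    have h7 : (4:ℝ)^d * (ε * L^d + (2*d:ℝ)^d * (2*ε)) ≤ C * (ε * L^d) := by
      rw [hC]
      have h8 : (4:ℝ)^d * (1 + 2*(2*d:ℝ)^d / Real.log 2 ^ d) * (ε * L^d)
          = 4^d * (ε * L^d + 2*(2*d:ℝ)^d / Real.log 2 ^ d * (ε * L^d)) := by ring
      rw [h8]
      apply mul_le_mul_of_nonneg_left _ (by positivity)
      linarith
    linarith
  constructor
  · -- lower bound via AM–GM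
    set l : ℝ := Real.sqrt (B/A) with hl
    have hlpos : 0 < l := Real.sqrt_pos.2 (div_pos hBpos hApos)
    have hpt : ∀ t ∈ s, (2:ℝ) ≤ l * wd d t + l⁻¹ * (1 / wd d t) := by
      intro t ht
      have hw := hwpos t ht
      have hx : 0 < l * wd d t := by positivity
      have heq : l⁻¹ * (1 / wd d t) = (l * wd d t)⁻¹ := by
        field_simp
      rw [heq]
      nlinarith [sq_nonneg (l * wd d t - 1), mul_inv_cancel₀ hx.ne']
    have hintsum : ∫ t in s, (l * wd d t + l⁻¹ * (1 / wd d t)) = l * A + l⁻¹ * B := by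
      rw [integral_add (hintw.const_mul l) (hintB.const_mul l⁻¹),
        integral_const_mul _ _, integral_const_mul _ _]
    have h2e : 2 * ε ≤ l * A + l⁻¹ * B := by
      have h := setIntegral_mono_on (μ := volume) (s := s) (f := fun _ => (2:ℝ))
        (g := fun t => l * wd d t + l⁻¹ * (1 / wd d t))
        (integrableOn_const hvolfin.ne)
        ((hintw.const_mul l).add (hintB.const_mul l⁻¹)) hs_meas hpt
      rwa [setIntegral_const, measureReal_def, hvolr, smul_eq_mul, hintsum, mul_comm ε 2] at h
    have hAne : A ≠ 0 := hApos.ne'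
    have hBne : B ≠ 0 := hBpos.ne'
    have hlA : l * A = Real.sqrt (A*B) := by
      calc l * A = Real.sqrt (B/A) * Real.sqrt (A^2) := by rw [hl, Real.sqrt_sq hApos.le]
        _ = Real.sqrt (B/A * A^2) := (Real.sqrt_mul (by positivity) _).symm
        _ = Real.sqrt (A*B) := by rw [show B/A*A^2 = A*B from by rw [div_mul_eq_mul_div]; rw [div_eq_iff hAne]; ring]
    have hlB : l⁻¹ * B = Real.sqrt (A*B) := by
      calc l⁻¹ * B = Real.sqrt ((B/A)⁻¹) * Real.sqrt (B^2) := by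
            rw [hl, Real.sqrt_inv, Real.sqrt_sq hBpos.le]
        _ = Real.sqrt ((B/A)⁻¹ * B^2) := (Real.sqrt_mul (by positivity) _).symm
        _ = Real.sqrt (A*B) := by rw [show (B/A)⁻¹*B^2 = A*B from by rw [inv_div, div_mul_eq_mul_div, div_eq_iff hBne]; ring]
    have h9 : ε ≤ Real.sqrt (A*B) := by
      rw [hlA, hlB] at h2e; linarith
    have h10 : ε^2 ≤ Real.sqrt (A*B)^2 := pow_le_pow_left₀ hε.le h9 2
    rw [Real.sq_sqrt (mul_nonneg hA_nonneg hB_nonneg)] at h10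
    linarith
  · -- upper bound
    calc A * B ≤ (C * (ε * L^d)) * ((L^d)⁻¹ * ε) :=
        mul_le_mul hA_up hB_up hB_nonneg (by positivity)
      _ = C * ε^2 * (L^d * (L^d)⁻¹) := by ring
      _ = C * ε^2 := by rw [mul_inv_cancel₀ (by positivity : (L:ℝ)^d ≠ 0), mul_one]
end

section
/- Let d be a positive integer and define w_d(t) = ((1/t)·log(1/(1−t)))^d for 0 < t < 1. Then there exists a constant c > 0 such that for all 0 < h ≤ 1: (∫_{1−h}^1 w_d(t) dt)·(∫_{1−h}^1 (1/w_d(t)) dt) ≤ c·h². Consequently the radial weight W_d(z) = w_d(|z|²) on the unit disc satisfies the Bekollé–Bonami (B2) condition: there is c > 0 such that for every Carleson square S_h(e^{is}) = {re^{it} : 1−h < r < 1, |t−s| < h} with 0 < h ≤ 1, (∫_{S_h(e^{is})} W_d dA)·(∫_{S_h(e^{is})} (1/W_d) dA) ≤ c·h⁴. -/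
open MeasureTheory Set Complex

/-- The radial weight `W_d(z) = w_d(|z|²)` for `z ≠ 0`, `W_d(0) = 1`. -/
noncomputable def Wd (d : ℕ) (z : ℂ) : ℝ := if z = 0 then 1 else wd d (‖z‖ ^ 2)

/-- The Carleson square `S_h(e^{is}) = {re^{it} : 1−h < r < 1, |t−s| < h}`. -/
noncomputable def carlesonSquare (h s : ℝ) : Set ℂ :=
  (fun p : ℝ × ℝ => (p.1 : ℂ) * Complex.exp (p.2 * Complex.I)) ''
    (Set.Ioo (1 - h) 1 ×ˢ Set.Ioo (s - h) (s + h))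


lemma log_lb {t : ℝ} (h0 : 0 < t) (h1 : t < 1) : t ≤ Real.log (1 / (1 - t)) := by
  rw [one_div, Real.log_inv]
  have := Real.log_le_sub_one_of_pos (by linarith : (0:ℝ) < 1 - t)
  linarith

lemma log_ub {t : ℝ} (h0 : 0 < t) (h1 : t < 1) : Real.log (1 / (1 - t)) ≤ t / (1 - t) := by
  have ht : (0:ℝ) < 1 - t := by linarith
  have := Real.log_le_sub_one_of_pos (by positivity : (0:ℝ) < 1 / (1 - t))
  have e : 1 / (1 - t) - 1 = t / (1 - t) := by field_simp; ring
  linarith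


lemma base_lb' {t : ℝ} (h0 : 0 < t) (h1 : t < 1) : 1 ≤ 1 / t * Real.log (1 / (1 - t)) := by
  have := log_lb h0 h1
  rw [one_div, ← div_eq_inv_mul, le_div_iff₀ h0, one_mul]
  exact this

lemma base_ub {t : ℝ} (h0 : 0 < t) (h1 : t < 1) :
    1 / t * Real.log (1 / (1 - t)) ≤ 2 * (1 + Real.log (1 / (1 - t))) := by
  have ht : (0:ℝ) < 1 - t := by linarith
  have hlog0 : 0 ≤ Real.log (1 / (1 - t)) := by
    refine Real.log_nonneg ?_
    rw [le_div_iff₀ ht]; linarith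
  rcases le_or_gt t (1/2) with hc | hc
  · have h2 : Real.log (1 / (1 - t)) ≤ t / (1 - t) := log_ub h0 h1
    have h3 : t / (1 - t) ≤ 2 * t := by
      rw [div_le_iff₀ ht]; nlinarith
    have : 1 / t * Real.log (1 / (1 - t)) ≤ 1 / t * (2 * t) := by
      apply mul_le_mul_of_nonneg_left (h2.trans h3) (by positivity)
    calc 1 / t * Real.log (1 / (1 - t)) ≤ 1 / t * (2 * t) := this
      _ = 2 := by field_simp
      _ ≤ 2 * (1 + Real.log (1 / (1 - t))) := by nlinarith
  · have h4 : 1 / t ≤ 2 := by rw [div_le_iff₀ h0]; linarith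
    calc 1 / t * Real.log (1 / (1 - t)) ≤ 2 * Real.log (1 / (1 - t)) :=
        mul_le_mul_of_nonneg_right h4 hlog0
      _ ≤ 2 * (1 + Real.log (1 / (1 - t))) := by nlinarith

-- (x+y)^d ≤ 2^d (x^d + y^d)
lemma add_pow_le2 {x y : ℝ} (hx : 0 ≤ x) (hy : 0 ≤ y) (d : ℕ) :
    (x + y) ^ d ≤ 2 ^ d * (x ^ d + y ^ d) := by
  have h1 : x + y ≤ 2 * max x y := by
    rcases max_cases x y with ⟨he, _⟩ | ⟨he, _⟩ <;> rw [he] <;> linarith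
  calc (x + y) ^ d ≤ (2 * max x y) ^ d :=
        pow_le_pow_left₀ (by positivity) h1 d
    _ = 2 ^ d * (max x y) ^ d := by rw [mul_pow]
    _ ≤ 2 ^ d * (x ^ d + y ^ d) := by
        apply mul_le_mul_of_nonneg_left _ (by positivity)
        rcases max_cases x y with ⟨he, _⟩ | ⟨he, _⟩ <;> rw [he] <;> nlinarith [pow_nonneg hx d, pow_nonneg hy d]

-- log x ≤ 2d * x^(1/(2d)), and (log x)^d ≤ (2d)^d * x^(1/2) for x ≥ 1
lemma log_pow_le {x : ℝ} (hx : 1 ≤ x) {d : ℕ} (hd : 0 < d) :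
    (Real.log x) ^ d ≤ (2 * d) ^ d * x ^ ((1:ℝ)/2) := by
  have hx0 : (0:ℝ) < x := lt_of_lt_of_le one_pos hx
  have hd0 : (0:ℝ) < 2 * d := by positivity
  have key : Real.log x ≤ 2 * d * x ^ ((1:ℝ)/(2*d)) := by
    have h1 : Real.log (x ^ ((1:ℝ)/(2*d))) = (1/(2*d)) * Real.log x := Real.log_rpow hx0 _
    have h2 : Real.log (x ^ ((1:ℝ)/(2*d))) ≤ x ^ ((1:ℝ)/(2*d)) := by
      have := Real.log_le_sub_one_of_pos (Real.rpow_pos_of_pos hx0 ((1:ℝ)/(2*d)))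
      linarith
    rw [h1] at h2
    calc Real.log x = 2 * d * ((1/(2*d)) * Real.log x) := by field_simp
      _ ≤ 2 * d * x ^ ((1:ℝ)/(2*d)) := by
          apply mul_le_mul_of_nonneg_left h2 (by positivity)
  have hlog0 : 0 ≤ Real.log x := Real.log_nonneg hx
  calc (Real.log x) ^ d ≤ (2 * d * x ^ ((1:ℝ)/(2*d))) ^ d :=
        pow_le_pow_left₀ hlog0 key d
    _ = (2*d)^d * (x ^ ((1:ℝ)/(2*d)))^d := by rw [mul_pow]
    _ = (2*d)^d * x ^ ((1:ℝ)/2) := by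
        rw [← Real.rpow_natCast (x ^ ((1:ℝ)/(2*d))) d, ← Real.rpow_mul hx0.le]
        congr 1
        have hdne : (d:ℝ) ≠ 0 := Nat.cast_ne_zero.2 hd.ne'
        field_simp

lemma sqrt_int_eq {h : ℝ} (hh : 0 < h) :
    ∫ t in Ioo (1-h) 1, (h / (1-t)) ^ ((1:ℝ)/2) = 2 * h := by
  have hle : 1 - h ≤ 1 := by linarith
  have e1 : ∫ t in Ioo (1-h) 1, (h / (1-t)) ^ ((1:ℝ)/2)
      = ∫ t in (1-h)..1, (h / (1-t)) ^ ((1:ℝ)/2) := by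
    rw [intervalIntegral.integral_of_le hle, integral_Ioc_eq_integral_Ioo]
  have e2 : (∫ t in (1-h)..1, (h / (1-t)) ^ ((1:ℝ)/2))
      = ∫ x in (1-(1:ℝ))..(1-(1-h)), (h / x) ^ ((1:ℝ)/2) :=
    intervalIntegral.integral_comp_sub_left (fun x => (h / x) ^ ((1:ℝ)/2)) 1
  have e3 : ∀ x ∈ uIcc (1-(1:ℝ)) (1-(1-h)), (h / x) ^ ((1:ℝ)/2) = h ^ ((1:ℝ)/2) * x ^ (-((1:ℝ)/2)) := by
    intro x hx
    have h0 : (1:ℝ)-1 = 0 := by ring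
    rw [h0, uIcc_of_le (by linarith)] at hx
    rcases eq_or_lt_of_le hx.1 with rfl | hx0
    · simp [Real.zero_rpow]
    · rw [Real.div_rpow hh.le hx0.le, Real.rpow_neg hx0.le, div_eq_mul_inv]
  have e4 : (∫ x in (1-(1:ℝ))..(1-(1-h)), (h / x) ^ ((1:ℝ)/2))
      = ∫ x in (1-(1:ℝ))..(1-(1-h)), h ^ ((1:ℝ)/2) * x ^ (-((1:ℝ)/2)) :=
    intervalIntegral.integral_congr e3
  rw [e1, e2, e4, intervalIntegral.integral_const_mul]
  have e5 : (∫ x in (1-(1:ℝ))..(1-(1-h)), x ^ (-((1:ℝ)/2)))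
      = ((1-(1-h)) ^ (-((1:ℝ)/2) + 1) - (1-(1:ℝ)) ^ (-((1:ℝ)/2) + 1)) / (-((1:ℝ)/2) + 1) := by
    apply integral_rpow
    left; norm_num
  rw [e5]
  have hsimp : (1:ℝ)-(1-h) = h := by ring
  have h11 : (1:ℝ)-1 = 0 := by ring
  rw [hsimp, h11]
  rw [Real.zero_rpow (by norm_num)]
  have this1 : h ^ (-((1:ℝ)/2) + 1) = h ^ ((1:ℝ)/2) := by norm_num
  rw [this1, sub_zero]
  have hx : h ^ ((1:ℝ)/2) * (h ^ ((1:ℝ)/2)) = h := by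
    rw [← Real.rpow_add hh]; norm_num
  have this2 : (h ^ ((1:ℝ)/2))/(-((1:ℝ)/2)+1) = 2 * h ^((1:ℝ)/2) := by
    rw [div_eq_iff (by norm_num)]; ring
  rw [this2]
  linear_combination (2:ℝ) * hx

lemma sqrt_integrable {h : ℝ} (hh : 0 < h) (h1 : h ≤ 1) :
    IntegrableOn (fun t => (h / (1-t)) ^ ((1:ℝ)/2)) (Ioo (1-h) 1) := by
  have base : IntegrableOn (fun x : ℝ => x ^ (-((1:ℝ)/2))) (Ioo 0 h) := by
    have := intervalIntegral.intervalIntegrable_rpow' (a := 0) (b := h) (r := -(1/2)) (by norm_num)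
    rw [intervalIntegrable_iff, uIoc_of_le hh.le] at this
    exact this.mono_set Ioo_subset_Ioc_self
  have base2 : IntegrableOn (fun x : ℝ => (h / x) ^ ((1:ℝ)/2)) (Ioo 0 h) := by
    refine IntegrableOn.congr_fun (base.const_mul (h ^ ((1:ℝ)/2))) ?_ measurableSet_Ioo
    intro x hx
    show h ^ ((1:ℝ)/2) * x ^ (-((1:ℝ)/2)) = (h / x) ^ ((1:ℝ)/2)
    rw [Real.div_rpow hh.le hx.1.le, Real.rpow_neg hx.1.le]
    ring
  have mp : MeasurePreserving (fun t : ℝ => 1 - t) volume volume := by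
    have := (measurePreserving_add_right (volume : Measure ℝ) 1).comp
      (Measure.measurePreserving_neg (volume : Measure ℝ))
    simpa [Function.comp_def, sub_eq_neg_add] using this
  have hpre : (fun t : ℝ => 1 - t) ⁻¹' (Ioo 0 h) = Ioo (1-h) 1 := by
    ext t
    simp only [mem_preimage, mem_Ioo]
    constructor <;> intro ⟨a, b⟩ <;> constructor <;> linarith
  have emb : MeasurableEmbedding (fun t : ℝ => 1 - t) :=
    (continuous_const.sub continuous_id).measurableEmbedding
      (fun a b hab => by dsimp at hab; linarith)
  have := (mp.integrableOn_comp_preimage emb).2 base2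
  rw [hpre] at this
  exact this

lemma polar_eq (p : ℝ × ℝ) :
    (p.1 : ℂ) * Complex.exp (p.2 * Complex.I)
      = Complex.measurableEquivRealProd.symm (polarCoord.symm p) := by
  have h1 : polarCoord.symm p = (p.1 * Real.cos p.2, p.1 * Real.sin p.2) := rfl
  have h2 : Complex.measurableEquivRealProd.symm (p.1 * Real.cos p.2, p.1 * Real.sin p.2)
      = Complex.mk (p.1 * Real.cos p.2) (p.1 * Real.sin p.2) := rfl
  rw [h1, h2, Complex.exp_mul_I]
  apply Complex.ext <;>
    simp [Complex.cos_ofReal_re, Complex.sin_ofReal_re]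

lemma polar_injOn (h s : ℝ) (hh : 0 < h) (h1 : h ≤ 1) :
    InjOn polarCoord.symm (Ioo (1-h) 1 ×ˢ Ioo (s-h) (s+h)) := by
  rintro ⟨r, a⟩ ⟨hr, ha⟩ ⟨ρ, b⟩ ⟨hρ, hb⟩ heq
  simp only [mem_Ioo] at hr ha hρ hb
  have hr0 : 0 < r := by rcases hr with ⟨x1, x2⟩; linarith
  have hρ0 : 0 < ρ := by rcases hρ with ⟨x1, x2⟩; linarith
  have heq' : (r * Real.cos a, r * Real.sin a) = (ρ * Real.cos b, ρ * Real.sin b) := heq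
  have e1 : r * Real.cos a = ρ * Real.cos b := congrArg Prod.fst heq'
  have e2 : r * Real.sin a = ρ * Real.sin b := congrArg Prod.snd heq'
  have c1 := Real.sin_sq_add_cos_sq a
  have c2 := Real.sin_sq_add_cos_sq b
  have hsq : r^2 = ρ^2 := by
    linear_combination (r*Real.cos a + ρ*Real.cos b)*e1 + (r*Real.sin a + ρ*Real.sin b)*e2
      - r^2*c1 + ρ^2*c2
  have hrρ : r = ρ := by
    rw [← Real.sqrt_sq hr0.le, hsq, Real.sqrt_sq hρ0.le]
  subst hrρ
  have hc : Real.cos a = Real.cos b := mul_left_cancel₀ hr0.ne' e1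
  have hs : Real.sin a = Real.sin b := mul_left_cancel₀ hr0.ne' e2
  have hexp : Complex.exp (a * Complex.I) = Complex.exp (b * Complex.I) := by
    rw [Complex.exp_mul_I, Complex.exp_mul_I, ← Complex.ofReal_cos, ← Complex.ofReal_cos,
      ← Complex.ofReal_sin, ← Complex.ofReal_sin, hc, hs]
  obtain ⟨n, hn⟩ := Complex.exp_eq_exp_iff_exists_int.1 hexp
  have hab : a = b + n * (2 * Real.pi) := by
    have := congrArg Complex.im hn
    simpa using this
  have habs : |a - b| < 2 * h := by
    rw [abs_sub_lt_iff]
    constructor <;> linarith [ha.1, ha.2, hb.1, hb.2]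
  have hn0 : n = 0 := by
    by_contra hne
    have h1n : (1:ℝ) ≤ |(n:ℝ)| := by exact_mod_cast Int.one_le_abs hne
    have hpi := Real.pi_gt_three
    have : 2 * Real.pi ≤ |a - b| := by
      rw [hab]
      have h2pi : |2 * Real.pi| = 2 * Real.pi := abs_of_pos (by linarith)
      have habsmul : |(n:ℝ) * (2 * Real.pi)| = |(n:ℝ)| * (2 * Real.pi) := by
        rw [abs_mul, h2pi]
      simp only [add_sub_cancel_left]
      rw [habsmul]
      nlinarith
    linarith
  subst hn0
  have : a = b := by push_cast at hab; linarith
  simp [this]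





lemma sq_subst (g : ℝ → ℝ) (h : ℝ) (hh : 0 < h) (h1 : h ≤ 1) :
    ∫ t in Ioo ((1-h)^2) 1, g t = 2 * ∫ r in Ioo (1-h) 1, r * g (r^2) := by
  have h0 : (0:ℝ) ≤ 1 - h := by linarith
  have himg : (fun r : ℝ => r^2) '' Ioo (1-h) 1 = Ioo ((1-h)^2) 1 := by
    ext x
    constructor
    · rintro ⟨r, hr, rfl⟩
      refine mem_Ioo.2 ⟨?_, ?_⟩
      · exact pow_lt_pow_left₀ hr.1 h0 (by norm_num)
      · show r^2 < 1
        nlinarith [hr.1, hr.2]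
    · rintro ⟨hx1, hx2⟩
      have hx0 : 0 < x := lt_of_le_of_lt (by positivity) hx1
      refine ⟨Real.sqrt x, ⟨?_, ?_⟩, Real.sq_sqrt hx0.le⟩
      · calc 1 - h = Real.sqrt ((1-h)^2) := (Real.sqrt_sq h0).symm
          _ < Real.sqrt x := Real.sqrt_lt_sqrt (by positivity) hx1
      · rw [show (1:ℝ) = Real.sqrt 1 by simp]
        exact Real.sqrt_lt_sqrt hx0.le (by linarith)
  have hinj : InjOn (fun r : ℝ => r^2) (Ioo (1-h) 1) := by
    intro a ha b hb hab
    have ha0 : 0 < a := lt_of_le_of_lt h0 ha.1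
    have hb0 : 0 < b := lt_of_le_of_lt h0 hb.1
    have : a^2 = b^2 := hab
    rw [← Real.sqrt_sq ha0.le, this, Real.sqrt_sq hb0.le]
  rw [← himg, integral_image_eq_integral_abs_deriv_smul measurableSet_Ioo
      (fun x _ => (hasDerivAt_pow 2 x).hasDerivWithinAt) hinj g]
  rw [← integral_const_mul]
  apply setIntegral_congr_fun measurableSet_Ioo
  intro x hx
  have hx0 : 0 < x := lt_of_le_of_lt h0 hx.1
  norm_num
  rw [abs_of_pos hx0]
  ring

lemma carleson_integral (g : ℝ → ℝ) (G : ℂ → ℝ)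
    (hG : ∀ z : ℂ, z ≠ 0 → G z = g (‖z‖ ^ 2))
    (h s : ℝ) (hh : 0 < h) (h1 : h ≤ 1) :
    ∫ z in carlesonSquare h s, G z = (2*h) * ∫ r in Ioo (1-h) 1, r * g (r^2) := by
  have hRm : MeasurableSet (Ioo (1-h) 1 ×ˢ Ioo (s-h) (s+h)) :=
    measurableSet_Ioo.prod measurableSet_Ioo
  have himg : carlesonSquare h s
      = Complex.measurableEquivRealProd.symm '' (polarCoord.symm ''
        (Ioo (1-h) 1 ×ˢ Ioo (s-h) (s+h))) := by
    rw [carlesonSquare, ← image_comp]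
    exact image_congr fun p _ => polar_eq p
  rw [himg,
    (Complex.volume_preserving_equiv_real_prod.symm).setIntegral_image_emb
      Complex.measurableEquivRealProd.symm.measurableEmbedding G _,
    integral_image_eq_integral_abs_det_fderiv_smul volume hRm
      (fun p _ => (hasFDerivAt_polarCoord_symm p).hasFDerivWithinAt)
      (polar_injOn h s hh h1)]
  have hptwise : ∀ p ∈ Ioo (1-h) 1 ×ˢ Ioo (s-h) (s+h),
      |(fderivPolarCoordSymm p).det| •
        G (Complex.measurableEquivRealProd.symm (polarCoord.symm p))
      = p.1 * g (p.1 ^ 2) := by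
    rintro ⟨r, θ⟩ ⟨hr, hθ⟩
    have hr0 : 0 < r := lt_of_le_of_lt (by linarith [hr.2] : (0:ℝ) ≤ 1 - h) hr.1
    have hdet : (LinearMap.toContinuousLinearMap (Matrix.toLin (Module.Basis.finTwoProd ℝ)
        (Module.Basis.finTwoProd ℝ)
        !![Real.cos θ, -r * Real.sin θ; Real.sin θ, r * Real.cos θ])).det = r := by
      conv_rhs => rw [← one_mul r, ← Real.cos_sq_add_sin_sq θ]
      simp only [neg_mul, LinearMap.det_toContinuousLinearMap, LinearMap.det_toLin,
        Matrix.det_fin_two_of, sub_neg_eq_add]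
      ring
    have hz : Complex.measurableEquivRealProd.symm (polarCoord.symm (r, θ))
        = (r : ℂ) * Complex.exp (θ * Complex.I) := (polar_eq (r, θ)).symm
    have habs : ‖(r : ℂ) * Complex.exp (θ * Complex.I)‖ = r := by
      rw [norm_mul, Complex.norm_exp_ofReal_mul_I, mul_one, Complex.norm_real, Real.norm_eq_abs,
        abs_of_pos hr0]
    have hznz : (r : ℂ) * Complex.exp (θ * Complex.I) ≠ 0 := by
      intro hcon
      rw [hcon] at habs
      simp at habs
      exact hr0.ne' habs.symm
    rw [show (fderivPolarCoordSymm (r, θ)).det = r from hdet, abs_of_pos hr0, hz, hG _ hznz, habs, smul_eq_mul]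
  rw [setIntegral_congr_fun hRm hptwise]
  have hfub : ∫ p in Ioo (1-h) 1 ×ˢ Ioo (s-h) (s+h), p.1 * g (p.1^2)
      = (∫ r in Ioo (1-h) 1, r * g (r^2)) * ∫ _θ in Ioo (s-h) (s+h), (1:ℝ) := by
    rw [Measure.volume_eq_prod, ← setIntegral_prod_mul (fun r => r * g (r^2)) (fun _ => (1:ℝ))]
    simp
  rw [hfub, setIntegral_const, Real.volume_real_Ioo_of_le (by linarith)]
  rw [show s + h - (s - h) = 2*h by ring]
  simp only [smul_eq_mul, mul_one]
  ring





lemma wd_lb {d : ℕ} {t : ℝ} (h0 : 0 < t) (h1 : t < 1) : 1 ≤ wd d t :=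
  one_le_pow₀ (base_lb' h0 h1)

lemma part1 (d : ℕ) (hd : 0 < d) (h : ℝ) (hh : 0 < h) (h1 : h ≤ 1) :
    (∫ t in Ioo (1-h) 1, wd d t) * (∫ t in Ioo (1-h) 1, 1 / wd d t) ≤
      (8^d*(1+2*(2*(d:ℝ))^d)) * h^2 := by
  set L := Real.log (1/h) with hLdef
  set Q := (2*(d:ℝ))^d with hQdef
  have hL0 : 0 ≤ L := Real.log_nonneg (by rw [le_div_iff₀ hh]; linarith)
  have hQ0 : 0 ≤ Q := by positivity
  set P := (1+L)^d with hPdef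
  have hP : 1 ≤ P := one_le_pow₀ (by linarith)
  have hP0 : 0 < P := lt_of_lt_of_le one_pos hP
  have hmem : ∀ t ∈ Ioo (1-h) 1, 0 < t ∧ t < 1 := by
    intro t ht; exact ⟨by linarith [ht.1], ht.2⟩
  -- pointwise upper bound for wd
  have hub : ∀ t ∈ Ioo (1-h) 1,
      wd d t ≤ 4^d * (P + Q * (h/(1-t)) ^ ((1:ℝ)/2)) := by
    intro t ht
    obtain ⟨ht0, ht1⟩ := hmem t ht
    have hu0 : 0 < 1 - t := by linarith
    have huh : 1 - t < h := by linarith [ht.1]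
    have hb1 : 1 ≤ 1 / t * Real.log (1 / (1 - t)) := base_lb' ht0 ht1
    have hsplit : Real.log (1/(1-t)) = L + Real.log (h/(1-t)) := by
      rw [hLdef, ← Real.log_mul (by positivity) (by positivity)]
      congr 1
      field_simp
    have hlog2 : 0 ≤ Real.log (h/(1-t)) :=
      Real.log_nonneg (by rw [le_div_iff₀ hu0]; linarith)
    have hxge : 1 ≤ h/(1-t) := by rw [le_div_iff₀ hu0]; linarith
    have step1 : wd d t ≤ (2 * (1 + Real.log (1/(1-t))))^d :=
      pow_le_pow_left₀ (by linarith) (base_ub ht0 ht1) d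
    have step2 : (2 * (1 + Real.log (1/(1-t))))^d
        = 2^d * ((1+L) + Real.log (h/(1-t)))^d := by
      rw [hsplit, mul_pow]; ring_nf
    have step3 : ((1+L) + Real.log (h/(1-t)))^d
        ≤ 2^d * ((1+L)^d + (Real.log (h/(1-t)))^d) :=
      add_pow_le2 (by linarith) hlog2 d
    have step4 : (Real.log (h/(1-t)))^d ≤ Q * (h/(1-t)) ^ ((1:ℝ)/2) :=
      log_pow_le hxge hd
    calc wd d t ≤ 2^d * ((1+L) + Real.log (h/(1-t)))^d := by rw [← step2]; exact step1
      _ ≤ 2^d * (2^d * ((1+L)^d + (Real.log (h/(1-t)))^d)) :=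
          mul_le_mul_of_nonneg_left step3 (by positivity)
      _ ≤ 2^d * (2^d * (P + Q * (h/(1-t)) ^ ((1:ℝ)/2))) := by
          apply mul_le_mul_of_nonneg_left _ (by positivity)
          apply mul_le_mul_of_nonneg_left _ (by positivity)
          exact add_le_add le_rfl step4
      _ = 4^d * (P + Q * (h/(1-t)) ^ ((1:ℝ)/2)) := by
          rw [← mul_assoc, ← mul_pow]; norm_num
  -- pointwise bound for 1/wd
  have hinv : ∀ t ∈ Ioo (1-h) 1, 1 / wd d t ≤ 2^d / P := by
    intro t ht
    obtain ⟨ht0, ht1⟩ := hmem t ht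
    have hu0 : 0 < 1 - t := by linarith
    have hb1 : 1 ≤ 1 / t * Real.log (1 / (1 - t)) := base_lb' ht0 ht1
    have hbL : L ≤ 1 / t * Real.log (1 / (1 - t)) := by
      have h1t : 1 ≤ 1 / t := by rw [le_div_iff₀ ht0]; linarith
      have hlogt : L ≤ Real.log (1/(1-t)) := by
        apply Real.log_le_log (by positivity)
        rw [div_le_div_iff₀ hh hu0]
        have := ht.1
        nlinarith
      have hlog0 : 0 ≤ Real.log (1/(1-t)) := le_trans hL0 hlogt
      calc L ≤ Real.log (1/(1-t)) := hlogt
        _ = 1 * Real.log (1/(1-t)) := (one_mul _).symm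
        _ ≤ 1 / t * Real.log (1/(1-t)) := mul_le_mul_of_nonneg_right h1t hlog0
    have hbhalf : (1+L)/2 ≤ 1 / t * Real.log (1 / (1 - t)) := by
      rcases le_total L 1 with hc | hc
      · calc (1+L)/2 ≤ 1 := by linarith
          _ ≤ _ := hb1
      · calc (1+L)/2 ≤ L := by linarith
          _ ≤ _ := hbL
    have hwd : ((1+L)/2)^d ≤ wd d t := pow_le_pow_left₀ (by linarith) hbhalf d
    have hhalfpow : ((1+L)/2)^d = P / 2^d := by rw [div_pow]
    have hwdpos : (0:ℝ) < wd d t := lt_of_lt_of_le (by positivity : (0:ℝ) < P / 2^d) (hhalfpow ▸ hwd)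
    have hP2 : P / 2^d ≤ wd d t := hhalfpow ▸ hwd
    have h2d : (0:ℝ) < (2:ℝ)^d := by positivity
    have hP3 := (div_le_iff₀ h2d).1 hP2
    rw [div_le_div_iff₀ hwdpos hP0, one_mul]
    linarith
  -- integrability of the majorant
  have hmaj_int : IntegrableOn (fun t => 4^d * (P + Q * (h/(1-t)) ^ ((1:ℝ)/2))) (Ioo (1-h) 1) := by
    apply Integrable.const_mul
    exact (integrableOn_const measure_Ioo_lt_top.ne).add
      ((sqrt_integrable hh h1).const_mul Q)
  have hIw_nonneg : 0 ≤ ∫ t in Ioo (1-h) 1, wd d t :=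
    setIntegral_nonneg measurableSet_Ioo fun t ht =>
      le_trans zero_le_one (wd_lb (hmem t ht).1 (hmem t ht).2)
  have hIi_nonneg : 0 ≤ ∫ t in Ioo (1-h) 1, 1 / wd d t := by
    apply setIntegral_nonneg measurableSet_Ioo
    intro t ht
    have := wd_lb (d := d) (hmem t ht).1 (hmem t ht).2
    positivity
  have hIw : ∫ t in Ioo (1-h) 1, wd d t ≤ 4^d * (P * h + Q * (2*h)) := by
    have e : ∫ t in Ioo (1-h) 1, 4^d * (P + Q * (h/(1-t)) ^ ((1:ℝ)/2))
        = 4^d * (P * h + Q * (2*h)) := by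
      rw [integral_const_mul]
      congr 1
      rw [integral_add (integrableOn_const measure_Ioo_lt_top.ne : IntegrableOn (fun _ => P) (Ioo (1-h) 1) volume)
        ((sqrt_integrable hh h1).const_mul Q : IntegrableOn (fun t => Q * (h/(1-t)) ^ ((1:ℝ)/2)) (Ioo (1-h) 1) volume),
        integral_const_mul, sqrt_int_eq hh, setIntegral_const, Real.volume_real_Ioo_of_le (by linarith)]
      simp only [smul_eq_mul]
      ring
    refine le_trans (integral_mono_of_nonneg ?_ hmaj_int ?_) (le_of_eq e)
    · exact (ae_restrict_iff' measurableSet_Ioo).2 (ae_of_all _ fun t ht =>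
        le_trans zero_le_one (wd_lb (hmem t ht).1 (hmem t ht).2))
    · exact (ae_restrict_iff' measurableSet_Ioo).2 (ae_of_all _ hub)
  have hIi : ∫ t in Ioo (1-h) 1, 1 / wd d t ≤ 2^d / P * h := by
    have step : ∫ t in Ioo (1-h) 1, 1 / wd d t ≤ ∫ _t in Ioo (1-h) 1, ((2:ℝ)^d / P) := by
      refine integral_mono_of_nonneg ?_ (integrableOn_const measure_Ioo_lt_top.ne) ?_
      · refine (ae_restrict_iff' measurableSet_Ioo).2 (ae_of_all _ fun t ht => ?_)
        have := wd_lb (d := d) (hmem t ht).1 (hmem t ht).2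
        positivity
      · exact (ae_restrict_iff' measurableSet_Ioo).2 (ae_of_all _ hinv)
    refine step.trans (le_of_eq ?_)
    rw [setIntegral_const, Real.volume_real_Ioo_of_le (by linarith)]
    simp only [smul_eq_mul]
    ring
  have hAB := mul_le_mul hIw hIi hIi_nonneg (by positivity)
  have e2 : 4^d * (P * h + Q * (2*h)) * ((2:ℝ)^d / P * h) = ((4:ℝ)^d*2^d) * h^2 * ((P + 2*Q)/P) := by
    field_simp
  have hfrac : (P + 2*Q)/P ≤ 1 + 2*Q := by
    rw [add_div, div_self hP0.ne']
    have h2 : 2*Q/P ≤ 2*Q := div_le_self (by positivity) hP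
    linarith
  have h48 : ((4:ℝ)^d*2^d) = 8^d := by rw [← mul_pow]; norm_num
  calc (∫ t in Ioo (1-h) 1, wd d t) * (∫ t in Ioo (1-h) 1, 1 / wd d t)
      ≤ 4^d * (P * h + Q * (2*h)) * ((2:ℝ)^d / P * h) := hAB
    _ = ((4:ℝ)^d*2^d) * h^2 * ((P + 2*Q)/P) := e2
    _ ≤ ((4:ℝ)^d*2^d) * h^2 * (1 + 2*Q) := mul_le_mul_of_nonneg_left hfrac (by positivity)
    _ = 8^d*(1+2*Q) * h^2 := by rw [h48]; ring
/-- Let `d` be a positive integer. There is `c > 0` such that for all `0 < h ≤ 1`,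
`(∫_{1−h}^1 w_d)·(∫_{1−h}^1 1/w_d) ≤ c·h²`; consequently `W_d(z) = w_d(|z|²)` satisfies the
Bekollé–Bonami (B2) condition: for every Carleson square `S_h(e^{is})` with `0 < h ≤ 1`,
`(∫_{S_h(e^{is})} W_d dA)·(∫_{S_h(e^{is})} (1/W_d) dA) ≤ c·h⁴. -/
theorem stmt_9 (d : ℕ) (hd : 0 < d) :
    ∃ c : ℝ, 0 < c ∧
      (∀ h : ℝ, 0 < h → h ≤ 1 →
        (∫ t in Set.Ioo (1 - h) 1, wd d t) * (∫ t in Set.Ioo (1 - h) 1, 1 / wd d t) ≤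
          c * h ^ 2) ∧
      (∀ h s : ℝ, 0 < h → h ≤ 1 →
        (∫ z in carlesonSquare h s, Wd d z) * (∫ z in carlesonSquare h s, 1 / Wd d z) ≤
          c * h ^ 4) := by
  set c₁ : ℝ := 8^d*(1+2*(2*(d:ℝ))^d) with hc₁def
  have hc₁ : 0 < c₁ := by positivity
  refine ⟨4 * c₁, by positivity, ?_, ?_⟩
  · intro h hh h1
    have hp := part1 d hd h hh h1
    nlinarith [sq_nonneg h, mul_le_mul_of_nonneg_right hc₁.le (sq_nonneg h)]
  · intro h s hh h1
    set h' : ℝ := 2*h - h^2 with hh'def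
    have hh'0 : 0 < h' := by nlinarith
    have hh'1 : h' ≤ 1 := by nlinarith
    have hsq : 1 - h' = (1-h)^2 := by ring
    have hW : ∫ z in carlesonSquare h s, Wd d z
        = h * ∫ t in Ioo (1-h') 1, wd d t := by
      rw [carleson_integral (wd d) (Wd d)
        (fun z hz => by simp only [Wd, if_neg hz]) h s hh h1, hsq,
        sq_subst (wd d) h hh h1]
      ring
    have hW' : ∫ z in carlesonSquare h s, 1 / Wd d z
        = h * ∫ t in Ioo (1-h') 1, 1 / wd d t := by
      rw [carleson_integral (fun t => 1 / wd d t) (fun z => 1 / Wd d z)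
        (fun z hz => by simp only [Wd, if_neg hz]) h s hh h1, hsq,
        sq_subst (fun t => 1 / wd d t) h hh h1]
      ring
    rw [hW, hW']
    have hp := part1 d hd h' hh'0 hh'1
    have hsqle : h'^2 ≤ 4 * h^2 := by nlinarith
    calc (h * ∫ t in Ioo (1-h') 1, wd d t) * (h * ∫ t in Ioo (1-h') 1, 1 / wd d t)
        = h^2 * ((∫ t in Ioo (1-h') 1, wd d t) * (∫ t in Ioo (1-h') 1, 1 / wd d t)) := by
          ring
      _ ≤ h^2 * (c₁ * h'^2) := mul_le_mul_of_nonneg_left hp (by positivity)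
      _ ≤ h^2 * (c₁ * (4 * h^2)) := by
          apply mul_le_mul_of_nonneg_left _ (by positivity)
          exact mul_le_mul_of_nonneg_left hsqle hc₁.le
      _ = 4 * c₁ * h ^ 4 := by ring
end

section
/- Let d be a positive integer. There exist a real number M > 1 and constants c, C > 0 such that the sequence a_n = (log(M·(n+1)))^{d−1}/((n+1)·(log M)^{d−1}), n ≥ 0, satisfies: (i) a_0 = 1 and a_n > 0 for all n; (ii) a_{n−1}·a_{n+1} ≥ a_n² for all n ≥ 1 (log-convexity, i.e. a_{n−1}/a_n ≤ a_n/a_{n+1}); and (iii) c·(log(n+2))^{d−1}/(n+1) ≤ a_n ≤ C·(log(n+2))^{d−1}/(n+1) for all n ≥ 0. (By the Agler–McCarthy criterion, the kernel Σ_n a_n (z̄w)^n therefore has the complete Nevanlinna–Pick property and defines an equivalent norm on D_d.) -/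
/-- `aSeq d M n = (log(M·(n+1)))^{d−1}/((n+1)·(log M)^{d−1})`. -/
noncomputable def aSeq (d : ℕ) (M : ℝ) (n : ℕ) : ℝ :=
  (Real.log (M * ((n : ℝ) + 1))) ^ (d - 1) / (((n : ℝ) + 1) * (Real.log M) ^ (d - 1))

lemma logSubLog {a b : ℝ} (ha : 0 < a) (hb : 0 < b) :
    Real.log b - Real.log a ≤ b / a - 1 := by
  rw [← Real.log_div hb.ne' ha.ne']
  exact Real.log_le_sub_one_of_pos (div_pos hb ha)

lemma coreAlg (e : ℕ) (x L0 L1 L2 : ℝ) (hx : 1 ≤ x)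
    (hL0p : 0 < L0) (hL1p : 0 < L1) (hL2p : 0 < L2)
    (hLb : 3 * (e:ℝ) + 3 ≤ L1)
    (hu0 : 0 ≤ L1 - L0) (hv0 : 0 ≤ L2 - L1)
    (hu : L1 - L0 ≤ 1 / x) (hv : L2 - L1 ≤ 1 / (x + 1))
    (huv : (L1 - L0) - (L2 - L1) ≤ 1 / (x * (x + 2))) :
    (L1 ^ 2) ^ e * (x * (x + 2)) ≤ (L0 * L2) ^ e * (x + 1) ^ 2 := by
  have hx0 : (0:ℝ) < x := lt_of_lt_of_le one_pos hx
  have hx1 : (0:ℝ) < x + 1 := by linarith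
  have hx2 : (0:ℝ) < x + 2 := by linarith
  have hce : (0:ℝ) ≤ (e:ℝ) := Nat.cast_nonneg e
  -- key inequality
  have hkey : (e:ℝ) * (L1^2 - L0*L2) * (x+1)^2 ≤ L1^2 := by
    have hq : ((L1-L0)-(L2-L1)) * (x+1)^2 ≤ 4/3 := by
      have h2 : (1/(x*(x+2))) * (x+1)^2 ≤ 4/3 := by
        rw [div_mul_eq_mul_div, div_le_div_iff₀ (by positivity) (by norm_num)]
        nlinarith
      calc ((L1-L0)-(L2-L1)) * (x+1)^2
          ≤ (1/(x*(x+2))) * (x+1)^2 := by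
            apply mul_le_mul_of_nonneg_right huv (by positivity)
        _ ≤ 4/3 := h2
    have huvprod : (L1-L0)*(L2-L1) * (x+1)^2 ≤ 2 := by
      have h1 : (L1-L0)*(L2-L1) ≤ (1/x)*(1/(x+1)) :=
        mul_le_mul hu hv hv0 (by positivity)
      have h2 : (1/x)*(1/(x+1)) * (x+1)^2 ≤ 2 := by
        rw [div_mul_div_comm, div_mul_eq_mul_div, div_le_iff₀ (by positivity)]
        nlinarith
      calc (L1-L0)*(L2-L1) * (x+1)^2 ≤ (1/x)*(1/(x+1)) * (x+1)^2 := by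
            apply mul_le_mul_of_nonneg_right h1 (by positivity)
        _ ≤ 2 := h2
    have hsum : (L1^2 - L0*L2) * (x+1)^2 ≤ (4/3) * L1 + 2 := by
      have h3 := mul_le_mul_of_nonneg_left hq hL1p.le
      nlinarith [huvprod]
    have hstep : (e:ℝ)*((4/3)*L1+2) ≤ L1^2 := by
      nlinarith [mul_nonneg hce hL1p.le, mul_nonneg (sub_nonneg.2 hLb) hL1p.le]
    calc (e:ℝ) * (L1^2 - L0*L2) * (x+1)^2
        = (e:ℝ) * ((L1^2 - L0*L2) * (x+1)^2) := by ring
      _ ≤ (e:ℝ) * ((4/3)*L1+2) := mul_le_mul_of_nonneg_left hsum hce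
      _ ≤ L1^2 := hstep
  -- Bernoulli step
  have hL1sq : (0:ℝ) < L1^2 := by positivity
  set s : ℝ := (L0*L2 - L1^2)/L1^2 with hs_def
  have hs : -2 ≤ s := by
    rw [hs_def, le_div_iff₀ hL1sq]
    nlinarith [mul_pos hL0p hL2p]
  have hbern := one_add_mul_le_pow hs e
  have h1s : 1 + s = (L0*L2)/L1^2 := by rw [hs_def]; field_simp; ring
  have hA : (L1^2)^e * (1 + (e:ℝ)*s) ≤ (L0*L2)^e := by
    calc (L1^2)^e * (1 + (e:ℝ)*s) ≤ (L1^2)^e * (1+s)^e :=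
          mul_le_mul_of_nonneg_left hbern (by positivity)
      _ = (L0*L2)^e := by
          rw [h1s, div_pow]; field_simp
  have hB : x*(x+2) ≤ (1 + (e:ℝ)*s)*(x+1)^2 := by
    have hes : -1 ≤ (e:ℝ)*s*(x+1)^2 := by
      have heq : (e:ℝ)*s*(x+1)^2 = ((e:ℝ)*(L0*L2 - L1^2)*(x+1)^2)/L1^2 := by
        rw [hs_def]; field_simp; try ring
      rw [heq, le_div_iff₀ hL1sq]
      nlinarith [hkey]
    nlinarith [hes]
  calc (L1^2)^e * (x*(x+2))
      ≤ (L1^2)^e * ((1 + (e:ℝ)*s)*(x+1)^2) :=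
        mul_le_mul_of_nonneg_left hB (by positivity)
    _ = ((L1^2)^e * (1 + (e:ℝ)*s)) * (x+1)^2 := by ring
    _ ≤ (L0*L2)^e * (x+1)^2 :=
        mul_le_mul_of_nonneg_right hA (by positivity)

lemma coreKey (e : ℕ) (c x : ℝ) (hx : 1 ≤ x) (hc : 3 * (e:ℝ) + 3 ≤ c) :
    ((c + Real.log (x + 1)) ^ 2) ^ e * (x * (x + 2))
      ≤ ((c + Real.log x) * (c + Real.log (x + 2))) ^ e * (x + 1) ^ 2 := by
  have hx0 : (0:ℝ) < x := lt_of_lt_of_le one_pos hx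
  have hx1 : (0:ℝ) < x + 1 := by linarith
  have hx2 : (0:ℝ) < x + 2 := by linarith
  have hce : (0:ℝ) ≤ (e:ℝ) := Nat.cast_nonneg e
  have hcpos : (0:ℝ) < c := by linarith
  have hlogx : 0 ≤ Real.log x := Real.log_nonneg hx
  have hlogx1 : Real.log x ≤ Real.log (x+1) := Real.log_le_log hx0 (by linarith)
  have hlogx2 : Real.log (x+1) ≤ Real.log (x+2) := Real.log_le_log hx1 (by linarith)
  apply coreAlg e x _ _ _ hx
  · linarith
  · linarith [Real.log_nonneg (by linarith : (1:ℝ) ≤ x+1)]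
  · linarith [Real.log_nonneg (by linarith : (1:ℝ) ≤ x+2)]
  · linarith [Real.log_nonneg (by linarith : (1:ℝ) ≤ x+1)]
  · linarith
  · linarith
  · -- u ≤ 1/x
    have h := logSubLog hx0 hx1
    have h2 : (x+1)/x - 1 = 1/x := by field_simp; ring
    linarith [h, h2.le]
  · -- v ≤ 1/(x+1)
    have h := logSubLog hx1 hx2
    have h2 : (x+2)/(x+1) - 1 = 1/(x+1) := by field_simp; try norm_num
    linarith [h, h2.le]
  · -- u - v ≤ 1/(x(x+2))
    have hsq : (0:ℝ) < (x+1)^2 := by positivity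
    have h := logSubLog (mul_pos hx0 hx2) hsq
    rw [Real.log_mul hx0.ne' hx2.ne'] at h
    have hp : Real.log ((x+1)^2) = 2 * Real.log (x+1) := by
      rw [Real.log_pow]; push_cast; ring
    rw [hp] at h
    have h2 : (x+1)^2 / (x*(x+2)) - 1 = 1/(x*(x+2)) := by field_simp; ring
    linarith [h, h2.le]

lemma aSeq_eq (d n : ℕ) :
    aSeq d (Real.exp (3*(d:ℝ))) n
      = (3*(d:ℝ) + Real.log ((n:ℝ)+1)) ^ (d-1) / (((n:ℝ)+1) * (3*(d:ℝ)) ^ (d-1)) := by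
  unfold aSeq
  rw [Real.log_mul (Real.exp_ne_zero _) (by positivity), Real.log_exp]

lemma conv_div (e : ℕ) (x K L0 L1 L2 : ℝ) (hx : 0 < x) (hK : 0 < K)
    (h : (L1 ^ 2) ^ e * (x * (x + 2)) ≤ (L0 * L2) ^ e * (x + 1) ^ 2) :
    (L1 ^ e / ((x + 1) * K)) ^ 2 ≤ L0 ^ e / (x * K) * (L2 ^ e / ((x + 2) * K)) := by
  rw [pow_right_comm, mul_pow] at h
  rw [div_pow, div_mul_div_comm, div_le_div_iff₀ (by positivity) (by positivity)]
  calc (L1 ^ e) ^ 2 * (x * K * ((x + 2) * K))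
      = (L1 ^ e) ^ 2 * (x * (x + 2)) * K ^ 2 := by ring
    _ ≤ L0 ^ e * L2 ^ e * (x + 1) ^ 2 * K ^ 2 :=
        mul_le_mul_of_nonneg_right h (by positivity)
    _ = L0 ^ e * L2 ^ e * ((x + 1) * K) ^ 2 := by ring

lemma div_bound_low (e : ℕ) (x K lg A : ℝ) (hx : 0 < x) (hK : 0 < K)
    (hlg : 0 ≤ lg) (h : lg ≤ A) :
    1 / K * (lg ^ e / x) ≤ A ^ e / (x * K) := by
  have h2 : lg ^ e ≤ A ^ e := pow_le_pow_left₀ hlg h e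
  have heq : 1 / K * (lg ^ e / x) = lg ^ e / (x * K) := by ring
  rw [heq]
  exact div_le_div₀ (pow_nonneg (le_trans hlg h) e) h2 (by positivity) le_rfl

lemma div_bound_up (e : ℕ) (x K lg A B : ℝ) (hx : 0 < x) (hK : 0 < K)
    (hA : 0 ≤ A) (hBnn : 0 ≤ B) (hlg : 0 ≤ lg) (hB : A ≤ B * lg) :
    A ^ e / (x * K) ≤ B ^ e / K * (lg ^ e / x) := by
  have h2 : A ^ e ≤ B ^ e * lg ^ e := by
    rw [← mul_pow]; exact pow_le_pow_left₀ hA hB e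
  have heq : B ^ e / K * (lg ^ e / x) = B ^ e * lg ^ e / (x * K) := by ring
  rw [heq]
  exact div_le_div₀ (mul_nonneg (pow_nonneg hBnn e) (pow_nonneg hlg e)) h2
    (by positivity) le_rfl

/-- Let `d` be a positive integer. There are `M > 1` and `c, C > 0` such that the sequence
`a_n = (log(M(n+1)))^{d−1}/((n+1)(log M)^{d−1})` satisfies: (i) `a_0 = 1` and `a_n > 0`;
(ii) log-convexity `a_{n−1}·a_{n+1} ≥ a_n²` for `n ≥ 1`; and (iii)
`c·(log(n+2))^{d−1}/(n+1) ≤ a_n ≤ C·(log(n+2))^{d−1}/(n+1)` for all `n`. -/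
theorem stmt_17 (d : ℕ) (hd : 0 < d) :
    ∃ M c C : ℝ, 1 < M ∧ 0 < c ∧ 0 < C ∧
      aSeq d M 0 = 1 ∧ (∀ n : ℕ, 0 < aSeq d M n) ∧
      (∀ n : ℕ, aSeq d M n * aSeq d M (n + 2) ≥ (aSeq d M (n + 1)) ^ 2) ∧
      (∀ n : ℕ,
        c * ((Real.log ((n : ℝ) + 2)) ^ (d - 1) / ((n : ℝ) + 1)) ≤ aSeq d M n ∧
        aSeq d M n ≤ C * ((Real.log ((n : ℝ) + 2)) ^ (d - 1) / ((n : ℝ) + 1))) := by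
  obtain ⟨e, rfl⟩ : ∃ e, d = e + 1 := ⟨d - 1, (Nat.succ_pred_eq_of_pos hd).symm⟩
  set cst : ℝ := 3 * ((e+1 : ℕ) : ℝ) with hcst_def
  have hcst3 : (3:ℝ) ≤ cst := by
    rw [hcst_def]; push_cast; nlinarith [Nat.cast_nonneg (α := ℝ) e]
  have hcstpos : (0:ℝ) < cst := by linarith
  have hcste : 3 * (e:ℝ) + 3 ≤ cst := by rw [hcst_def]; push_cast; ring_nf; linarith
  have hKpos : (0:ℝ) < cst ^ e := pow_pos hcstpos e
  have hlog2pos : (0:ℝ) < Real.log 2 := Real.log_pos one_lt_two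
  have hlog2le1 : Real.log 2 ≤ 1 := by
    have := Real.log_le_sub_one_of_pos (by norm_num : (0:ℝ) < 2); linarith
  have hee : (e + 1) - 1 = e := by omega
  refine ⟨Real.exp (3*((e+1:ℕ):ℝ)), 1 / cst ^ e,
    ((cst + 1) / Real.log 2) ^ e / cst ^ e, ?_, by positivity, ?_, ?_, ?_, ?_, ?_⟩
  · rw [show (1:ℝ) = Real.exp 0 by simp]
    exact Real.exp_lt_exp.mpr (by positivity)
  · exact div_pos (pow_pos (div_pos (by linarith) hlog2pos) e) hKpos
  · rw [aSeq_eq, hee]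
    norm_num
    exact fun h => absurd h (by positivity)
  · intro n
    rw [aSeq_eq, hee]
    have hln : 0 ≤ Real.log ((n:ℝ)+1) :=
      Real.log_nonneg (by linarith [Nat.cast_nonneg (α := ℝ) n])
    exact div_pos (pow_pos (by linarith) e) (by positivity)
  · intro n
    have hx : (1:ℝ) ≤ (n:ℝ) + 1 := by linarith [Nat.cast_nonneg (α := ℝ) n]
    have hx0 : (0:ℝ) < (n:ℝ) + 1 := by linarith
    have hcore := coreKey e cst ((n:ℝ)+1) hx hcste
    rw [aSeq_eq, aSeq_eq, aSeq_eq, hee, ge_iff_le]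
    have hc1 : ((n+1 : ℕ):ℝ) + 1 = ((n:ℝ)+1) + 1 := by push_cast; ring
    have hc2 : ((n+2 : ℕ):ℝ) + 1 = ((n:ℝ)+1) + 2 := by push_cast; ring
    rw [hc1, hc2]
    exact conv_div e ((n:ℝ)+1) (cst ^ e) _ _ _ hx0 hKpos hcore
  · intro n
    have hx : (1:ℝ) ≤ (n:ℝ) + 1 := by linarith [Nat.cast_nonneg (α := ℝ) n]
    have hx0 : (0:ℝ) < (n:ℝ) + 1 := by linarith
    have hx1 : (0:ℝ) < (n:ℝ) + 2 := by linarith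
    have hlg_eq : ((n:ℝ) + 1) + 1 = (n:ℝ) + 2 := by ring
    have hlgx : Real.log ((n:ℝ)+1) ≤ Real.log ((n:ℝ)+2) :=
      Real.log_le_log hx0 (by linarith)
    have hlg2 : Real.log 2 ≤ Real.log ((n:ℝ)+2) :=
      Real.log_le_log (by norm_num) (by linarith [Nat.cast_nonneg (α := ℝ) n])
    have hlgnn : (0:ℝ) ≤ Real.log ((n:ℝ)+2) := le_trans hlog2pos.le hlg2
    have hlnn : 0 ≤ Real.log ((n:ℝ)+1) := Real.log_nonneg hx
    have hA : (0:ℝ) ≤ cst + Real.log ((n:ℝ)+1) := by linarith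
    have hAB : cst + Real.log ((n:ℝ)+1) ≤ ((cst + 1) / Real.log 2) * Real.log ((n:ℝ)+2) := by
      rw [div_mul_eq_mul_div, le_div_iff₀ hlog2pos]
      nlinarith [mul_le_mul_of_nonneg_left hlg2 (by linarith : (0:ℝ) ≤ cst),
        mul_nonneg hlnn (by linarith : (0:ℝ) ≤ 1 - Real.log 2)]
    have hlgA : Real.log ((n:ℝ)+2) ≤ cst + Real.log ((n:ℝ)+1) := by
      have h := logSubLog hx0 hx1
      have h2 : ((n:ℝ)+2)/((n:ℝ)+1) - 1 = 1/((n:ℝ)+1) := by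
        field_simp
        try norm_num
      have h3 : 1/((n:ℝ)+1) ≤ 1 := by rw [div_le_one hx0]; linarith
      linarith
    rw [aSeq_eq, hee]
    exact ⟨div_bound_low e ((n:ℝ)+1) (cst ^ e) _ _ hx0 hKpos hlgnn hlgA,
      div_bound_up e ((n:ℝ)+1) (cst ^ e) _ _ _ hx0 hKpos hA
        (by positivity) hlgnn hAB⟩
end
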